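/- arXiv:1908.00131 — 9 statements merged into one kernel-verified Lean document; each statement's English description precedes it below -/
import Mathlib

section
/- If x* is a local minimizer of the problem min f(x) subject to c(x) = 0, then there exist a sequence of positive tolerances ε_k → 0, points x_k → x*, and multipliers λ_k ∈ ℝᵐ such that for every k: ‖∇f(x_k) + ∇c(x_k)λ_k‖ ≤ ε_k, ‖c(x_k)‖ ≤ ε_k, and dᵀ(∇²f(x_k) + Σ_{i=1}^m (λ_k)_i ∇²c_i(x_k))d ≥ −ε_k‖d‖² for every d ∈ ℝⁿ with ∇c(x_k)ᵀd = 0 (so in particular x_k is an ε_k-approximate second-order, hence first-order, KKT point). -/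
open Filter Topology

noncomputable def AL {n m : ℕ} (f : EuclideanSpace ℝ (Fin n) → ℝ)
    (c : EuclideanSpace ℝ (Fin n) → EuclideanSpace ℝ (Fin m)) (ρ : ℝ)
    (x : EuclideanSpace ℝ (Fin n)) (lam : EuclideanSpace ℝ (Fin m)) : ℝ :=
  f x + (inner ℝ lam (c x) : ℝ) + ρ / 2 * ‖c x‖ ^ 2

noncomputable def gradc {n m : ℕ}
    (c : EuclideanSpace ℝ (Fin n) → EuclideanSpace ℝ (Fin m))
    (x : EuclideanSpace ℝ (Fin n)) :
    EuclideanSpace ℝ (Fin m) →L[ℝ] EuclideanSpace ℝ (Fin n) :=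
  ContinuousLinearMap.adjoint (fderiv ℝ c x)

noncomputable def hess {n : ℕ} (g : EuclideanSpace ℝ (Fin n) → ℝ)
    (x d : EuclideanSpace ℝ (Fin n)) : ℝ :=
  iteratedFDeriv ℝ 2 g x ![d, d]


section helpers
variable {n : ℕ}

lemma line_hasDerivAt (x d : EuclideanSpace ℝ (Fin n)) (t : ℝ) :
    HasDerivAt (fun s : ℝ => x + s • d) d t := by
  simpa using ((hasDerivAt_id t).smul_const d).const_add x

lemma comp_line_hasDerivAt {g : EuclideanSpace ℝ (Fin n) → ℝ} (hg : Differentiable ℝ g)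
    (x d : EuclideanSpace ℝ (Fin n)) (t : ℝ) :
    HasDerivAt (fun s : ℝ => g (x + s • d)) (fderiv ℝ g (x + t • d) d) t :=
  ((hg (x + t • d)).hasFDerivAt).comp_hasDerivAt t (line_hasDerivAt x d t)

lemma fderiv_comp_line_hasDerivAt {g : EuclideanSpace ℝ (Fin n) → ℝ} (hg : ContDiff ℝ 2 g)
    (x d : EuclideanSpace ℝ (Fin n)) :
    HasDerivAt (fun t : ℝ => fderiv ℝ g (x + t • d) d) (hess g x d) 0 := by
  have hdf : DifferentiableAt ℝ (fderiv ℝ g) x :=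
    ((hg.fderiv_right (by norm_num : (1:WithTop ℕ∞)+1 ≤ 2)).differentiable (by norm_num)) x
  have h0 : HasFDerivAt (fderiv ℝ g) (fderiv ℝ (fderiv ℝ g) x) (x + (0:ℝ) • d) := by
    simpa using hdf.hasFDerivAt
  have h1 : HasDerivAt (fun t : ℝ => fderiv ℝ g (x + t • d)) (fderiv ℝ (fderiv ℝ g) x d) 0 :=
    h0.comp_hasDerivAt 0 (line_hasDerivAt x d 0)
  have h2 := h1.clm_apply (hasDerivAt_const (0:ℝ) d)
  simp only [hess, iteratedFDeriv_two_apply]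
  simpa using h2

lemma isLocalMin_comp_line {G : EuclideanSpace ℝ (Fin n) → ℝ} {x : EuclideanSpace ℝ (Fin n)}
    (h : IsLocalMin G x) (d : EuclideanSpace ℝ (Fin n)) :
    IsLocalMin (fun t : ℝ => G (x + t • d)) 0 := by
  have hcont : Tendsto (fun t : ℝ => x + t • d) (𝓝 0) (𝓝 x) := by
    have : ContinuousAt (fun t : ℝ => x + t • d) 0 := by fun_prop
    simpa [ContinuousAt] using this
  have h' := hcont.eventually h
  simpa [IsLocalMin, IsMinFilter] using h'

lemma second_deriv_nonneg {g g' : ℝ → ℝ} {a : ℝ}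
    (hg' : ∀ t, HasDerivAt g (g' t) t) (hg'' : HasDerivAt g' a 0)
    (hmin : IsLocalMin g 0) : 0 ≤ a := by
  by_contra h
  push_neg at h
  have hg'0 : g' 0 = 0 := by
    have := hmin.deriv_eq_zero
    rwa [(hg' 0).deriv] at this
  have hslope := hasDerivAt_iff_tendsto_slope.mp hg''
  have hneg0 : ∀ᶠ t in 𝓝[≠] (0:ℝ), slope g' 0 t < 0 := hslope.eventually_lt_const h
  have hneg : ∀ᶠ t in 𝓝[≠] (0:ℝ), g' t / t < 0 := by
    filter_upwards [hneg0] with t ht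
    simpa [slope_def_field, hg'0] using ht
  have hneg' : ∀ᶠ t in 𝓝[>] (0:ℝ), g' t < 0 := by
    have := hneg.filter_mono (nhdsWithin_mono 0 (fun t ht => ne_of_gt ht))
    filter_upwards [this, self_mem_nhdsWithin] with t h1 h2
    exact (div_neg_iff.mp h1).resolve_left (fun ⟨_, h⟩ => absurd h2 (not_lt.mpr h.le)) |>.1
  obtain ⟨δ, hδpos, hδ⟩ : ∃ δ > 0, ∀ t ∈ Set.Ioo (0:ℝ) δ, g' t < 0 := by
    rcases (Metric.mem_nhdsWithin_iff.mp hneg') with ⟨δ, hδpos, hδ⟩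
    exact ⟨δ, hδpos, fun t ht => hδ ⟨by simpa [abs_of_pos ht.1] using ht.2, ht.1⟩⟩
  have hcont : Continuous g := by
    rw [continuous_iff_continuousAt]; exact fun t => (hg' t).continuousAt
  have hanti : StrictAntiOn g (Set.Icc 0 δ) := by
    apply strictAntiOn_of_deriv_neg (convex_Icc 0 δ) hcont.continuousOn
    intro t ht
    rw [interior_Icc] at ht
    rw [(hg' t).deriv]
    exact hδ t ht
  rcases Metric.eventually_nhds_iff.mp hmin with ⟨r, hrpos, hr⟩
  set t := min (δ/2) (r/2) with htdef
  have htpos : 0 < t := lt_min (by linarith) (by linarith)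
  have h1 : g t < g 0 :=
    hanti ⟨le_rfl, hδpos.le⟩ ⟨htpos.le, le_trans (min_le_left _ _) (by linarith)⟩ htpos
  have h2 : g 0 ≤ g t := hr (by
    simp only [Real.dist_eq, sub_zero]
    rw [abs_of_pos htpos]
    exact lt_of_le_of_lt (min_le_right _ _) (by linarith))
  linarith
end helpers

section helpers2
variable {n : ℕ}
local notation "⟪" x ", " y "⟫" => @inner ℝ _ _ x y

lemma sum_sq_eq (v : EuclideanSpace ℝ (Fin n)) : ∑ i, v i ^ 2 = ‖v‖ ^ 2 := by
  rw [← real_inner_self_eq_norm_sq]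
  simp only [PiLp.inner_apply, RCLike.inner_apply, conj_trivial, sq]

lemma sum_mul_eq (v w : EuclideanSpace ℝ (Fin n)) : ∑ i, v i * w i = ⟪v, w⟫ := by
  simp [PiLp.inner_apply, RCLike.inner_apply, mul_comm]
end helpers2

section key
variable {n m : ℕ}
local notation "⟪" x ", " y "⟫" => @inner ℝ _ _ x y

lemma proj_comp_eq {n m : ℕ} (c : EuclideanSpace ℝ (Fin n) → EuclideanSpace ℝ (Fin m))
    (i : Fin m) : (fun y => c y i) = (⇑(EuclideanSpace.proj (𝕜 := ℝ) i) ∘ c) := rfl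

lemma key (f : EuclideanSpace ℝ (Fin n) → ℝ)
    (c : EuclideanSpace ℝ (Fin n) → EuclideanSpace ℝ (Fin m))
    (hf : ContDiff ℝ 2 f) (hc : ContDiff ℝ 2 c) (xstar : EuclideanSpace ℝ (Fin n)) (ρ : ℝ)
    (x : EuclideanSpace ℝ (Fin n))
    (hloc : IsLocalMin (fun y => f y + ρ/2 * ∑ i, (c y i)^2 + (∑ j, (y j - xstar j)^2)^2) x) :
    ‖gradient f x + gradc c x (ρ • c x)‖ ≤ 4 * ‖x - xstar‖^3 ∧
    ∀ d : EuclideanSpace ℝ (Fin n), fderiv ℝ c x d = 0 →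
      -(12 * ‖x - xstar‖^2) * ‖d‖^2 ≤
        hess f x d + ∑ i, (ρ • c x) i * hess (fun y => c y i) x d := by
  have hfd : Differentiable ℝ f := hf.differentiable (by norm_num)
  have hcd : Differentiable ℝ c := hc.differentiable (by norm_num)
  have hci : ∀ i : Fin m, ContDiff ℝ 2 (fun y => c y i) := by
    intro i
    rw [proj_comp_eq]
    exact (EuclideanSpace.proj i).contDiff.comp hc
  have hfci : ∀ (i : Fin m) (y v : EuclideanSpace ℝ (Fin n)),
      fderiv ℝ (fun y => c y i) y v = (fderiv ℝ c y v) i := by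
    intro i y v
    have h : HasFDerivAt (fun y => c y i)
        ((EuclideanSpace.proj (𝕜 := ℝ) i).comp (fderiv ℝ c y)) y := by
      rw [proj_comp_eq]
      exact (EuclideanSpace.proj (𝕜 := ℝ) i).hasFDerivAt.comp y (hcd y).hasFDerivAt
    rw [h.fderiv]
    rfl
  obtain ⟨a, ha⟩ : ∃ a : ℝ, a = ∑ j, (x j - xstar j)^2 := ⟨_, rfl⟩
  obtain ⟨b, hb⟩ : ∃ b : EuclideanSpace ℝ (Fin n) → ℝ,
      b = fun v => 2 * ∑ j, (x j - xstar j) * v j := ⟨_, rfl⟩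
  obtain ⟨e, he⟩ : ∃ e : EuclideanSpace ℝ (Fin n) → ℝ,
      e = fun v => ∑ j, v j ^ 2 := ⟨_, rfl⟩
  obtain ⟨P, hP⟩ : ∃ P : EuclideanSpace ℝ (Fin n) → ℝ → ℝ,
      P = fun v t => a + b v * t + e v * t^2 := ⟨_, rfl⟩
  obtain ⟨G, hG⟩ : ∃ G : EuclideanSpace ℝ (Fin n) → ℝ,
      G = fun y => f y + ρ/2 * ∑ i, (c y i)^2 + (∑ j, (y j - xstar j)^2)^2 := ⟨_, rfl⟩
  rw [← hG] at hloc
  obtain ⟨D, hD⟩ : ∃ D : EuclideanSpace ℝ (Fin n) → ℝ → ℝ,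
      D = fun v t => fderiv ℝ f (x + t • v) v
        + ρ/2 * ∑ i, 2 * c (x + t • v) i * fderiv ℝ (fun y => c y i) (x + t • v) v
        + 2 * P v t * (b v + 2 * e v * t) := ⟨_, rfl⟩
  have x0 : ∀ v : EuclideanSpace ℝ (Fin n), x + (0:ℝ) • v = x := by intro v; simp
  have hQP : ∀ (v : EuclideanSpace ℝ (Fin n)) (t : ℝ),
      (∑ j, ((x + t • v) j - xstar j)^2) = P v t := by
    intro v t
    have h1 : ∀ j : Fin n, ((x + t • v) j - xstar j)^2
        = (x j - xstar j)^2 + t * (2 * ((x j - xstar j) * v j)) + t^2 * (v j)^2 := by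
      intro j
      have hxx : (x + t • v) j = x j + t * v j := by
        simp [PiLp.add_apply, PiLp.smul_apply, smul_eq_mul]
      rw [hxx]; ring
    rw [Finset.sum_congr rfl (fun j _ => h1 j)]
    rw [Finset.sum_add_distrib, Finset.sum_add_distrib, ← Finset.mul_sum, ← Finset.mul_sum,
      ← Finset.mul_sum]
    rw [hP, ha, hb, he]
    ring
  have hφ : ∀ (v : EuclideanSpace ℝ (Fin n)) (i : Fin m) (t : ℝ),
      HasDerivAt (fun s : ℝ => c (x + s • v) i)
        (fderiv ℝ (fun y => c y i) (x + t • v) v) t :=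
    fun v i t => comp_line_hasDerivAt ((hci i).differentiable (by norm_num)) x v t
  have hPd : ∀ (v : EuclideanSpace ℝ (Fin n)) (t : ℝ),
      HasDerivAt (P v) (b v + 2 * e v * t) t := by
    intro v t
    have h1 : HasDerivAt (fun s : ℝ => b v * s) (b v * 1) t := (hasDerivAt_id t).const_mul (b v)
    have h2 : HasDerivAt (fun s : ℝ => e v * s^2) (e v * (2 * t^1)) t := by
      exact_mod_cast (hasDerivAt_pow 2 t).const_mul (e v)
    have h3 := (h1.add h2).const_add a
    have h4 : P v = fun s : ℝ => a + (b v * s + e v * s^2) := by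
      funext s; rw [hP]; ring
    rw [h4]
    refine h3.congr_deriv ?_
    ring
  have hLD : ∀ (v : EuclideanSpace ℝ (Fin n)) (t : ℝ),
      HasDerivAt (fun s : ℝ => G (x + s • v)) (D v t) t := by
    intro v t
    have hsq : HasDerivAt (fun s : ℝ => ∑ i, (c (x + s • v) i)^2)
        (∑ i, 2 * c (x + t • v) i * fderiv ℝ (fun y => c y i) (x + t • v) v) t := by
      have h := HasDerivAt.fun_sum (fun i (_ : i ∈ Finset.univ) => (hφ v i t).pow 2)
      refine h.congr_deriv ?_
      apply Finset.sum_congr rfl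
      intros; push_cast; ring
    have hQ : HasDerivAt (fun s : ℝ => (∑ j, ((x + s • v) j - xstar j)^2)^2)
        (2 * P v t * (b v + 2 * e v * t)) t := by
      have heq : (fun s : ℝ => (∑ j, ((x + s • v) j - xstar j)^2)^2)
          = fun s => (P v s)^2 := by
        funext s; rw [hQP v s]
      rw [heq]
      have h5 := (hPd v t).pow 2
      refine h5.congr_deriv ?_
      push_cast; ring
    have hfp := comp_line_hasDerivAt hfd x v t
    have h6 := (hfp.add (hsq.const_mul (ρ/2))).add hQ
    rw [hG, hD]
    exact h6
  have hfirst : ∀ v : EuclideanSpace ℝ (Fin n), D v 0 = 0 := by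
    intro v
    have hm : IsLocalMin (fun t : ℝ => G (x + t • v)) 0 := isLocalMin_comp_line hloc v
    have h7 := hm.deriv_eq_zero
    rwa [(hLD v 0).deriv] at h7
  -- first-order: explicit equation
  have hkey1 : ∀ v : EuclideanSpace ℝ (Fin n),
      fderiv ℝ f x v + ρ * ∑ i, c x i * fderiv ℝ (fun y => c y i) x v
        + 4 * a * (∑ j, (x j - xstar j) * v j) = 0 := by
    intro v
    have h8 := hfirst v
    simp only [hD, hP, hb, x0 v] at h8
    rw [show (∑ i, 2 * c x i * fderiv ℝ (fun y => c y i) x v)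
        = 2 * ∑ i, c x i * fderiv ℝ (fun y => c y i) x v from by
      rw [Finset.mul_sum]; exact Finset.sum_congr rfl (fun i _ => by ring)] at h8
    linear_combination h8
  have haw : a = ‖x - xstar‖^2 := by
    rw [ha, ← sum_sq_eq (x - xstar)]
    exact Finset.sum_congr rfl (fun j _ => by rw [PiLp.sub_apply])
  have hwv : ∀ v : EuclideanSpace ℝ (Fin n),
      ∑ j, (x j - xstar j) * v j = ⟪x - xstar, v⟫ := by
    intro v
    rw [← sum_mul_eq]
    exact Finset.sum_congr rfl (fun j _ => by rw [PiLp.sub_apply])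
  have hinner : ∀ v : EuclideanSpace ℝ (Fin n),
      ⟪gradient f x + gradc c x (ρ • c x) + (4*a) • (x - xstar), v⟫ = 0 := by
    intro v
    rw [inner_add_left, inner_add_left, real_inner_smul_left]
    have hgrad : ⟪gradient f x, v⟫ = fderiv ℝ f x v := by
      rw [gradient, InnerProductSpace.toDual_symm_apply]
    have hadj : ⟪gradc c x (ρ • c x), v⟫
        = ρ * ∑ i, c x i * fderiv ℝ (fun y => c y i) x v := by
      rw [gradc, ContinuousLinearMap.adjoint_inner_left, real_inner_smul_left]
      congr 1
      rw [← sum_mul_eq]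
      exact Finset.sum_congr rfl (fun i _ => by rw [hfci])
    rw [hgrad, hadj, ← hwv]
    linear_combination hkey1 v
  have hzero : gradient f x + gradc c x (ρ • c x) + (4*a) • (x - xstar) = 0 :=
    inner_self_eq_zero.mp (hinner _)
  have hfo : ‖gradient f x + gradc c x (ρ • c x)‖ ≤ 4 * ‖x - xstar‖^3 := by
    have h9 : gradient f x + gradc c x (ρ • c x) = -((4*a) • (x - xstar)) :=
      eq_neg_of_add_eq_zero_left hzero
    rw [h9, norm_neg, norm_smul, Real.norm_eq_abs,
      abs_of_nonneg (by rw [haw]; positivity), haw]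
    ring_nf
    exact le_of_eq (by ring)
  refine ⟨hfo, ?_⟩
  -- second-order
  intro d hd
  have hA0 : ∀ i : Fin m, fderiv ℝ (fun y => c y i) x d = 0 := by
    intro i
    rw [hfci, hd]
    rfl
  have hφ0 : ∀ i : Fin m, HasDerivAt (fun s : ℝ => c (x + s • d) i)
      (fderiv ℝ (fun y => c y i) x d) 0 := by
    intro i
    have h10 := hφ d i 0
    rwa [x0 d] at h10
  have hAi : ∀ i : Fin m, HasDerivAt (fun t : ℝ => fderiv ℝ (fun y => c y i) (x + t • d) d)
      (hess (fun y => c y i) x d) 0 := fun i => fderiv_comp_line_hasDerivAt (hci i) x d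
  have hDd : HasDerivAt (D d)
      (hess f x d + ρ/2 * ∑ i, 2 * (c x i * hess (fun y => c y i) x d)
        + (2 * b d * b d + 4 * a * e d)) 0 := by
    have hAf := fderiv_comp_line_hasDerivAt hf x d
    have hterm : ∀ i : Fin m, HasDerivAt
        (fun t : ℝ => 2 * c (x + t • d) i * fderiv ℝ (fun y => c y i) (x + t • d) d)
        (2 * (c x i * hess (fun y => c y i) x d)) 0 := by
      intro i
      have h11 := ((hφ0 i).mul (hAi i)).const_mul 2
      have h12 : (fun t : ℝ => 2 * c (x + t • d) i * fderiv ℝ (fun y => c y i) (x + t • d) d)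
          = fun t : ℝ => 2 * (c (x + t • d) i * fderiv ℝ (fun y => c y i) (x + t • d) d) := by
        funext t; ring
      rw [h12]
      refine h11.congr_deriv ?_
      rw [x0 d, hA0 i]
      ring
    have hsum := HasDerivAt.fun_sum (fun i (_ : i ∈ Finset.univ) => hterm i)
    have hlin : HasDerivAt (fun t : ℝ => b d + 2 * e d * t) (2 * e d) 0 := by
      simpa using ((hasDerivAt_id (0:ℝ)).const_mul (2 * e d)).const_add (b d)
    have hpoly := ((hPd d 0).const_mul 2).mul hlin
    have h13 := (hAf.add (hsum.const_mul (ρ/2))).add hpoly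
    rw [hD]
    refine h13.congr_deriv ?_
    rw [hP]
    ring
  have hsecond := second_deriv_nonneg (fun t => hLD d t) hDd (isLocalMin_comp_line hloc d)
  have hbd : b d = 2 * ⟪x - xstar, d⟫ := by simp only [hb]; rw [hwv]
  have hed : e d = ‖d‖^2 := by simp only [he]; rw [sum_sq_eq]
  have hcs : ⟪x - xstar, d⟫^2 ≤ ‖x - xstar‖^2 * ‖d‖^2 := by
    nlinarith [abs_real_inner_le_norm (x - xstar) d, sq_abs (⟪x - xstar, d⟫),
      norm_nonneg (x - xstar), norm_nonneg d, abs_nonneg (⟪x - xstar, d⟫)]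
  have hsum3 : ∑ i, (ρ • c x) i * hess (fun y => c y i) x d
      = ρ/2 * ∑ i, 2 * (c x i * hess (fun y => c y i) x d) := by
    rw [Finset.mul_sum]
    exact Finset.sum_congr rfl (fun i _ => by
      simp only [PiLp.smul_apply, smul_eq_mul]; ring)
  rw [hsum3]
  have hfin : 2 * b d * b d + 4 * a * e d ≤ 12 * ‖x - xstar‖^2 * ‖d‖^2 := by
    rw [hbd, hed, haw]
    nlinarith [hcs]
  linarith [hsecond, hfin]
end key

theorem stmt0 {n m : ℕ}
    (f : EuclideanSpace ℝ (Fin n) → ℝ) (c : EuclideanSpace ℝ (Fin n) → EuclideanSpace ℝ (Fin m))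
    (hf : ContDiff ℝ 2 f) (hc : ContDiff ℝ 2 c)
    (xstar : EuclideanSpace ℝ (Fin n)) (hfeas : c xstar = 0)
    (hmin : IsLocalMinOn f {y : EuclideanSpace ℝ (Fin n) | c y = 0} xstar) :
    ∃ (ε : ℕ → ℝ) (x : ℕ → EuclideanSpace ℝ (Fin n)) (lam : ℕ → EuclideanSpace ℝ (Fin m)),
      (∀ k, 0 < ε k) ∧ Tendsto ε atTop (𝓝 0) ∧ Tendsto x atTop (𝓝 xstar) ∧
      ∀ k : ℕ,
        ‖gradient f (x k) + gradc c (x k) (lam k)‖ ≤ ε k ∧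
        ‖c (x k)‖ ≤ ε k ∧
        ∀ d : EuclideanSpace ℝ (Fin n), fderiv ℝ c (x k) d = 0 →
          -(ε k) * ‖d‖ ^ 2 ≤
            hess f (x k) d + ∑ i, lam k i * hess (fun y => c y i) (x k) d := by
  classical
  -- a closed ball on which feasible points have value ≥ f xstar
  have hmin' : ∀ᶠ y in 𝓝 xstar, c y = 0 → f xstar ≤ f y := by
    have h := eventually_nhdsWithin_iff.mp hmin
    filter_upwards [h] with y hy hcy
    exact hy hcy
  obtain ⟨δ, hδpos, hδball⟩ := Metric.eventually_nhds_iff_ball.mp hmin'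
  set r : ℝ := δ / 2 with hr
  have hrpos : 0 < r := by positivity
  set K := Metric.closedBall xstar r with hK
  have hKprop : ∀ y ∈ K, c y = 0 → f xstar ≤ f y := by
    intro y hy hcy
    apply hδball y _ hcy
    exact lt_of_le_of_lt (Metric.mem_closedBall.mp hy) (by rw [hr]; linarith)
  have hKcomp : IsCompact K := isCompact_closedBall _ _
  have hxstarK : xstar ∈ K := Metric.mem_closedBall_self hrpos.le
  -- continuity of the penalized objectives
  have hcy : ∀ i : Fin m, Continuous fun y : EuclideanSpace ℝ (Fin n) => c y i := by
    intro i
    rw [proj_comp_eq]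
    exact (EuclideanSpace.proj i).continuous.comp hc.continuous
  have hyj : ∀ j : Fin n, Continuous fun y : EuclideanSpace ℝ (Fin n) => y j - xstar j := by
    intro j
    exact ((EuclideanSpace.proj (𝕜 := ℝ) j).continuous).sub continuous_const
  have hGcont : ∀ k : ℕ, Continuous (fun y : EuclideanSpace ℝ (Fin n) =>
      f y + (((k:ℕ):ℝ)+1)/2 * ∑ i, (c y i)^2 + (∑ j, (y j - xstar j)^2)^2) := by
    intro k
    refine (hf.continuous.add (continuous_const.mul ?_)).add (?_)
    · exact continuous_finset_sum _ fun i _ => (hcy i).pow 2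
    · exact (continuous_finset_sum _ fun j _ => (hyj j).pow 2).pow 2
  -- minimizers on the ball
  choose x hxK hxmin using fun k : ℕ =>
    hKcomp.exists_isMinOn ⟨xstar, hxstarK⟩ (hGcont k).continuousOn
  -- sum identities
  have hcsq : ∀ y, ∑ i, (c y i)^2 = ‖c y‖^2 := fun y => sum_sq_eq (c y)
  have hq4 : ∀ y : EuclideanSpace ℝ (Fin n),
      (∑ j, (y j - xstar j)^2)^2 = ‖y - xstar‖^4 := by
    intro y
    rw [show ∑ j, (y j - xstar j)^2 = ‖y - xstar‖^2 from by
      rw [← sum_sq_eq (y - xstar)]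
      exact Finset.sum_congr rfl fun j _ => by rw [PiLp.sub_apply]]
    ring
  have hGstar : ∀ k : ℕ, (f xstar + (((k:ℕ):ℝ)+1)/2 * ∑ i, (c xstar i)^2
      + (∑ j, (xstar j - xstar j)^2)^2) = f xstar := by
    intro k
    simp [hfeas]
  have hle : ∀ k : ℕ, f (x k) + (((k:ℕ):ℝ)+1)/2 * ‖c (x k)‖^2 + ‖x k - xstar‖^4 ≤ f xstar := by
    intro k
    have h := hxmin k hxstarK
    simp only [Set.mem_setOf_eq] at h
    rw [hGstar k] at h
    rw [← hcsq, ← hq4]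
    exact h
  -- lower bound of f on K
  obtain ⟨z, hzK, hz⟩ := hKcomp.exists_isMinOn ⟨xstar, hxstarK⟩ hf.continuous.continuousOn
  have hS0 : 0 ≤ f xstar - f z := by
    have h := hz hxstarK
    simp only [Set.mem_setOf_eq] at h
    linarith
  have hfz : ∀ k, f z ≤ f (x k) := by
    intro k
    have h := hz (hxK k)
    simpa using h
  have hcb : ∀ k : ℕ, ‖c (x k)‖^2 ≤ 2*(f xstar - f z)/(((k:ℕ):ℝ)+1) := by
    intro k
    have h1 := hle k
    have h2 := hfz k
    have h3 : (0:ℝ) ≤ ‖x k - xstar‖^4 := by positivity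
    have h4 : (0:ℝ) < ((k:ℕ):ℝ)+1 := by positivity
    rw [le_div_iff₀ h4]
    nlinarith [h1, h2, h3]
  have hqb : ∀ k : ℕ, f (x k) + ‖x k - xstar‖^4 ≤ f xstar := by
    intro k
    have h1 := hle k
    have h2 : (0:ℝ) ≤ (((k:ℕ):ℝ)+1)/2 * ‖c (x k)‖^2 := by positivity
    linarith
  -- ‖c (x k)‖ → 0
  have hdiv0 : Tendsto (fun k : ℕ => 2*(f xstar - f z)/(((k:ℕ):ℝ)+1)) atTop (𝓝 0) := by
    have h := tendsto_one_div_add_atTop_nhds_zero_nat.const_mul (2*(f xstar - f z))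
    simpa [div_eq_mul_inv, mul_comm, mul_assoc] using h
  have hcn : Tendsto (fun k => ‖c (x k)‖) atTop (𝓝 0) := by
    have hsq : Tendsto (fun k : ℕ => Real.sqrt (2*(f xstar - f z)/(((k:ℕ):ℝ)+1)))
        atTop (𝓝 0) := by
      have := (Real.continuous_sqrt.tendsto 0).comp hdiv0
      simpa [Function.comp_def] using this
    refine tendsto_of_tendsto_of_tendsto_of_le_of_le tendsto_const_nhds hsq
      (fun k => norm_nonneg _) (fun k => ?_)
    rw [Real.le_sqrt (norm_nonneg _) (by positivity)]
    exact hcb k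
  -- x → xstar
  have hxt : Tendsto x atTop (𝓝 xstar) := by
    apply tendsto_of_subseq_tendsto
    intro ns hns
    obtain ⟨xb, hxbK, ms, hmono, hmt⟩ := hKcomp.tendsto_subseq (fun k => hxK (ns k))
    refine ⟨ms, ?_⟩
    have hxb : xb = xstar := by
      have h1 : Tendsto (fun j => ‖c (x (ns (ms j)))‖) atTop (𝓝 0) :=
        hcn.comp (hns.comp hmono.tendsto_atTop)
      have h2 : Tendsto (fun j => ‖c (x (ns (ms j)))‖) atTop (𝓝 ‖c xb‖) :=
        ((hc.continuous.tendsto xb).comp hmt).norm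
      have hcxb : c xb = 0 := norm_eq_zero.mp (tendsto_nhds_unique h2 h1)
      have h3 : Tendsto (fun j => f (x (ns (ms j))) + ‖x (ns (ms j)) - xstar‖^4)
          atTop (𝓝 (f xb + ‖xb - xstar‖^4)) := by
        refine Tendsto.add ((hf.continuous.tendsto xb).comp hmt) ?_
        exact ((((continuous_id.sub continuous_const).norm.pow 4).tendsto xb).comp hmt)
      have h4 : f xb + ‖xb - xstar‖^4 ≤ f xstar :=
        le_of_tendsto h3 (Filter.Eventually.of_forall fun j => hqb _)
      have h5 : f xstar ≤ f xb := hKprop xb hxbK hcxb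
      have h6 : ‖xb - xstar‖^4 = 0 := le_antisymm (by linarith) (by positivity)
      have h7 : xb - xstar = 0 := by
        rw [← norm_eq_zero]
        exact pow_eq_zero_iff (by norm_num) |>.mp h6
      exact sub_eq_zero.mp h7
    rw [hxb] at hmt
    exact hmt
  have hrt : Tendsto (fun k => ‖x k - xstar‖) atTop (𝓝 0) := by
    rw [tendsto_iff_norm_sub_tendsto_zero] at hxt
    exact hxt
  -- the tolerance sequence
  set ε0 : ℕ → ℝ := fun k => 4*‖x k - xstar‖^3 + 12*‖x k - xstar‖^2 + ‖c (x k)‖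
    + 1/(((k:ℕ):ℝ)+1) with hε0
  have hε0pos : ∀ k, 0 < ε0 k := by intro k; rw [hε0]; positivity
  have hε0t : Tendsto ε0 atTop (𝓝 0) := by
    rw [hε0]
    have h1 : Tendsto (fun k => 4*‖x k - xstar‖^3) atTop (𝓝 0) := by
      have := (hrt.pow 3).const_mul (4:ℝ)
      simpa using this
    have h2 : Tendsto (fun k => 12*‖x k - xstar‖^2) atTop (𝓝 0) := by
      have := (hrt.pow 2).const_mul (12:ℝ)
      simpa using this
    have h4 := tendsto_one_div_add_atTop_nhds_zero_nat (𝕜 := ℝ)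
    have := ((h1.add h2).add hcn).add h4
    simpa using this
  -- eventually in the interior
  obtain ⟨N, hN⟩ : ∃ N : ℕ, ∀ k ≥ N, x k ∈ Metric.ball xstar r :=
    eventually_atTop.mp (hxt (Metric.ball_mem_nhds xstar hrpos))
  -- local minimality & the key lemma, for k ≥ N
  have hkey : ∀ k ≥ N,
      ‖gradient f (x k) + gradc c (x k) ((((k:ℕ):ℝ)+1) • c (x k))‖ ≤ 4 * ‖x k - xstar‖^3 ∧
      ∀ d : EuclideanSpace ℝ (Fin n), fderiv ℝ c (x k) d = 0 →
        -(12 * ‖x k - xstar‖^2) * ‖d‖^2 ≤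
          hess f (x k) d + ∑ i, ((((k:ℕ):ℝ)+1) • c (x k)) i * hess (fun y => c y i) (x k) d := by
    intro k hk
    have hKnb : K ∈ 𝓝 (x k) :=
      mem_nhds_iff.mpr ⟨Metric.ball xstar r, Metric.ball_subset_closedBall,
        Metric.isOpen_ball, hN k hk⟩
    have hloc := (hxmin k).isLocalMin hKnb
    exact key f c hf hc xstar (((k:ℕ):ℝ)+1) (x k) hloc
  -- assemble the shifted sequences
  refine ⟨fun j => ε0 (j + N), fun j => x (j + N),
    fun j => ((((j + N:ℕ):ℝ))+1) • c (x (j + N)), fun j => hε0pos _, ?_, ?_, ?_⟩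
  · exact hε0t.comp (tendsto_add_atTop_nat N)
  · exact hxt.comp (tendsto_add_atTop_nat N)
  · intro j
    obtain ⟨hfo, hso⟩ := hkey (j + N) (Nat.le_add_left N j)
    have hnn1 : (0:ℝ) ≤ ‖x (j+N) - xstar‖^3 := by positivity
    have hnn2 : (0:ℝ) ≤ ‖x (j+N) - xstar‖^2 := by positivity
    have hnn3 : (0:ℝ) ≤ ‖c (x (j+N))‖ := norm_nonneg _
    have hnn4 : (0:ℝ) < 1/(((j+N:ℕ):ℝ)+1) := by positivity
    refine ⟨le_trans hfo (by rw [hε0]; dsimp only; linarith), by rw [hε0]; dsimp only; linarith, ?_⟩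
    intro d hd
    have h := hso d hd
    have hbound : 12 * ‖x (j+N) - xstar‖^2 ≤ ε0 (j + N) := by
      rw [hε0]; dsimp only; linarith
    have hd2 : (0:ℝ) ≤ ‖d‖^2 := by positivity
    nlinarith [h]
end

section
/- Fix k ≥ 1, β > 0, and a set S ⊆ ℝⁿ on which the smoothness/nondegeneracy assumption holds with constants M_f, L_f, M_c, σ > 0, L_c. Suppose x_{k−1}, x_k, x_{k+1} ∈ ℝⁿ with x_k, x_{k+1} ∈ S, multipliers λ_k, λ_{k+1} ∈ ℝᵐ, and residuals r̃_k, r̃_{k+1} ∈ ℝⁿ satisfy the stationarity equations ∇f(x_t) + ∇c(x_t)λ_t + β(x_t − x_{t−1}) = r̃_t for t = k and t = k+1. Then ‖λ_{k+1} − λ_k‖² ≤ C₁‖x_{k+1} − x_k‖² + C₂‖x_k − x_{k−1}‖² + (16M_c²/σ⁴)‖r̃_k‖² + (4/σ²)‖r̃_{k+1} − r̃_k‖², where C₁ = (4/σ²)(L_f + L_cM_f/σ + β)² and C₂ = (4/σ²)(β + 2M_cβ/σ)². -/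
open Filter Topology

set_option maxHeartbeats 1000000

lemma sq_le_four_sum_sq (a b c d x : ℝ) (hx : 0 ≤ x) (h : x ≤ a + b + c + d) :
    x ^ 2 ≤ 4 * (a ^ 2 + b ^ 2 + c ^ 2 + d ^ 2) := by
  nlinarith [sq_nonneg (a - b), sq_nonneg (a - c), sq_nonneg (a - d),
    sq_nonneg (b - c), sq_nonneg (b - d), sq_nonneg (c - d), sq_nonneg (a + b + c + d)]

theorem stmt2 {n m : ℕ}
    (f : EuclideanSpace ℝ (Fin n) → ℝ) (c : EuclideanSpace ℝ (Fin n) → EuclideanSpace ℝ (Fin m))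
    (hf : ContDiff ℝ 2 f) (hc : ContDiff ℝ 2 c)
    (β Mf Lf Mc σ Lc : ℝ) (hβ : 0 < β) (hσ : 0 < σ)
    (S : Set (EuclideanSpace ℝ (Fin n)))
    (hMf : ∀ y ∈ S, ‖gradient f y‖ ≤ Mf)
    (hLf : ∀ y ∈ S, ∀ z ∈ S, ‖gradient f y - gradient f z‖ ≤ Lf * ‖y - z‖)
    (hMc : ∀ y ∈ S, ‖fderiv ℝ c y‖ ≤ Mc)
    (hσlb : ∀ y ∈ S, ∀ v : EuclideanSpace ℝ (Fin m), σ * ‖v‖ ≤ ‖gradc c y v‖)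
    (hLc : ∀ y ∈ S, ∀ z ∈ S, ‖fderiv ℝ c y - fderiv ℝ c z‖ ≤ Lc * ‖y - z‖)
    (xkm1 xk xkp1 : EuclideanSpace ℝ (Fin n)) (hxk : xk ∈ S) (hxkp1 : xkp1 ∈ S)
    (lamk lamkp1 : EuclideanSpace ℝ (Fin m)) (rk rkp1 : EuclideanSpace ℝ (Fin n))
    (hstatk : gradient f xk + gradc c xk lamk + β • (xk - xkm1) = rk)
    (hstatkp1 : gradient f xkp1 + gradc c xkp1 lamkp1 + β • (xkp1 - xk) = rkp1) :
    ‖lamkp1 - lamk‖ ^ 2 ≤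
      4 / σ ^ 2 * (Lf + Lc * Mf / σ + β) ^ 2 * ‖xkp1 - xk‖ ^ 2
      + 4 / σ ^ 2 * (β + 2 * Mc * β / σ) ^ 2 * ‖xk - xkm1‖ ^ 2
      + 16 * Mc ^ 2 / σ ^ 4 * ‖rk‖ ^ 2 + 4 / σ ^ 2 * ‖rkp1 - rk‖ ^ 2 := by
  set A := gradc c xkp1 with hAdef
  set B := gradc c xk with hBdef
  set d1 := ‖xkp1 - xk‖ with hd1
  set d0 := ‖xk - xkm1‖ with hd0
  set L := ‖lamkp1 - lamk‖ with hL
  have hMf0 : 0 ≤ Mf := le_trans (norm_nonneg _) (hMf xk hxk)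
  have hMc0 : 0 ≤ Mc := le_trans (norm_nonneg _) (hMc xk hxk)
  -- rearranged stationarity
  have hA1 : A lamkp1 = rkp1 - gradient f xkp1 - β • (xkp1 - xk) := by
    rw [← hstatkp1]; abel
  have hB1 : B lamk = rk - gradient f xk - β • (xk - xkm1) := by
    rw [← hstatk]; abel
  have key : A (lamkp1 - lamk)
      = (rkp1 - rk) - (gradient f xkp1 - gradient f xk) - β • (xkp1 - xk)
        + β • (xk - xkm1) - (A - B) lamk := by
    have : A (lamkp1 - lamk) = A lamkp1 - B lamk - (A - B) lamk := by
      simp only [map_sub, ContinuousLinearMap.sub_apply]; abel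
    rw [this, hA1, hB1]; abel
  -- operator norm of the adjoint difference
  have hABadj : A - B = ContinuousLinearMap.adjoint (fderiv ℝ c xkp1 - fderiv ℝ c xk) := by
    rw [hAdef, hBdef]; simp [gradc, map_sub]
  have hABn : ‖A - B‖ = ‖fderiv ℝ c xkp1 - fderiv ℝ c xk‖ := by
    rw [hABadj]; exact LinearIsometryEquiv.norm_map _ _
  have hABLc : ‖A - B‖ ≤ Lc * d1 := by rw [hABn]; exact hLc xkp1 hxkp1 xk hxk
  have hAB2Mc : ‖A - B‖ ≤ 2 * Mc := by
    rw [hABn]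
    calc ‖fderiv ℝ c xkp1 - fderiv ℝ c xk‖ ≤ ‖fderiv ℝ c xkp1‖ + ‖fderiv ℝ c xk‖ :=
          norm_sub_le _ _
      _ ≤ Mc + Mc := add_le_add (hMc xkp1 hxkp1) (hMc xk hxk)
      _ = 2 * Mc := by ring
  -- bound on σ‖lamk‖
  have hlamk : σ * ‖lamk‖ ≤ ‖rk‖ + Mf + β * d0 := by
    refine le_trans (hσlb xk hxk lamk) ?_
    rw [← hBdef, hB1]
    calc ‖rk - gradient f xk - β • (xk - xkm1)‖
        ≤ ‖rk - gradient f xk‖ + ‖β • (xk - xkm1)‖ := norm_sub_le _ _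
      _ ≤ ‖rk‖ + ‖gradient f xk‖ + ‖β • (xk - xkm1)‖ := by
          have := norm_sub_le rk (gradient f xk); linarith
      _ ≤ ‖rk‖ + Mf + β * d0 := by
          rw [norm_smul, Real.norm_eq_abs, abs_of_pos hβ]
          have := hMf xk hxk; linarith
  -- bound on the cross term
  have hw : ‖(A - B) lamk‖ ≤ ‖A - B‖ * ‖lamk‖ := (A - B).le_opNorm lamk
  have hAB0 : 0 ≤ ‖A - B‖ := norm_nonneg _
  have hwσ : σ * ‖(A - B) lamk‖ ≤ Lc * Mf * d1 + 2 * Mc * ‖rk‖ + 2 * Mc * β * d0 := by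
    have e5 : ‖A - B‖ * (σ * ‖lamk‖) ≤ ‖A - B‖ * (‖rk‖ + Mf + β * d0) :=
      mul_le_mul_of_nonneg_left hlamk hAB0
    have e1 : ‖A - B‖ * Mf ≤ Lc * d1 * Mf := mul_le_mul_of_nonneg_right hABLc hMf0
    have e2 : ‖A - B‖ * ‖rk‖ ≤ 2 * Mc * ‖rk‖ :=
      mul_le_mul_of_nonneg_right hAB2Mc (norm_nonneg _)
    have e3 : ‖A - B‖ * (β * d0) ≤ 2 * Mc * (β * d0) := by
      have : 0 ≤ β * d0 := by positivity
      exact mul_le_mul_of_nonneg_right hAB2Mc this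
    have f0 : σ * ‖(A - B) lamk‖ ≤ ‖A - B‖ * (σ * ‖lamk‖) := by
      calc σ * ‖(A - B) lamk‖ ≤ σ * (‖A - B‖ * ‖lamk‖) :=
            mul_le_mul_of_nonneg_left hw hσ.le
        _ = ‖A - B‖ * (σ * ‖lamk‖) := by ring
    have e6 : ‖A - B‖ * (‖rk‖ + Mf + β * d0)
        = ‖A - B‖ * ‖rk‖ + ‖A - B‖ * Mf + ‖A - B‖ * (β * d0) := by ring
    have e7 : Lc * d1 * Mf = Lc * Mf * d1 := by ring
    linarith [f0, e5, e6, e1, e2, e3]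
  -- main triangle inequality
  have hgf : ‖gradient f xkp1 - gradient f xk‖ ≤ Lf * d1 := hLf xkp1 hxkp1 xk hxk
  have h1 : σ * L ≤ ‖rkp1 - rk‖ + Lf * d1 + β * d1 + β * d0 + ‖(A - B) lamk‖ := by
    refine le_trans (hσlb xkp1 hxkp1 (lamkp1 - lamk)) ?_
    rw [← hAdef, key]
    have t1 := norm_sub_le ((rkp1 - rk) - (gradient f xkp1 - gradient f xk)
        - β • (xkp1 - xk) + β • (xk - xkm1)) ((A - B) lamk)
    have t2 := norm_add_le ((rkp1 - rk) - (gradient f xkp1 - gradient f xk)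
        - β • (xkp1 - xk)) (β • (xk - xkm1))
    have t3 := norm_sub_le ((rkp1 - rk) - (gradient f xkp1 - gradient f xk))
        (β • (xkp1 - xk))
    have t4 := norm_sub_le (rkp1 - rk) (gradient f xkp1 - gradient f xk)
    have s1 : ‖β • (xkp1 - xk)‖ = β * d1 := by
      rw [norm_smul, Real.norm_eq_abs, abs_of_pos hβ]
    have s2 : ‖β • (xk - xkm1)‖ = β * d0 := by
      rw [norm_smul, Real.norm_eq_abs, abs_of_pos hβ]
    rw [s1] at t3
    rw [s2] at t2
    linarith
  -- combine: σ² L ≤ u1 + u2 + u3 + u4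
  set u1 := (σ * Lf + Lc * Mf + σ * β) * d1 with hu1
  set u2 := (σ * β + 2 * Mc * β) * d0 with hu2
  set u3 := 2 * Mc * ‖rk‖ with hu3
  set u4 := σ * ‖rkp1 - rk‖ with hu4
  have h2 : σ ^ 2 * L ≤ u1 + u2 + u3 + u4 := by
    have := mul_le_mul_of_nonneg_left h1 hσ.le
    rw [hu1, hu2, hu3, hu4]
    nlinarith [hwσ]
  have hL0 : 0 ≤ L := norm_nonneg _
  have h20 : 0 ≤ σ ^ 2 * L := by positivity
  have hsum0 : 0 ≤ u1 + u2 + u3 + u4 := le_trans h20 h2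
  have hfin : σ ^ 4 * L ^ 2 ≤ 4 * (u1 ^ 2 + u2 ^ 2 + u3 ^ 2 + u4 ^ 2) := by
    calc σ ^ 4 * L ^ 2 = (σ ^ 2 * L) ^ 2 := by ring
      _ ≤ 4 * (u1 ^ 2 + u2 ^ 2 + u3 ^ 2 + u4 ^ 2) := sq_le_four_sum_sq _ _ _ _ _ h20 h2
  have hT : 4 / σ ^ 2 * (Lf + Lc * Mf / σ + β) ^ 2 * d1 ^ 2
      + 4 / σ ^ 2 * (β + 2 * Mc * β / σ) ^ 2 * d0 ^ 2
      + 16 * Mc ^ 2 / σ ^ 4 * ‖rk‖ ^ 2 + 4 / σ ^ 2 * ‖rkp1 - rk‖ ^ 2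
      = 4 * (u1 ^ 2 + u2 ^ 2 + u3 ^ 2 + u4 ^ 2) / σ ^ 4 := by
    rw [hu1, hu2, hu3, hu4]
    field_simp
    ring
  rw [hT, le_div_iff₀ (by positivity)]
  linarith [hfin]
end

section
/- Let ρ > 0, β > 0 and suppose sequences (x_k) ⊆ ℝⁿ, (λ_k) ⊆ ℝᵐ satisfy, for every k ≥ 0, the decrease condition L_ρ(x_{k+1}, λ_k) + (β/2)‖x_{k+1} − x_k‖² ≤ L_ρ(x_k, λ_k) and the multiplier update λ_{k+1} = λ_k + ρ c(x_{k+1}). Define the Lyapunov function P_k = L_ρ(x_k, λ_k) + (β/4)‖x_k − x_{k−1}‖² for k ≥ 1. Then for every k ≥ 1: P_{k+1} − P_k ≤ (1/ρ)‖λ_{k+1} − λ_k‖² − (β/4)‖x_{k+1} − x_k‖² − (β/4)‖x_k − x_{k−1}‖². -/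
open Filter Topology

theorem stmt3 {n m : ℕ}
    (f : EuclideanSpace ℝ (Fin n) → ℝ) (c : EuclideanSpace ℝ (Fin n) → EuclideanSpace ℝ (Fin m))
    (hf : ContDiff ℝ 2 f) (hc : ContDiff ℝ 2 c)
    (ρ β : ℝ) (hρ : 0 < ρ) (hβ : 0 < β)
    (x : ℕ → EuclideanSpace ℝ (Fin n)) (lam : ℕ → EuclideanSpace ℝ (Fin m))
    (hdecr : ∀ k : ℕ,
      AL f c ρ (x (k+1)) (lam k) + β / 2 * ‖x (k+1) - x k‖ ^ 2 ≤ AL f c ρ (x k) (lam k))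
    (hmul : ∀ k : ℕ, lam (k+1) = lam k + ρ • c (x (k+1))) :
    ∀ k : ℕ, 1 ≤ k →
      (AL f c ρ (x (k+1)) (lam (k+1)) + β / 4 * ‖x (k+1) - x k‖ ^ 2)
        - (AL f c ρ (x k) (lam k) + β / 4 * ‖x k - x (k-1)‖ ^ 2)
      ≤ 1 / ρ * ‖lam (k+1) - lam k‖ ^ 2 - β / 4 * ‖x (k+1) - x k‖ ^ 2
        - β / 4 * ‖x k - x (k-1)‖ ^ 2 := by
  intro k hk
  have hd := hdecr k
  have hm := hmul k
  have hΔ : lam (k+1) - lam k = ρ • c (x (k+1)) := by rw [hm]; abel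
  have h1 : AL f c ρ (x (k+1)) (lam (k+1)) - AL f c ρ (x (k+1)) (lam k)
      = ρ * ‖c (x (k+1))‖ ^ 2 := by
    simp only [AL, hm, inner_add_left, real_inner_smul_left]
    rw [real_inner_self_eq_norm_sq]
    ring
  have h2 : ‖lam (k+1) - lam k‖ ^ 2 = ρ ^ 2 * ‖c (x (k+1))‖ ^ 2 := by
    rw [hΔ, norm_smul]
    simp [abs_of_pos hρ]
    ring
  have h3 : ρ * ‖c (x (k+1))‖ ^ 2 = 1 / ρ * ‖lam (k+1) - lam k‖ ^ 2 := by
    rw [h2]; field_simp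
  nlinarith [h1, h3, hd, sq_nonneg ‖x (k+1) - x k‖]
end

section
/- Consider Proximal AL iterates (x_k), (λ_k), (r̃_k) with parameters ρ, β > 0 satisfying all hypotheses of the boundedness lemma (compact sublevel sets with constant ρ₀; f ≤ Ū on {‖c(x)‖ ≤ 1}; smoothness/nondegeneracy on S⁰_α̂ with α̂ = 7Ū + 7C₀ − 6L̄ + 13‖λ₀‖² + 2; ‖c(x₀)‖² ≤ min{C₀/ρ, 1}), and in addition let ε ∈ (0,1], η ∈ [0,2], Σ_{k≥1}‖r̃_k‖² ≤ R with R ∈ [1,∞) and ‖r̃_k‖ ≤ ε/2 for all k ≥ 1, β = ε^η/2, and ρ ≥ max{16·max{C₁,C₂}/ε^η, (M_f + βD_S + 1)²/(2σ²) + ρ₀, 16(M_c² + σ²)R/σ⁴, 3ρ₀, 1}, where C₁ = (4/σ²)(L_f + L_cM_f/σ + β)², C₂ = (4/σ²)(β + 2M_cβ/σ)², and D_S is the diameter of S⁰_α̂. Then there exists a subsequence of (x_k, λ_k)_{k ≥ 1} converging to a point (x*, λ*) satisfying the first-order KKT conditions: ∇f(x*) + ∇c(x*)λ* = 0 and c(x*)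 = 0. -/
open Filter Topology
set_option maxHeartbeats 2000000

/-- AM-GM helper: `a*b ≤ a^2/(2s) + (s/2) b^2`. -/
lemma amgm_aux (a b s : ℝ) (hs : 0 < s) : a * b ≤ a ^ 2 / (2 * s) + s / 2 * b ^ 2 := by
  have h2 : (0:ℝ) < 2 * s := by linarith
  have key : a * b ≤ (a ^ 2 + s ^ 2 * b ^ 2) / (2 * s) := by
    rw [le_div_iff₀ h2]; nlinarith [sq_nonneg (s * b - a)]
  have heq : (a ^ 2 + s ^ 2 * b ^ 2) / (2 * s) = a ^ 2 / (2 * s) + s / 2 * b ^ 2 := by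
    field_simp
  linarith

theorem stmt6
    {n m : ℕ}
    (f : EuclideanSpace ℝ (Fin n) → ℝ) (c : EuclideanSpace ℝ (Fin n) → EuclideanSpace ℝ (Fin m))
    (hf : ContDiff ℝ 2 f) (hc : ContDiff ℝ 2 c)
    (ρ β : ℝ) (hρ : 0 < ρ) (hβ : 0 < β)
    (x : ℕ → EuclideanSpace ℝ (Fin n)) (lam : ℕ → EuclideanSpace ℝ (Fin m)) (r : ℕ → EuclideanSpace ℝ (Fin n))
    (hstat : ∀ k : ℕ,
      gradient f (x (k+1)) + gradc c (x (k+1)) (lam k)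
        + ρ • gradc c (x (k+1)) (c (x (k+1))) + β • (x (k+1) - x k) = r (k+1))
    (hdecr : ∀ k : ℕ,
      AL f c ρ (x (k+1)) (lam k) + β / 2 * ‖x (k+1) - x k‖ ^ 2 ≤ AL f c ρ (x k) (lam k))
    (hmul : ∀ k : ℕ, lam (k+1) = lam k + ρ • c (x (k+1)))
    (ρ₀ Lbar U C₀ αhat : ℝ) (hρ₀ : 0 ≤ ρ₀)
    (hcompact : ∀ α : ℝ,
      {y : EuclideanSpace ℝ (Fin n) | f y + ρ₀ / 2 * ‖c y‖ ^ 2 ≤ α} = ∅ ∨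
        IsCompact {y : EuclideanSpace ℝ (Fin n) | f y + ρ₀ / 2 * ‖c y‖ ^ 2 ≤ α})
    (hLbar : Lbar = ⨅ y : EuclideanSpace ℝ (Fin n), (f y + ρ₀ / 2 * ‖c y‖ ^ 2))
    (hU : ∀ y : EuclideanSpace ℝ (Fin n), ‖c y‖ ≤ 1 → f y ≤ U)
    (hC₀ : 0 < C₀)
    (hαhat : αhat = 7 * U + 7 * C₀ - 6 * Lbar + 13 * ‖lam 0‖ ^ 2 + 2)
    (S : Set (EuclideanSpace ℝ (Fin n)))
    (hS : S = {y : EuclideanSpace ℝ (Fin n) | f y + ρ₀ / 2 * ‖c y‖ ^ 2 ≤ αhat})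
    (Mf Lf Mc σ Lc DS : ℝ) (hσ : 0 < σ)
    (hMf : ∀ y ∈ S, ‖gradient f y‖ ≤ Mf)
    (hLf : ∀ y ∈ S, ∀ z ∈ S, ‖gradient f y - gradient f z‖ ≤ Lf * ‖y - z‖)
    (hMc : ∀ y ∈ S, ‖fderiv ℝ c y‖ ≤ Mc)
    (hσlb : ∀ y ∈ S, ∀ v : EuclideanSpace ℝ (Fin m), σ * ‖v‖ ≤ ‖gradc c y v‖)
    (hLc : ∀ y ∈ S, ∀ z ∈ S, ‖fderiv ℝ c y - fderiv ℝ c z‖ ≤ Lc * ‖y - z‖)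
    (hDS : DS = Metric.diam S)
    (C1 C2 : ℝ)
    (hC1 : C1 = 4 / σ ^ 2 * (Lf + Lc * Mf / σ + β) ^ 2)
    (hC2 : C2 = 4 / σ ^ 2 * (β + 2 * Mc * β / σ) ^ 2)
    (ε η : ℝ) (hε : 0 < ε ∧ ε ≤ 1) (hη : 0 ≤ η ∧ η ≤ 2)
    (R : ℝ) (hR : 1 ≤ R)
    (hRsum : ∀ K : ℕ, ∑ k ∈ Finset.range K, ‖r (k+1)‖ ^ 2 ≤ R)
    (hrb : ∀ k : ℕ, 1 ≤ k → ‖r k‖ ≤ ε / 2)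
    (hβdef : β = ε ^ η / 2)
    (hρbig : max (max (16 * max C1 C2 / ε ^ η)
        ((Mf + β * DS + 1) ^ 2 / (2 * σ ^ 2) + ρ₀))
        (max (max (16 * (Mc ^ 2 + σ ^ 2) * R / σ ^ 4) (3 * ρ₀)) 1) ≤ ρ)
    (hx0 : ‖c (x 0)‖ ^ 2 ≤ min (C₀ / ρ) 1)
 :
    ∃ (xstar : EuclideanSpace ℝ (Fin n)) (lamstar : EuclideanSpace ℝ (Fin m)) (φ : ℕ → ℕ),
      StrictMono φ ∧ (∀ k, 1 ≤ φ k) ∧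
      Tendsto (fun k => (x (φ k), lam (φ k))) atTop (𝓝 (xstar, lamstar)) ∧
      gradient f xstar + gradc c xstar lamstar = 0 ∧ c xstar = 0 := by
  obtain ⟨hε0, hε1⟩ := hε
  -- basic facts about ρ
  have hρ1 : (1:ℝ) ≤ ρ :=
    le_trans (le_max_of_le_right (le_max_of_le_right le_rfl)) hρbig
  have hρ3ρ₀ : 3 * ρ₀ ≤ ρ :=
    le_trans (le_max_of_le_right (le_max_of_le_left (le_max_right _ _))) hρbig
  have hρR : 16 * (Mc ^ 2 + σ ^ 2) * R / σ ^ 4 ≤ ρ :=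
    le_trans (le_max_of_le_right (le_max_of_le_left (le_max_left _ _))) hρbig
  have hρΛ : (Mf + β * DS + 1) ^ 2 / (2 * σ ^ 2) + ρ₀ ≤ ρ :=
    le_trans (le_max_of_le_left (le_max_right _ _)) hρbig
  have hρC : 16 * max C1 C2 / ε ^ η ≤ ρ :=
    le_trans (le_max_of_le_left (le_max_left _ _)) hρbig
  have hεη2 : ε ^ η = 2 * β := by linarith
  have hεη : 0 < ε ^ η := by linarith
  have hmaxρ : 16 * max C1 C2 ≤ ρ * (2 * β) := by
    rw [div_le_iff₀ hεη, hεη2] at hρC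
    linarith
  have hC1ρ : C1 ≤ β * ρ / 8 := by
    have h1 : C1 ≤ max C1 C2 := le_max_left _ _
    linarith
  have hC2ρ : C2 ≤ β * ρ / 8 := by
    have h1 : C2 ≤ max C1 C2 := le_max_right _ _
    linarith
  have hρmρ₀ : (2:ℝ)/3 ≤ ρ - ρ₀ := by linarith
  have hρmρ₀' : (0:ℝ) < ρ - ρ₀ := by linarith
  -- continuity facts
  have hfc : Continuous f := hf.continuous
  have hcc : Continuous c := hc.continuous
  have hgradf : Continuous (gradient f) := by
    have h1 : Continuous (fderiv ℝ f) := hf.continuous_fderiv (by norm_num)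
    exact (InnerProductSpace.toDual ℝ _).symm.continuous.comp h1
  have hgradc2 : Continuous (fun p : (EuclideanSpace ℝ (Fin n)) × (EuclideanSpace ℝ (Fin m)) =>
      gradc c p.1 p.2) := by
    have h1 : Continuous (fderiv ℝ c) := hc.continuous_fderiv (by norm_num)
    have h2 : Continuous (fun y => gradc c y) :=
      (ContinuousLinearMap.adjoint.toLinearIsometry.continuous).comp h1
    exact h2.comp continuous_fst |>.clm_apply continuous_snd
  -- the infimum is a lower bound
  have hgc : Continuous (fun y : EuclideanSpace ℝ (Fin n) => f y + ρ₀ / 2 * ‖c y‖ ^ 2) := by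
    apply hfc.add
    exact (continuous_const.mul ((hcc.norm).pow 2))
  have hLbarle : ∀ y, Lbar ≤ f y + ρ₀ / 2 * ‖c y‖ ^ 2 := by
    have hex : ∃ b : ℝ, ∀ y, b ≤ f y + ρ₀ / 2 * ‖c y‖ ^ 2 := by
      rcases hcompact (f (x 0) + ρ₀ / 2 * ‖c (x 0)‖ ^ 2) with h | h
      · exfalso
        have : x 0 ∈ {y : EuclideanSpace ℝ (Fin n) |
            f y + ρ₀ / 2 * ‖c y‖ ^ 2 ≤ f (x 0) + ρ₀ / 2 * ‖c (x 0)‖ ^ 2} := Set.mem_setOf.mpr le_rfl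
        rw [h] at this
        exact this
      · obtain ⟨z, hzT, hz⟩ := h.exists_isMinOn ⟨x 0, Set.mem_setOf.mpr le_rfl⟩ (hgc.continuousOn)
        refine ⟨f z + ρ₀ / 2 * ‖c z‖ ^ 2, fun y => ?_⟩
        by_cases hy : f y + ρ₀ / 2 * ‖c y‖ ^ 2 ≤ f (x 0) + ρ₀ / 2 * ‖c (x 0)‖ ^ 2
        · exact hz hy
        · have h2 := hz (show x 0 ∈ {y : EuclideanSpace ℝ (Fin n) |
            f y + ρ₀ / 2 * ‖c y‖ ^ 2 ≤ f (x 0) + ρ₀ / 2 * ‖c (x 0)‖ ^ 2} from Set.mem_setOf.mpr le_rfl)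
          push_neg at hy
          exact le_trans h2 hy.le
    obtain ⟨b, hb⟩ := hex
    intro y
    rw [hLbar]
    exact ciInf_le ⟨b, by rintro w ⟨y', rfl⟩; exact hb y'⟩ y
  -- initial point facts
  have hc0a : ‖c (x 0)‖ ^ 2 ≤ C₀ / ρ := le_trans hx0 (min_le_left _ _)
  have hc0b : ‖c (x 0)‖ ≤ 1 := by
    nlinarith [le_trans hx0 (min_le_right _ _), norm_nonneg (c (x 0))]
  have hfx0 : f (x 0) ≤ U := hU _ hc0b
  have hULbar : Lbar ≤ U + C₀ / 6 := by
    have h1 := hLbarle (x 0)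
    have h2 : ρ₀ / 2 * ‖c (x 0)‖ ^ 2 ≤ C₀ / 6 := by
      have h3 : ρ₀ / 2 * ‖c (x 0)‖ ^ 2 ≤ ρ / 6 * (C₀ / ρ) := by
        apply mul_le_mul (by linarith) hc0a (sq_nonneg _) (by linarith)
      have h4 : ρ / 6 * (C₀ / ρ) = C₀ / 6 := by field_simp
      linarith
    linarith
  have hx0S : x 0 ∈ S := by
    rw [hS]
    show f (x 0) + ρ₀ / 2 * ‖c (x 0)‖ ^ 2 ≤ αhat
    have h2 : ρ₀ / 2 * ‖c (x 0)‖ ^ 2 ≤ C₀ / 6 := by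
      have h3 : ρ₀ / 2 * ‖c (x 0)‖ ^ 2 ≤ ρ / 6 * (C₀ / ρ) := by
        apply mul_le_mul (by linarith) hc0a (sq_nonneg _) (by linarith)
      have h4 : ρ / 6 * (C₀ / ρ) = C₀ / 6 := by field_simp
      linarith
    nlinarith [sq_nonneg ‖lam 0‖]
  have hSco : IsCompact S := by
    rcases hcompact αhat with h | h
    · exfalso; rw [hS] at hx0S; rw [h] at hx0S; exact hx0S
    · rw [hS]; exact h
  have hSne : S.Nonempty := ⟨x 0, hx0S⟩
  have hdiam : ∀ y ∈ S, ∀ z ∈ S, ‖y - z‖ ≤ DS := by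
    intro y hy z hz
    rw [← dist_eq_norm, hDS]
    exact Metric.dist_le_diam_of_mem hSco.isBounded hy hz
  have hMf0 : 0 ≤ Mf := le_trans (norm_nonneg _) (hMf _ hx0S)
  have hMc0 : 0 ≤ Mc := le_trans (norm_nonneg _) (hMc _ hx0S)
  have hDS0 : 0 ≤ DS := hDS ▸ Metric.diam_nonneg
  -- abbreviations
  obtain ⟨Λσ, hΛσ⟩ : ∃ q : ℝ, q = Mf + β * DS + 1 := ⟨_, rfl⟩
  have hΛσ1 : 1 ≤ Λσ := by rw [hΛσ]; nlinarith only [hMf0, mul_nonneg hβ.le hDS0]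
  obtain ⟨t, ht⟩ : ∃ q : ℝ, q = 1 + 2 * Mc / σ := ⟨_, rfl⟩
  have ht1 : 1 ≤ t := by
    have h0 : 0 ≤ 2 * Mc / σ := by positivity
    rw [ht]; linarith only [h0]
  have ht0 : 0 < t := by linarith
  obtain ⟨V, hV⟩ : ∃ q : ℕ → ℝ, q = fun k => AL f c ρ (x k) (lam k) := ⟨_, rfl⟩
  obtain ⟨W, hW⟩ : ∃ q : ℕ → ℝ,
      q = fun k => V (k+1) + β / 8 * ‖x (k+1) - x k‖ ^ 2 := ⟨_, rfl⟩
  obtain ⟨Rt, hRt⟩ : ∃ q : ℕ → ℝ, q = fun j => 2*(1+t)/(ρ*σ^2) * ‖r (j+2)‖^2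
      + 2*t*(1+t)/(ρ*σ^2) * ‖r (j+1)‖^2 := ⟨_, rfl⟩
  have hWs : ∀ k, W k = V (k+1) + β / 8 * ‖x (k+1) - x k‖ ^ 2 := by
    intro k; simp only [hW]
  have hWs1 : ∀ k, W (k+1) = V (k+2) + β / 8 * ‖x (k+2) - x (k+1)‖ ^ 2 := by
    intro k; simp only [hW]
  have hRt0 : ∀ j, 0 ≤ Rt j := by
    intro j; rw [hRt]; positivity
  -- key stationarity identity
  have hkey : ∀ k, gradc c (x (k+1)) (lam (k+1))
      = r (k+1) - gradient f (x (k+1)) - β • (x (k+1) - x k) := by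
    intro k
    have h1 := hstat k
    have h2 : gradc c (x (k+1)) (lam k) + ρ • gradc c (x (k+1)) (c (x (k+1)))
        = r (k+1) - gradient f (x (k+1)) - β • (x (k+1) - x k) := by
      rw [← h1]; abel
    rw [hmul k, map_add, map_smul, h2]
  -- AL shift identity
  have hALshift : ∀ (xv : EuclideanSpace ℝ (Fin n)) (lv : EuclideanSpace ℝ (Fin m)),
      AL f c ρ xv (lv + ρ • c xv) = AL f c ρ xv lv + ρ * ‖c xv‖ ^ 2 := by
    intro xv lv
    simp only [AL, inner_add_left, real_inner_smul_left, real_inner_self_eq_norm_sq]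
    ring
  have hVs : ∀ k, V (k+1) = AL f c ρ (x (k+1)) (lam k) + ρ * ‖c (x (k+1))‖ ^ 2 := by
    intro k
    simp only [hV]
    rw [hmul k, hALshift]
  -- AL lower bound
  have hALlow : ∀ (xv : EuclideanSpace ℝ (Fin n)) (lv : EuclideanSpace ℝ (Fin m)),
      f xv + ρ₀ / 2 * ‖c xv‖ ^ 2 ≤ AL f c ρ xv lv + ‖lv‖ ^ 2 / (2 * (ρ - ρ₀)) := by
    intro xv lv
    have h1 : -(‖lv‖ * ‖c xv‖) ≤ (inner ℝ lv (c xv) : ℝ) := by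
      have h2 := abs_real_inner_le_norm lv (c xv)
      have h3 := neg_abs_le (inner ℝ lv (c xv) : ℝ)
      linarith
    have h2 : ‖lv‖ * ‖c xv‖ ≤ ‖lv‖ ^ 2 / (2 * (ρ - ρ₀)) + (ρ - ρ₀) / 2 * ‖c xv‖ ^ 2 :=
      amgm_aux _ _ _ hρmρ₀'
    simp only [AL]
    linarith only [h1, h2]
  -- lambda bound
  have hlamb : ∀ k, x k ∈ S → x (k+1) ∈ S → σ * ‖lam (k+1)‖ ≤ Λσ := by
    intro k hk hk1
    have h1 := hσlb _ hk1 (lam (k+1))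
    rw [hkey k] at h1
    have u1 := norm_sub_le (r (k+1) - gradient f (x (k+1))) (β • (x (k+1) - x k))
    have u2 := norm_sub_le (r (k+1)) (gradient f (x (k+1)))
    have u3 : ‖β • (x (k+1) - x k)‖ = β * ‖x (k+1) - x k‖ := by
      rw [norm_smul, Real.norm_eq_abs, abs_of_pos hβ]
    have u4 := hMf _ hk1
    have u5 := hdiam _ hk1 _ hk
    have u6 := hrb (k+1) (by omega)
    have u7 : β * ‖x (k+1) - x k‖ ≤ β * DS := by
      apply mul_le_mul_of_nonneg_left u5 hβ.le
    rw [hΛσ]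
    linarith only [h1, u1, u2, u3, u4, u6, u7, hε1]
  have hlam2 : ∀ k, x k ∈ S → x (k+1) ∈ S → ‖lam (k+1)‖ ^ 2 / (2 * (ρ - ρ₀)) ≤ 1 := by
    intro k hk hk1
    have hb := hlamb k hk hk1
    rw [div_le_one (by linarith)]
    have h1 : σ ^ 2 * ‖lam (k+1)‖ ^ 2 ≤ Λσ ^ 2 := by
      nlinarith only [hb, mul_nonneg hσ.le (norm_nonneg (lam (k+1)))]
    have h2 : Λσ ^ 2 ≤ (ρ - ρ₀) * (2 * σ ^ 2) := by
      have h3 : Λσ ^ 2 / (2 * σ ^ 2) ≤ ρ - ρ₀ := by rw [hΛσ]; linarith only [hρΛ]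
      exact (div_le_iff₀ (by positivity)).mp h3
    nlinarith only [h1, h2, mul_pos hσ hσ, norm_nonneg (lam (k+1)), hρmρ₀']
  -- V 0 bound
  have hV0b : V 0 ≤ U + C₀ + ‖lam 0‖ ^ 2 / 2 := by
    have hin : (inner ℝ (lam 0) (c (x 0)) : ℝ) ≤ ‖lam 0‖ * ‖c (x 0)‖ := real_inner_le_norm _ _
    have h2 : ‖lam 0‖ * ‖c (x 0)‖ ≤ ‖lam 0‖ ^ 2 / 2 + ‖c (x 0)‖ ^ 2 / 2 := by
      nlinarith only [sq_nonneg (‖lam 0‖ - ‖c (x 0)‖)]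
    have h3 : ‖c (x 0)‖ ^ 2 ≤ C₀ := le_trans hc0a (div_le_self hC₀.le hρ1)
    have h4 : ρ / 2 * ‖c (x 0)‖ ^ 2 ≤ C₀ / 2 := by
      have h5 : ρ / 2 * ‖c (x 0)‖ ^ 2 ≤ ρ / 2 * (C₀ / ρ) :=
        mul_le_mul_of_nonneg_left hc0a (by linarith only [hρ1])
      have h6 : ρ / 2 * (C₀ / ρ) = C₀ / 2 := by field_simp
      linarith
    simp only [hV, AL]
    linarith only [hin, h2, h3, h4, hfx0]
  -- bound on ρ * ‖c (x 1)‖ ^ 2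
  have hrc1 : ρ * ‖c (x 1)‖ ^ 2 ≤ 6 * (V 0 - Lbar) + 9 * ‖lam 0‖ ^ 2 / ρ := by
    have hd0 := hdecr 0
    have hlb := hLbarle (x 1)
    have hin : -(‖lam 0‖ * ‖c (x 1)‖) ≤ (inner ℝ (lam 0) (c (x 1)) : ℝ) := by
      have h2 := abs_real_inner_le_norm (lam 0) (c (x 1))
      have h3 := neg_abs_le (inner ℝ (lam 0) (c (x 1)) : ℝ)
      linarith
    have ham : ‖lam 0‖ * ‖c (x 1)‖ ≤ ‖lam 0‖ ^ 2 / (2 * (ρ/3)) + (ρ/3) / 2 * ‖c (x 1)‖ ^ 2 :=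
      amgm_aux _ _ _ (by linarith)
    have hq : 6 * (‖lam 0‖ ^ 2 / (2 * (ρ/3))) = 9 * ‖lam 0‖ ^ 2 / ρ := by
      field_simp; ring
    have hρ₀6 : ρ₀ / 2 * ‖c (x 1)‖ ^ 2 ≤ ρ / 6 * ‖c (x 1)‖ ^ 2 := by
      nlinarith only [hρ3ρ₀, sq_nonneg ‖c (x 1)‖]
    have hVeq : AL f c ρ (x 0) (lam 0) = V 0 := by simp only [hV]
    rw [hVeq] at hd0
    simp only [AL] at hd0
    linarith only [hd0, hlb, hin, ham, hq, hρ₀6, mul_nonneg hβ.le (sq_nonneg ‖x 1 - x 0‖)]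
  -- W 0 bound
  have hW0b : W 0 ≤ 7 * V 0 - 6 * Lbar + 9 * ‖lam 0‖ ^ 2 / ρ := by
    have h1 := hVs 0
    have hd0 := hdecr 0
    have hVeq : AL f c ρ (x 0) (lam 0) = V 0 := by simp only [hV]
    rw [hVeq] at hd0
    rw [show W 0 = V 1 + β / 8 * ‖x 1 - x 0‖ ^ 2 from hWs 0]
    linarith only [h1, hd0, hrc1, mul_nonneg hβ.le (sq_nonneg ‖x 1 - x 0‖)]
  -- x 1 ∈ S
  have hx1S : x 1 ∈ S := by
    have h1 := hALlow (x 1) (lam 0)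
    have hd0 := hdecr 0
    have hVeq : AL f c ρ (x 0) (lam 0) = V 0 := by simp only [hV]
    rw [hVeq] at hd0
    have hq2 : ‖lam 0‖ ^ 2 / (2 * (ρ - ρ₀)) ≤ 3/4 * ‖lam 0‖ ^ 2 := by
      rw [div_le_iff₀ (by linarith only [hρmρ₀'])]
      nlinarith only [hρmρ₀, sq_nonneg ‖lam 0‖]
    rw [hS]
    show f (x 1) + ρ₀ / 2 * ‖c (x 1)‖ ^ 2 ≤ αhat
    linarith only [h1, hd0, hq2, hV0b, hULbar, hC₀, hαhat, sq_nonneg ‖lam 0‖,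
      mul_nonneg hβ.le (sq_nonneg ‖x 1 - x 0‖)]
  -- the core Δλ bound
  have hdlam : ∀ k, x (k+1) ∈ S → x (k+2) ∈ S →
      ρ * ‖c (x (k+2))‖ ^ 2 ≤ β/8 * (‖x (k+2) - x (k+1)‖^2 + ‖x (k+1) - x k‖^2) + Rt k := by
    intro k h1 h2
    have hk2 : gradc c (x (k+2)) (lam (k+2))
        = r (k+2) - gradient f (x (k+2)) - β • (x (k+2) - x (k+1)) := hkey (k+1)
    have hk1 := hkey k
    have hsplit : gradc c (x (k+2)) (lam (k+2) - lam (k+1)) =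
        ((r (k+2) - gradient f (x (k+2)) - β • (x (k+2) - x (k+1)))
        - (r (k+1) - gradient f (x (k+1)) - β • (x (k+1) - x k)))
        - (gradc c (x (k+2)) - gradc c (x (k+1))) (lam (k+1)) := by
      have h3 : gradc c (x (k+2)) (lam (k+1))
          = (gradc c (x (k+2)) - gradc c (x (k+1))) (lam (k+1))
            + gradc c (x (k+1)) (lam (k+1)) := by
        rw [ContinuousLinearMap.sub_apply]; abel
      rw [map_sub, hk2, h3, hk1]; abel
    have hn1 : ‖(r (k+2) - gradient f (x (k+2)) - β • (x (k+2) - x (k+1)))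
        - (r (k+1) - gradient f (x (k+1)) - β • (x (k+1) - x k))‖
        ≤ ‖r (k+2)‖ + ‖r (k+1)‖ + Lf * ‖x (k+2) - x (k+1)‖
          + β * ‖x (k+2) - x (k+1)‖ + β * ‖x (k+1) - x k‖ := by
      have heq : (r (k+2) - gradient f (x (k+2)) - β • (x (k+2) - x (k+1)))
          - (r (k+1) - gradient f (x (k+1)) - β • (x (k+1) - x k))
          = ((r (k+2) - r (k+1)) - (gradient f (x (k+2)) - gradient f (x (k+1))))
            - (β • (x (k+2) - x (k+1)) - β • (x (k+1) - x k)) := by abel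
      rw [heq]
      have t0 := norm_sub_le ((r (k+2) - r (k+1)) - (gradient f (x (k+2)) - gradient f (x (k+1))))
        (β • (x (k+2) - x (k+1)) - β • (x (k+1) - x k))
      have t0' := norm_sub_le (r (k+2) - r (k+1)) (gradient f (x (k+2)) - gradient f (x (k+1)))
      have t1 := norm_sub_le (r (k+2)) (r (k+1))
      have t2 := hLf _ h2 _ h1
      have t3 : ‖β • (x (k+2) - x (k+1)) - β • (x (k+1) - x k)‖
          ≤ β * ‖x (k+2) - x (k+1)‖ + β * ‖x (k+1) - x k‖ := by
        have t4 := norm_sub_le (β • (x (k+2) - x (k+1))) (β • (x (k+1) - x k))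
        have t5 : ‖β • (x (k+2) - x (k+1))‖ = β * ‖x (k+2) - x (k+1)‖ := by
          rw [norm_smul, Real.norm_eq_abs, abs_of_pos hβ]
        have t6 : ‖β • (x (k+1) - x k)‖ = β * ‖x (k+1) - x k‖ := by
          rw [norm_smul, Real.norm_eq_abs, abs_of_pos hβ]
        linarith only [t4, t5, t6]
      linarith only [t0, t0', t1, t2, t3]
    have hndiff1 : ‖gradc c (x (k+2)) - gradc c (x (k+1))‖ ≤ Lc * ‖x (k+2) - x (k+1)‖ := by
      rw [show gradc c (x (k+2)) - gradc c (x (k+1))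
          = ContinuousLinearMap.adjoint (fderiv ℝ c (x (k+2)) - fderiv ℝ c (x (k+1)))
          from (map_sub _ _ _).symm]
      rw [ContinuousLinearMap.adjoint.norm_map]
      exact hLc _ h2 _ h1
    have hndiff2 : ‖gradc c (x (k+2)) - gradc c (x (k+1))‖ ≤ 2 * Mc := by
      have e0 := norm_sub_le (gradc c (x (k+2))) (gradc c (x (k+1)))
      have e1 : ‖gradc c (x (k+2))‖ = ‖fderiv ℝ c (x (k+2))‖ :=
        ContinuousLinearMap.adjoint.norm_map _
      have e2 : ‖gradc c (x (k+1))‖ = ‖fderiv ℝ c (x (k+1))‖ :=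
        ContinuousLinearMap.adjoint.norm_map _
      have e3 := hMc _ h2
      have e4 := hMc _ h1
      linarith only [e0, e1, e2, e3, e4]
    have hlmA : σ * ‖lam (k+1)‖ ≤ Mf + β * ‖x (k+1) - x k‖ + ‖r (k+1)‖ := by
      have h0 := hσlb _ h1 (lam (k+1))
      rw [hk1] at h0
      have u1 := norm_sub_le (r (k+1) - gradient f (x (k+1))) (β • (x (k+1) - x k))
      have u2 := norm_sub_le (r (k+1)) (gradient f (x (k+1)))
      have u3 : ‖β • (x (k+1) - x k)‖ = β * ‖x (k+1) - x k‖ := by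
        rw [norm_smul, Real.norm_eq_abs, abs_of_pos hβ]
      have u4 := hMf _ h1
      linarith only [h0, u1, u2, u3, u4]
    have hn2 : ‖(gradc c (x (k+2)) - gradc c (x (k+1))) (lam (k+1))‖
        ≤ Lc * Mf / σ * ‖x (k+2) - x (k+1)‖ + 2 * Mc * β / σ * ‖x (k+1) - x k‖
          + 2 * Mc / σ * ‖r (k+1)‖ := by
      have h0 := ContinuousLinearMap.le_opNorm
        (gradc c (x (k+2)) - gradc c (x (k+1))) (lam (k+1))
      have hN0 : (0:ℝ) ≤ ‖gradc c (x (k+2)) - gradc c (x (k+1))‖ := norm_nonneg _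
      have hlmB : (0:ℝ) ≤ ‖lam (k+1)‖ := norm_nonneg _
      have key : σ * (‖gradc c (x (k+2)) - gradc c (x (k+1))‖ * ‖lam (k+1)‖)
          ≤ Lc * ‖x (k+2) - x (k+1)‖ * Mf
            + 2 * Mc * (β * ‖x (k+1) - x k‖ + ‖r (k+1)‖) := by
        have h3 : ‖gradc c (x (k+2)) - gradc c (x (k+1))‖ * (σ * ‖lam (k+1)‖)
            ≤ ‖gradc c (x (k+2)) - gradc c (x (k+1))‖
              * (Mf + β * ‖x (k+1) - x k‖ + ‖r (k+1)‖) :=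
          mul_le_mul_of_nonneg_left hlmA hN0
        linarith only [h3, mul_le_mul_of_nonneg_right hndiff1 hMf0,
          mul_le_mul_of_nonneg_right hndiff2
            (show (0:ℝ) ≤ β * ‖x (k+1) - x k‖ + ‖r (k+1)‖ by positivity)]
      have hfin : ‖gradc c (x (k+2)) - gradc c (x (k+1))‖ * ‖lam (k+1)‖
          ≤ (Lc * ‖x (k+2) - x (k+1)‖ * Mf
            + 2 * Mc * (β * ‖x (k+1) - x k‖ + ‖r (k+1)‖)) / σ := by
        rw [le_div_iff₀ hσ]; linarith only [key]
      have heqr : (Lc * ‖x (k+2) - x (k+1)‖ * Mf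
            + 2 * Mc * (β * ‖x (k+1) - x k‖ + ‖r (k+1)‖)) / σ
          = Lc * Mf / σ * ‖x (k+2) - x (k+1)‖ + 2 * Mc * β / σ * ‖x (k+1) - x k‖
            + 2 * Mc / σ * ‖r (k+1)‖ := by
        field_simp; ring
      linarith only [h0, hfin, heqr]
    have hσΔ : σ * ‖lam (k+2) - lam (k+1)‖
        ≤ (Lf + Lc * Mf / σ + β) * ‖x (k+2) - x (k+1)‖
          + (β + 2 * Mc * β / σ) * ‖x (k+1) - x k‖ + ‖r (k+2)‖ + t * ‖r (k+1)‖ := by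
      have h0 := hσlb _ h2 (lam (k+2) - lam (k+1))
      rw [hsplit] at h0
      have h3 := norm_sub_le
        ((r (k+2) - gradient f (x (k+2)) - β • (x (k+2) - x (k+1)))
        - (r (k+1) - gradient f (x (k+1)) - β • (x (k+1) - x k)))
        ((gradc c (x (k+2)) - gradc c (x (k+1))) (lam (k+1)))
      have h4 : t * ‖r (k+1)‖ = ‖r (k+1)‖ + 2 * Mc / σ * ‖r (k+1)‖ := by
        rw [ht]; ring
      linarith only [h0, h3, hn1, hn2, h4]
    have hΔnorm : ‖lam (k+2) - lam (k+1)‖ = ρ * ‖c (x (k+2))‖ := by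
      rw [hmul (k+1)]
      rw [add_sub_cancel_left, norm_smul, Real.norm_eq_abs, abs_of_pos hρ]
    have hsq : σ^2 * (ρ * ‖c (x (k+2))‖)^2
        ≤ 4*(Lf + Lc * Mf / σ + β)^2 * ‖x (k+2) - x (k+1)‖^2
          + 4*(β + 2 * Mc * β / σ)^2 * ‖x (k+1) - x k‖^2
          + 2*(1+t) * ‖r (k+2)‖^2 + 2*t*(1+t) * ‖r (k+1)‖^2 := by
      rw [← hΔnorm]
      obtain ⟨AA, hAA⟩ : ∃ q : ℝ, q = Lf + Lc * Mf / σ + β := ⟨_, rfl⟩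
      obtain ⟨BB, hBB⟩ : ∃ q : ℝ, q = β + 2 * Mc * β / σ := ⟨_, rfl⟩
      rw [← hAA, ← hBB]
      have hσΔ' : σ * ‖lam (k+2) - lam (k+1)‖
          ≤ AA * ‖x (k+2) - x (k+1)‖ + BB * ‖x (k+1) - x k‖ + ‖r (k+2)‖ + t * ‖r (k+1)‖ := by
        rw [hAA, hBB]; exact hσΔ
      have hpos : (0:ℝ) ≤ σ * ‖lam (k+2) - lam (k+1)‖ :=
        mul_nonneg hσ.le (norm_nonneg (lam (k+2) - lam (k+1)))
      have h5 : (σ * ‖lam (k+2) - lam (k+1)‖)^2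
          ≤ (AA * ‖x (k+2) - x (k+1)‖ + BB * ‖x (k+1) - x k‖
            + ‖r (k+2)‖ + t * ‖r (k+1)‖)^2 :=
        sq_le_sq' (by linarith only [hσΔ', hpos]) hσΔ'
      have hP := sq_nonneg (AA * ‖x (k+2) - x (k+1)‖ - BB * ‖x (k+1) - x k‖)
      have hPQ := sq_nonneg (AA * ‖x (k+2) - x (k+1)‖ + BB * ‖x (k+1) - x k‖
        - ‖r (k+2)‖ - t * ‖r (k+1)‖)
      have hce := mul_nonneg ht0.le (sq_nonneg (‖r (k+2)‖ - ‖r (k+1)‖))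
      nlinarith only [h5, hP, hPQ, hce]
    -- divide
    have hρσ : (0:ℝ) < ρ * σ^2 := by positivity
    have hRtv : ρ * σ^2 * Rt k = 2*(1+t) * ‖r (k+2)‖^2 + 2*t*(1+t) * ‖r (k+1)‖^2 := by
      rw [hRt]
      field_simp
      all_goals ring
    have hC1σ : C1 * σ^2 = 4*(Lf + Lc * Mf / σ + β)^2 := by
      rw [hC1]; field_simp
    have hC2σ : C2 * σ^2 = 4*(β + 2 * Mc * β / σ)^2 := by
      rw [hC2]; field_simp
    apply le_of_mul_le_mul_left _ hρσ
    calc ρ * σ^2 * (ρ * ‖c (x (k+2))‖ ^ 2) = σ^2 * (ρ * ‖c (x (k+2))‖)^2 := by ring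
    _ ≤ 4*(Lf + Lc * Mf / σ + β)^2 * ‖x (k+2) - x (k+1)‖^2
          + 4*(β + 2 * Mc * β / σ)^2 * ‖x (k+1) - x k‖^2
          + 2*(1+t) * ‖r (k+2)‖^2 + 2*t*(1+t) * ‖r (k+1)‖^2 := hsq
    _ = C1 * σ^2 * ‖x (k+2) - x (k+1)‖^2 + C2 * σ^2 * ‖x (k+1) - x k‖^2
          + (2*(1+t) * ‖r (k+2)‖^2 + 2*t*(1+t) * ‖r (k+1)‖^2) := by
        rw [hC1σ, hC2σ]; ring
    _ ≤ ρ * σ^2 * (β/8 * (‖x (k+2) - x (k+1)‖^2 + ‖x (k+1) - x k‖^2))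
          + (2*(1+t) * ‖r (k+2)‖^2 + 2*t*(1+t) * ‖r (k+1)‖^2) := by
        linarith only [mul_le_mul_of_nonneg_right hC1ρ
            (mul_nonneg (sq_nonneg σ) (sq_nonneg ‖x (k+2) - x (k+1)‖)),
          mul_le_mul_of_nonneg_right hC2ρ
            (mul_nonneg (sq_nonneg σ) (sq_nonneg ‖x (k+1) - x k‖))]
    _ = ρ * σ^2 * (β/8 * (‖x (k+2) - x (k+1)‖^2 + ‖x (k+1) - x k‖^2) + Rt k) := by
        linear_combination -hRtv
  -- one step of the descent recursion
  have hstep : ∀ k, x (k+1) ∈ S → x (k+2) ∈ S →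
      W (k+1) + β/4 * ‖x (k+2) - x (k+1)‖^2 ≤ W k + Rt k := by
    intro k h1 h2
    have hV2 : V (k+2) = AL f c ρ (x (k+2)) (lam (k+1)) + ρ * ‖c (x (k+2))‖ ^ 2 := hVs (k+1)
    have hd : AL f c ρ (x (k+2)) (lam (k+1)) + β / 2 * ‖x (k+2) - x (k+1)‖ ^ 2
        ≤ AL f c ρ (x (k+1)) (lam (k+1)) := hdecr (k+1)
    have hVeq : AL f c ρ (x (k+1)) (lam (k+1)) = V (k+1) := by simp only [hV]
    rw [hVeq] at hd
    have hcb := hdlam k h1 h2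
    rw [hWs1 k, hWs k]
    linarith only [hV2, hd, hcb]
  -- bound on the sums of Rt
  have hρσ2 : (0:ℝ) < ρ * σ^2 := by positivity
  have hRtsum : ∀ N, ∑ j ∈ Finset.range N, Rt j ≤ 1 := by
    intro N
    have hsum1 : ∑ j ∈ Finset.range N, ‖r (j+2)‖^2 ≤ R := by
      have h1 := hRsum (N+1)
      rw [Finset.sum_range_succ'] at h1
      have h2 : (0:ℝ) ≤ ‖r (0+1)‖^2 := sq_nonneg _
      calc ∑ j ∈ Finset.range N, ‖r (j+2)‖^2
          = ∑ j ∈ Finset.range N, ‖r (j+1+1)‖^2 := rfl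
      _ ≤ R := by linarith only [h1, h2]
    have hsum2 := hRsum N
    have hexp : ∑ j ∈ Finset.range N, Rt j
        = 2*(1+t)/(ρ*σ^2) * (∑ j ∈ Finset.range N, ‖r (j+2)‖^2)
          + 2*t*(1+t)/(ρ*σ^2) * (∑ j ∈ Finset.range N, ‖r (j+1)‖^2) := by
      simp only [hRt]
      rw [Finset.mul_sum, Finset.mul_sum, ← Finset.sum_add_distrib]
    have hcoef1 : (0:ℝ) ≤ 2*(1+t)/(ρ*σ^2) := by positivity
    have hcoef2 : (0:ℝ) ≤ 2*t*(1+t)/(ρ*σ^2) := by positivity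
    have hfin : 2*(1+t)/(ρ*σ^2) * R + 2*t*(1+t)/(ρ*σ^2) * R ≤ 1 := by
      rw [div_mul_eq_mul_div, div_mul_eq_mul_div, ← add_div, div_le_one hρσ2]
      have h1tσ : (1+t) * σ = 2*σ + 2*Mc := by rw [ht]; field_simp; ring
      have h16 : 16*(Mc^2+σ^2)*R ≤ ρ*σ^4 := by
        rw [div_le_iff₀ (by positivity)] at hρR; linarith only [hρR]
      have hgoalσ : (2*(1+t)*R + 2*t*(1+t)*R)*σ^2 ≤ (ρ*σ^2)*σ^2 := by
        have hexp2 : (2*(1+t)*R + 2*t*(1+t)*R)*σ^2 = 2*R*((1+t)*σ)^2 := by ring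
        rw [hexp2, h1tσ]
        linarith only [h16, mul_nonneg (show (0:ℝ) ≤ R by linarith only [hR]) (sq_nonneg (σ - Mc))]
      exact le_of_mul_le_mul_right hgoalσ (by positivity)
    calc ∑ j ∈ Finset.range N, Rt j
        = 2*(1+t)/(ρ*σ^2) * (∑ j ∈ Finset.range N, ‖r (j+2)‖^2)
          + 2*t*(1+t)/(ρ*σ^2) * (∑ j ∈ Finset.range N, ‖r (j+1)‖^2) := hexp
    _ ≤ 2*(1+t)/(ρ*σ^2) * R + 2*t*(1+t)/(ρ*σ^2) * R := by
        exact add_le_add (mul_le_mul_of_nonneg_left hsum1 hcoef1)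
          (mul_le_mul_of_nonneg_left hsum2 hcoef2)
    _ ≤ 1 := hfin
  -- the boundedness induction
  have hind : ∀ k, x k ∈ S ∧ x (k+1) ∈ S ∧ W k ≤ W 0 + ∑ j ∈ Finset.range k, Rt j := by
    intro k
    induction k with
    | zero => exact ⟨hx0S, hx1S, by simp⟩
    | succ k ih =>
      obtain ⟨hk0, hk1, hkW⟩ := ih
      have hlmC := hlam2 k hk0 hk1
      have hWk : W k ≤ W 0 + 1 := le_trans hkW (by linarith only [hRtsum k])
      have hVk1 : V (k+1) ≤ W k := by
        have h9 := hWs k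
        linarith only [h9, mul_nonneg hβ.le (sq_nonneg ‖x (k+1) - x k‖)]
      have hd : AL f c ρ (x (k+2)) (lam (k+1)) + β / 2 * ‖x (k+2) - x (k+1)‖ ^ 2
          ≤ AL f c ρ (x (k+1)) (lam (k+1)) := hdecr (k+1)
      have hVeq : AL f c ρ (x (k+1)) (lam (k+1)) = V (k+1) := by simp only [hV]
      rw [hVeq] at hd
      have hlow := hALlow (x (k+2)) (lam (k+1))
      have hq9 : 9 * ‖lam 0‖ ^ 2 / ρ ≤ 9 * ‖lam 0‖ ^ 2 :=
        div_le_self (by positivity) hρ1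
      have hk2 : x (k+2) ∈ S := by
        rw [hS]
        show f (x (k+2)) + ρ₀ / 2 * ‖c (x (k+2))‖ ^ 2 ≤ αhat
        linarith only [hlow, hlmC, hd, hVk1, hWk, hW0b, hV0b, hULbar, hq9, hC₀, hαhat,
          sq_nonneg ‖lam 0‖, mul_nonneg hβ.le (sq_nonneg ‖x (k+2) - x (k+1)‖)]
      have hstepk := hstep k hk1 hk2
      refine ⟨hk1, hk2, ?_⟩
      rw [Finset.sum_range_succ]
      linarith only [hstepk, hkW, mul_nonneg hβ.le (sq_nonneg ‖x (k+2) - x (k+1)‖)]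
  have hxS : ∀ k, x k ∈ S := fun k => (hind k).1
  -- lower bound for W
  have hWlb : ∀ k, Lbar - 1 ≤ W k := by
    intro k
    have hlmC := hlam2 k (hxS k) (hxS (k+1))
    have hlow := hALlow (x (k+1)) (lam (k+1))
    have hLb := hLbarle (x (k+1))
    have hVeq : AL f c ρ (x (k+1)) (lam (k+1)) = V (k+1) := by simp only [hV]
    rw [hVeq] at hlow
    have h9 := hWs k
    linarith only [h9, hlmC, hlow, hLb, mul_nonneg hβ.le (sq_nonneg ‖x (k+1) - x k‖)]
  -- telescoping
  have hdsumN : ∀ N, β/4 * ∑ k ∈ Finset.range N, ‖x (k+2) - x (k+1)‖^2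
      ≤ W 0 - W N + ∑ k ∈ Finset.range N, Rt k := by
    intro N
    induction N with
    | zero => simp
    | succ N ih =>
      have hs := hstep N (hxS (N+1)) (hxS (N+2))
      rw [Finset.sum_range_succ, Finset.sum_range_succ, mul_add]
      linarith only [ih, hs]
  have hdsum : ∀ N, ∑ k ∈ Finset.range N, ‖x (k+2) - x (k+1)‖^2
      ≤ 4/β * (W 0 + 2 - Lbar) := by
    intro N
    have h1 := hdsumN N
    have h2 := hWlb N
    have h3 := hRtsum N
    have h4 : β/4 * ∑ k ∈ Finset.range N, ‖x (k+2) - x (k+1)‖^2 ≤ W 0 + 2 - Lbar := by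
      linarith only [h1, h2, h3]
    have h5 : ∑ k ∈ Finset.range N, ‖x (k+2) - x (k+1)‖^2
        = 4/β * (β/4 * ∑ k ∈ Finset.range N, ‖x (k+2) - x (k+1)‖^2) := by
      field_simp
    rw [h5]
    exact mul_le_mul_of_nonneg_left h4 (by positivity)
  -- summability and limits
  have hdsummable : Summable (fun k => ‖x (k+2) - x (k+1)‖^2) :=
    summable_of_sum_range_le (fun k => sq_nonneg _) hdsum
  have hd2to0 : Tendsto (fun k => ‖x (k+2) - x (k+1)‖^2) atTop (𝓝 0) :=
    hdsummable.tendsto_atTop_zero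
  have sqrt_trick : ∀ (u : ℕ → EuclideanSpace ℝ (Fin n)),
      Tendsto (fun k => ‖u k‖^2) atTop (𝓝 0) → Tendsto u atTop (𝓝 0) := by
    intro u hu
    rw [tendsto_zero_iff_norm_tendsto_zero]
    have h2 := (Real.continuous_sqrt.tendsto 0).comp hu
    simp only [Function.comp_def, Real.sqrt_zero] at h2
    convert h2 using 2 with k
    rw [Real.sqrt_sq (norm_nonneg _)]
  have sqrt_trickm : ∀ (u : ℕ → EuclideanSpace ℝ (Fin m)),
      Tendsto (fun k => ‖u k‖^2) atTop (𝓝 0) → Tendsto u atTop (𝓝 0) := by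
    intro u hu
    rw [tendsto_zero_iff_norm_tendsto_zero]
    have h2 := (Real.continuous_sqrt.tendsto 0).comp hu
    simp only [Function.comp_def, Real.sqrt_zero] at h2
    convert h2 using 2 with k
    rw [Real.sqrt_sq (norm_nonneg _)]
  have hdvec2 : Tendsto (fun k => x (k+2) - x (k+1)) atTop (𝓝 0) := sqrt_trick _ hd2to0
  have hdvec : Tendsto (fun k => x (k+1) - x k) atTop (𝓝 0) := by
    rw [← tendsto_add_atTop_iff_nat 1]
    exact hdvec2
  have hrsummable : Summable (fun k => ‖r (k+1)‖^2) :=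
    summable_of_sum_range_le (fun k => sq_nonneg _) hRsum
  have hr2to0 : Tendsto (fun k => ‖r (k+1)‖^2) atTop (𝓝 0) :=
    hrsummable.tendsto_atTop_zero
  have hrvec : Tendsto (fun k => r (k+1)) atTop (𝓝 0) := by
    apply sqrt_trick _ hr2to0
  have hr2to0' : Tendsto (fun k => ‖r (k+2)‖^2) atTop (𝓝 0) := by
    rw [show (fun k => ‖r (k+2)‖^2) = (fun k => ‖r (k+1)‖^2) ∘ (fun k => k + 1) from rfl]
    exact hr2to0.comp (tendsto_add_atTop_nat 1)
  have hRtto0 : Tendsto Rt atTop (𝓝 0) := by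
    have h1 := (hr2to0'.const_mul (2*(1+t)/(ρ*σ^2))).add
      (hr2to0.const_mul (2*t*(1+t)/(ρ*σ^2)))
    simp only [mul_zero, add_zero] at h1
    rw [hRt]
    exact h1
  have hd1to0 : Tendsto (fun k => ‖x (k+1) - x k‖^2) atTop (𝓝 0) := by
    have h1 := (hdvec.norm).pow 2
    simpa using h1
  have hcto0 : Tendsto (fun k => c (x k)) atTop (𝓝 0) := by
    have key : ∀ k, ρ * ‖c (x (k+2))‖ ^ 2
        ≤ β/8 * (‖x (k+2) - x (k+1)‖^2 + ‖x (k+1) - x k‖^2) + Rt k :=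
      fun k => hdlam k (hxS _) (hxS _)
    have hub : Tendsto (fun k => β/8 * (‖x (k+2) - x (k+1)‖^2 + ‖x (k+1) - x k‖^2) + Rt k)
        atTop (𝓝 0) := by
      have h1 := ((hd2to0.add hd1to0).const_mul (β/8)).add hRtto0
      simpa using h1
    have h0 : Tendsto (fun k => ρ * ‖c (x (k+2))‖ ^ 2) atTop (𝓝 0) :=
      squeeze_zero (fun k => by positivity) key hub
    have h1 : Tendsto (fun k => ‖c (x (k+2))‖ ^ 2) atTop (𝓝 0) := by
      apply squeeze_zero (fun k => sq_nonneg _) (fun k => ?_) h0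
      nlinarith only [hρ1, sq_nonneg ‖c (x (k+2))‖]
    have h2 : Tendsto (fun k => c (x (k+2))) atTop (𝓝 0) :=
      sqrt_trickm (fun k => c (x (k+2))) h1
    rw [← tendsto_add_atTop_iff_nat 2]
    exact h2
  -- compactness and subsequence
  have hlamball : ∀ k, lam (k+1) ∈ Metric.closedBall (0 : EuclideanSpace ℝ (Fin m)) (Λσ/σ) := by
    intro k
    rw [Metric.mem_closedBall, dist_zero_right]
    have h1 := hlamb k (hxS k) (hxS (k+1))
    rw [le_div_iff₀ hσ]
    linarith only [h1]
  have hK : IsCompact (S ×ˢ Metric.closedBall (0 : EuclideanSpace ℝ (Fin m)) (Λσ/σ)) :=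
    hSco.prod (isCompact_closedBall _ _)
  have hmemK : ∀ k, ((x (k+1), lam (k+1)) :
      EuclideanSpace ℝ (Fin n) × EuclideanSpace ℝ (Fin m))
      ∈ S ×ˢ Metric.closedBall (0 : EuclideanSpace ℝ (Fin m)) (Λσ/σ) :=
    fun k => ⟨hxS (k+1), hlamball k⟩
  obtain ⟨⟨xs, ls⟩, hmemKs, ψ, hψmono, hψtend⟩ := hK.tendsto_subseq hmemK
  have hψat : Tendsto ψ atTop atTop := hψmono.tendsto_atTop
  refine ⟨xs, ls, fun k => ψ k + 1, ?_, fun k => Nat.succ_le_succ (Nat.zero_le _), ?_, ?_, ?_⟩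
  · intro a b hab
    have h9 := hψmono hab
    show ψ a + 1 < ψ b + 1
    omega
  · exact hψtend
  · have heq : ∀ k, gradient f (x (k+1)) + gradc c (x (k+1)) (lam (k+1))
        = r (k+1) - β • (x (k+1) - x k) := by
      intro k; rw [hkey k]; abel
    have hGto0 : Tendsto (fun k => gradient f (x (k+1)) + gradc c (x (k+1)) (lam (k+1)))
        atTop (𝓝 0) := by
      have h2 : Tendsto (fun k => r (k+1) - β • (x (k+1) - x k)) atTop (𝓝 0) := by
        have h3 := hrvec.sub (hdvec.const_smul β)
        simpa using h3
      simpa only [heq] using h2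
    have h1 : Tendsto (fun k => gradient f (x (ψ k + 1)) + gradc c (x (ψ k + 1)) (lam (ψ k + 1)))
        atTop (𝓝 0) := hGto0.comp hψat
    have hcont : Continuous (fun p : EuclideanSpace ℝ (Fin n) × EuclideanSpace ℝ (Fin m) =>
        gradient f p.1 + gradc c p.1 p.2) := (hgradf.comp continuous_fst).add hgradc2
    have h2 : Tendsto (fun k => gradient f (x (ψ k + 1)) + gradc c (x (ψ k + 1)) (lam (ψ k + 1)))
        atTop (𝓝 (gradient f xs + gradc c xs ls)) := (hcont.tendsto _).comp hψtend
    exact tendsto_nhds_unique h2 h1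
  · have h1 : Tendsto (fun k => c (x (ψ k + 1))) atTop (𝓝 0) :=
      (hcto0.comp (tendsto_add_atTop_nat 1)).comp hψat
    have h2 : Tendsto (fun k => c (x (ψ k + 1))) atTop (𝓝 (c xs)) :=
      ((hcc.comp continuous_fst).tendsto _).comp hψtend
    exact tendsto_nhds_unique h2 h1
end

section
/- Under the hypotheses of the first-order complexity theorem for Proximal AL, and assuming additionally that ρ ≥ ‖λ₀‖²/2 + ρ₀, define for each k ≥ 0 the subproblem objective ψ_k(x) = L_ρ(x, λ_k) + (β/2)‖x − x_k‖². Then for every k ≥ 0: the sublevel set {x : ψ_k(x) ≤ ψ_k(x_k)} is contained in S⁰_α̂ (hence is compact), and ψ_k(x_k) − inf_{x ∈ ℝⁿ} ψ_k(x) ≤ α̂ − L̄. -/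
open Filter Topology

private lemma amgm (L t Dv : ℝ) (h : 0 < Dv) :
    L * t ≤ L ^ 2 / (2 * Dv) + Dv / 2 * t ^ 2 := by
  rw [← sub_nonneg]
  have key : L ^ 2 / (2 * Dv) + Dv / 2 * t ^ 2 - L * t = (L - Dv * t) ^ 2 / (2 * Dv) := by
    field_simp
    ring
  rw [key]
  exact div_nonneg (sq_nonneg _) (by linarith)

private lemma split3 (p q w : ℝ) : (p + q + w) ^ 2 ≤ 4 * p ^ 2 + 4 * q ^ 2 + 2 * w ^ 2 := by
  nlinarith [sq_nonneg (p + q - w), sq_nonneg (p - q)]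

private lemma split2 (y z μ : ℝ) (h : 0 ≤ μ) :
    (y + μ * z) ^ 2 ≤ (1 + μ) * (y ^ 2 + μ * z ^ 2) := by
  nlinarith [mul_nonneg h (sq_nonneg (y - z))]

private lemma div_mono_den (a b c : ℝ) (ha : 0 ≤ a) (hc : 0 < c) (h : c ≤ b) :
    a / b ≤ a / c := by
  rw [div_le_div_iff₀ (lt_of_lt_of_le hc h) hc]
  exact mul_le_mul_of_nonneg_left h ha

set_option maxHeartbeats 4000000 in
theorem stmt9
    {n m : ℕ}
    (f : EuclideanSpace ℝ (Fin n) → ℝ) (c : EuclideanSpace ℝ (Fin n) → EuclideanSpace ℝ (Fin m))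
    (hf : ContDiff ℝ 2 f) (hc : ContDiff ℝ 2 c)
    (ρ β : ℝ) (hρ : 0 < ρ) (hβ : 0 < β)
    (x : ℕ → EuclideanSpace ℝ (Fin n)) (lam : ℕ → EuclideanSpace ℝ (Fin m)) (r : ℕ → EuclideanSpace ℝ (Fin n))
    (hstat : ∀ k : ℕ,
      gradient f (x (k+1)) + gradc c (x (k+1)) (lam k)
        + ρ • gradc c (x (k+1)) (c (x (k+1))) + β • (x (k+1) - x k) = r (k+1))
    (hdecr : ∀ k : ℕ,
      AL f c ρ (x (k+1)) (lam k) + β / 2 * ‖x (k+1) - x k‖ ^ 2 ≤ AL f c ρ (x k) (lam k))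
    (hmul : ∀ k : ℕ, lam (k+1) = lam k + ρ • c (x (k+1)))
    (ρ₀ Lbar U C₀ αhat : ℝ) (hρ₀ : 0 ≤ ρ₀)
    (hcompact : ∀ α : ℝ,
      {y : EuclideanSpace ℝ (Fin n) | f y + ρ₀ / 2 * ‖c y‖ ^ 2 ≤ α} = ∅ ∨
        IsCompact {y : EuclideanSpace ℝ (Fin n) | f y + ρ₀ / 2 * ‖c y‖ ^ 2 ≤ α})
    (hLbar : Lbar = ⨅ y : EuclideanSpace ℝ (Fin n), (f y + ρ₀ / 2 * ‖c y‖ ^ 2))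
    (hU : ∀ y : EuclideanSpace ℝ (Fin n), ‖c y‖ ≤ 1 → f y ≤ U)
    (hC₀ : 0 < C₀)
    (hαhat : αhat = 7 * U + 7 * C₀ - 6 * Lbar + 13 * ‖lam 0‖ ^ 2 + 2)
    (S : Set (EuclideanSpace ℝ (Fin n)))
    (hS : S = {y : EuclideanSpace ℝ (Fin n) | f y + ρ₀ / 2 * ‖c y‖ ^ 2 ≤ αhat})
    (Mf Lf Mc σ Lc DS : ℝ) (hσ : 0 < σ)
    (hMf : ∀ y ∈ S, ‖gradient f y‖ ≤ Mf)
    (hLf : ∀ y ∈ S, ∀ z ∈ S, ‖gradient f y - gradient f z‖ ≤ Lf * ‖y - z‖)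
    (hMc : ∀ y ∈ S, ‖fderiv ℝ c y‖ ≤ Mc)
    (hσlb : ∀ y ∈ S, ∀ v : EuclideanSpace ℝ (Fin m), σ * ‖v‖ ≤ ‖gradc c y v‖)
    (hLc : ∀ y ∈ S, ∀ z ∈ S, ‖fderiv ℝ c y - fderiv ℝ c z‖ ≤ Lc * ‖y - z‖)
    (hDS : DS = Metric.diam S)
    (C1 C2 : ℝ)
    (hC1 : C1 = 4 / σ ^ 2 * (Lf + Lc * Mf / σ + β) ^ 2)
    (hC2 : C2 = 4 / σ ^ 2 * (β + 2 * Mc * β / σ) ^ 2)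
    (ε η : ℝ) (hε : 0 < ε ∧ ε ≤ 1) (hη : 0 ≤ η ∧ η ≤ 2)
    (R : ℝ) (hR : 1 ≤ R)
    (hRsum : ∀ K : ℕ, ∑ k ∈ Finset.range K, ‖r (k+1)‖ ^ 2 ≤ R)
    (hrb : ∀ k : ℕ, 1 ≤ k → ‖r k‖ ≤ ε / 2)
    (hβdef : β = ε ^ η / 2)
    (hρbig : max (max (16 * max C1 C2 / ε ^ η)
        ((Mf + β * DS + 1) ^ 2 / (2 * σ ^ 2) + ρ₀))
        (max (max (16 * (Mc ^ 2 + σ ^ 2) * R / σ ^ 4) (3 * ρ₀)) 1) ≤ ρ)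
    (hx0 : ‖c (x 0)‖ ^ 2 ≤ min (C₀ / ρ) 1)
    (hρextra : ‖lam 0‖ ^ 2 / 2 + ρ₀ ≤ ρ) :
    ∀ k : ℕ,
      {y : EuclideanSpace ℝ (Fin n) | AL f c ρ y (lam k) + β / 2 * ‖y - x k‖ ^ 2 ≤ AL f c ρ (x k) (lam k)} ⊆ S ∧
      AL f c ρ (x k) (lam k)
        - (⨅ y : EuclideanSpace ℝ (Fin n), (AL f c ρ y (lam k) + β / 2 * ‖y - x k‖ ^ 2)) ≤ αhat - Lbar := by
  obtain ⟨hε0, hε1⟩ := hε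
  obtain ⟨hη0, -⟩ := hη
  have hβ0 : (0:ℝ) ≤ β := hβ.le
  have hσne : σ ≠ 0 := ne_of_gt hσ
  have hρne : ρ ≠ 0 := ne_of_gt hρ
  have hεη0 : (0:ℝ) < ε ^ η := Real.rpow_pos_of_pos hε0 η
  have hεη1 : ε ^ η ≤ 1 := Real.rpow_le_one hε0.le hε1 hη0
  have hβhalf : β ≤ 1/2 := by rw [hβdef]; linarith only [hεη1]
  -- extract the individual lower bounds on ρ
  have h1 := le_trans (le_max_left _ _) hρbig
  have h2 := le_trans (le_max_right _ _) hρbig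
  have hρC : 16 * max C1 C2 / ε ^ η ≤ ρ := le_trans (le_max_left _ _) h1
  have hρN : (Mf + β * DS + 1) ^ 2 / (2 * σ ^ 2) + ρ₀ ≤ ρ := le_trans (le_max_right _ _) h1
  have hρR : 16 * (Mc ^ 2 + σ ^ 2) * R / σ ^ 4 ≤ ρ :=
    le_trans (le_trans (le_max_left _ _) (le_max_left _ _)) h2
  have hρ3 : 3 * ρ₀ ≤ ρ := le_trans (le_trans (le_max_right _ _) (le_max_left _ _)) h2
  have hρ1 : (1:ℝ) ≤ ρ := le_trans (le_max_right _ _) h2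
  have hD : 0 < ρ - ρ₀ := by linarith only [hρ1, hρ3, hρ₀]
  have hC12 : max C1 C2 ≤ ρ * β / 8 := by
    rw [div_le_iff₀ hεη0] at hρC
    have hb : ρ * β / 8 = ρ * ε ^ η / 16 := by rw [hβdef]; ring
    rw [hb]; linarith only [hρC]
  have hC1ρ : C1 ≤ ρ * β / 8 := le_trans (le_max_left _ _) hC12
  have hC2ρ : C2 ≤ ρ * β / 8 := le_trans (le_max_right _ _) hC12
  -- global lower bound by Lbar
  have hLb : ∀ y, Lbar ≤ f y + ρ₀ / 2 * ‖c y‖ ^ 2 := by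
    have hcont : Continuous fun y : EuclideanSpace ℝ (Fin n) => f y + ρ₀ / 2 * ‖c y‖ ^ 2 :=
      (hf.continuous).add (continuous_const.mul ((hc.continuous.norm).pow 2))
    have h0 : (0 : EuclideanSpace ℝ (Fin n)) ∈
        {y : EuclideanSpace ℝ (Fin n) | f y + ρ₀ / 2 * ‖c y‖ ^ 2 ≤ f 0 + ρ₀ / 2 * ‖c 0‖ ^ 2} :=
      Set.mem_setOf_eq ▸ le_rfl
    rcases hcompact (f 0 + ρ₀ / 2 * ‖c 0‖ ^ 2) with hemp | hcpt
    · exact absurd (hemp ▸ h0) (Set.notMem_empty _)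
    · obtain ⟨z, hzmem, hzmin⟩ := hcpt.exists_isMinOn ⟨0, h0⟩ hcont.continuousOn
      rw [isMinOn_iff] at hzmin
      have hlb : ∀ y, f z + ρ₀ / 2 * ‖c z‖ ^ 2 ≤ f y + ρ₀ / 2 * ‖c y‖ ^ 2 := by
        intro y
        by_cases hy : f y + ρ₀ / 2 * ‖c y‖ ^ 2 ≤ f 0 + ρ₀ / 2 * ‖c 0‖ ^ 2
        · exact hzmin y hy
        · exact le_trans (hzmin 0 h0) (le_of_not_ge hy)
      intro y
      rw [hLbar]
      exact ciInf_le ⟨f z + ρ₀ / 2 * ‖c z‖ ^ 2, by rintro w ⟨y, rfl⟩; exact hlb y⟩ y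
  -- pointwise lower bound for the proximal AL objective
  have hψlow : ∀ (l : EuclideanSpace ℝ (Fin m)) (y xk : EuclideanSpace ℝ (Fin n)),
      f y + ρ₀ / 2 * ‖c y‖ ^ 2 - ‖l‖ ^ 2 / (2 * (ρ - ρ₀)) ≤
        AL f c ρ y l + β / 2 * ‖y - xk‖ ^ 2 := by
    intro l y xk
    have h1 := (abs_le.mp (abs_real_inner_le_norm l (c y))).1
    have h2 := amgm ‖l‖ ‖c y‖ (ρ - ρ₀) hD
    have h3 : (0:ℝ) ≤ β / 2 * ‖y - xk‖ ^ 2 :=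
      mul_nonneg (by linarith only [hβ0]) (sq_nonneg _)
    simp only [AL]
    linarith only [h1, h2, h3]
  -- membership criterion from the "star" inequality
  have hstarset : ∀ k : ℕ,
      AL f c ρ (x k) (lam k) + ‖lam k‖ ^ 2 / (2 * (ρ - ρ₀)) ≤ αhat →
      {y : EuclideanSpace ℝ (Fin n) |
        AL f c ρ y (lam k) + β / 2 * ‖y - x k‖ ^ 2 ≤ AL f c ρ (x k) (lam k)} ⊆ S := by
    intro k hstar y hy
    rw [hS]
    simp only [Set.mem_setOf_eq] at hy ⊢
    have hp := hψlow (lam k) y (x k)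
    linarith only [hp, hy, hstar]
  -- basic facts about the initial point
  have hx0c : ‖c (x 0)‖ ^ 2 ≤ C₀ / ρ := le_trans hx0 (min_le_left _ _)
  have hx0c1 : ‖c (x 0)‖ ≤ 1 := by
    have h := le_trans hx0 (min_le_right _ _)
    nlinarith only [h, norm_nonneg (c (x 0))]
  have hfx0 : f (x 0) ≤ U := hU _ hx0c1
  have hρc0 : ρ * ‖c (x 0)‖ ^ 2 ≤ C₀ := by
    rw [le_div_iff₀ hρ] at hx0c; linarith only [hx0c]
  have hρ₀c0 : ρ₀ * ‖c (x 0)‖ ^ 2 ≤ C₀ / 3 := by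
    have ha := mul_le_mul_of_nonneg_left hx0c hρ₀
    have hb : ρ₀ / ρ ≤ 1/3 := by
      rw [div_le_div_iff₀ hρ (by norm_num : (0:ℝ) < 3)]; linarith only [hρ3]
    have hcc : ρ₀ * (C₀ / ρ) = ρ₀ / ρ * C₀ := by ring
    have hdd : ρ₀ / ρ * C₀ ≤ 1/3 * C₀ := mul_le_mul_of_nonneg_right hb hC₀.le
    linarith only [ha, hcc, hdd]
  have hULbar : Lbar ≤ U + C₀ / 6 := by
    have h1 := hLb (x 0)
    linarith only [h1, hρ₀c0, hfx0]
  have hx0S : x 0 ∈ S := by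
    rw [hS]
    simp only [Set.mem_setOf_eq]
    rw [hαhat]
    linarith only [hfx0, hρ₀c0, hULbar, hC₀, sq_nonneg ‖lam 0‖]
  have hMf0 : 0 ≤ Mf := le_trans (norm_nonneg _) (hMf _ hx0S)
  have hMc0 : 0 ≤ Mc := le_trans (norm_nonneg _) (hMc _ hx0S)
  have hScpt : IsCompact S := by
    rcases hcompact αhat with hemp | hcpt
    · have h0' := hx0S
      rw [hS] at h0'
      exact absurd (hemp ▸ h0') (Set.notMem_empty _)
    · rw [hS]; exact hcpt
  -- AL at x 0
  have hAL0bound : AL f c ρ (x 0) (lam 0) ≤ U + ‖lam 0‖ * ‖c (x 0)‖ + C₀ / 2 := by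
    simp only [AL]
    linarith only [real_inner_le_norm (lam 0) (c (x 0)), hfx0, hρc0]
  -- star at 0
  have hstar0 : AL f c ρ (x 0) (lam 0) + ‖lam 0‖ ^ 2 / (2 * (ρ - ρ₀)) ≤ αhat := by
    have hq : ‖lam 0‖ ^ 2 / (2 * (ρ - ρ₀)) ≤ ‖lam 0‖ ^ 2 :=
      div_le_self (sq_nonneg _) (by linarith only [hD, hρ1, hρ3, hρ₀])
    have hLe : ‖lam 0‖ * ‖c (x 0)‖ ≤ (‖lam 0‖ ^ 2 + 1) / 2 := by
      have h1 : ‖lam 0‖ * ‖c (x 0)‖ ≤ ‖lam 0‖ * 1 :=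
        mul_le_mul_of_nonneg_left hx0c1 (norm_nonneg _)
      nlinarith only [h1, sq_nonneg (‖lam 0‖ - 1)]
    rw [hαhat]
    linarith only [hq, hLe, hAL0bound, hULbar, hC₀, sq_nonneg ‖lam 0‖]
  -- rewritten stationarity
  have e1 : ∀ k : ℕ, gradc c (x (k+1)) (lam (k+1)) =
      r (k+1) - gradient f (x (k+1)) - β • (x (k+1) - x k) := by
    intro k
    have h := hstat k
    rw [hmul k, map_add, map_smul, ← h]
    abel
  -- multiplier norm bound
  have lamb : ∀ k : ℕ, x (k+1) ∈ S →
      σ * ‖lam (k+1)‖ ≤ Mf + ‖r (k+1)‖ + β * ‖x (k+1) - x k‖ := by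
    intro k hk
    have h0 := hσlb (x (k+1)) hk (lam (k+1))
    rw [e1 k] at h0
    have ht1 : ‖r (k+1) - gradient f (x (k+1)) - β • (x (k+1) - x k)‖ ≤
        ‖r (k+1)‖ + ‖gradient f (x (k+1))‖ + ‖β • (x (k+1) - x k)‖ :=
      le_trans (norm_sub_le _ _) (add_le_add (norm_sub_le _ _) le_rfl)
    have ht2 : ‖β • (x (k+1) - x k)‖ = β * ‖x (k+1) - x k‖ := by
      rw [norm_smul, Real.norm_eq_abs, abs_of_pos hβ]
    have ht3 := hMf _ hk
    rw [ht2] at ht1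
    linarith only [h0, ht1, ht3]
  -- AL dual update identity
  have ALstep : ∀ k : ℕ, AL f c ρ (x (k+1)) (lam (k+1)) =
      AL f c ρ (x (k+1)) (lam k) + ρ * ‖c (x (k+1))‖ ^ 2 := by
    intro k
    simp only [AL, hmul k, inner_add_left, real_inner_smul_left, real_inner_self_eq_norm_sq]
    ring
  -- the lambda-term bound for k ≥ 1
  have hlamterm : ∀ k : ℕ, x k ∈ S → x (k+1) ∈ S →
      ‖lam (k+1)‖ ^ 2 / (2 * (ρ - ρ₀)) ≤ 1 := by
    intro k hk hk1
    have hsb : ‖x (k+1) - x k‖ ≤ DS := by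
      rw [hDS, ← dist_eq_norm]
      exact Metric.dist_le_diam_of_mem hScpt.isBounded hk1 hk
    have hr : ‖r (k+1)‖ ≤ ε / 2 := hrb (k+1) (by omega)
    have h0 := lamb k hk1
    have hN : σ * ‖lam (k+1)‖ ≤ Mf + β * DS + 1 := by
      have hss : β * ‖x (k+1) - x k‖ ≤ β * DS := mul_le_mul_of_nonneg_left hsb hβ0
      linarith only [h0, hss, hr, hε1]
    have hN2 : (σ * ‖lam (k+1)‖) ^ 2 ≤ (Mf + β * DS + 1) ^ 2 :=
      pow_le_pow_left₀ (mul_nonneg hσ.le (norm_nonneg _)) hN 2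
    have hNρ : (Mf + β * DS + 1) ^ 2 ≤ (ρ - ρ₀) * (2 * σ ^ 2) := by
      have hh : (Mf + β * DS + 1) ^ 2 / (2 * σ ^ 2) ≤ ρ - ρ₀ := by linarith only [hρN]
      rw [div_le_iff₀ (by exact mul_pos (by norm_num) (pow_pos hσ 2))] at hh
      linarith only [hh]
    have hs2 : (0:ℝ) < σ ^ 2 := pow_pos hσ 2
    have hl2 : ‖lam (k+1)‖ ^ 2 ≤ 2 * (ρ - ρ₀) := by
      nlinarith only [hN2, hNρ, hs2, sq_nonneg ‖lam (k+1)‖]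
    rw [div_le_one (by linarith only [hD])]
    exact hl2
  -- constants
  obtain ⟨muv, hmuv⟩ : ∃ muv : ℝ, muv = 1 + 2 * Mc / σ := ⟨_, rfl⟩
  have hμ1 : 1 ≤ muv := by
    have hh : 0 ≤ 2 * Mc / σ := div_nonneg (by linarith only [hMc0]) hσ.le
    rw [hmuv]; linarith only [hh]
  have hμ0 : 0 ≤ muv := by linarith only [hμ1]
  obtain ⟨nu1, hnu1⟩ : ∃ nu1 : ℝ, nu1 = 2 * (1 + muv) / (σ ^ 2 * ρ) := ⟨_, rfl⟩
  obtain ⟨nu2, hnu2⟩ : ∃ nu2 : ℝ, nu2 = muv * nu1 := ⟨_, rfl⟩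
  have hnu10 : 0 ≤ nu1 := by
    rw [hnu1]
    exact div_nonneg (by linarith only [hμ0]) (le_of_lt (mul_pos (pow_pos hσ 2) hρ))
  have hnu20 : 0 ≤ nu2 := hnu2 ▸ mul_nonneg hμ0 hnu10
  have hνR : (nu1 + nu2) * R ≤ 1 := by
    have hρR' : 16 * (Mc ^ 2 + σ ^ 2) * R ≤ ρ * σ ^ 4 := by
      rw [div_le_iff₀ (pow_pos hσ 4)] at hρR
      linarith only [hρR]
    have hRnn : (0:ℝ) ≤ R := by linarith only [hR]
    have h8 : 8 * (σ + Mc) ^ 2 * R ≤ σ ^ 4 * ρ := by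
      nlinarith only [mul_nonneg hRnn (sq_nonneg (σ - Mc)), hρR']
    have heq2 : (nu1 + nu2) * R * (σ ^ 4 * ρ) = 8 * (σ + Mc) ^ 2 * R := by
      rw [hnu2, hnu1, hmuv]
      field_simp
      ring
    have hpos : (0:ℝ) < σ ^ 4 * ρ := mul_pos (pow_pos hσ 4) hρ
    have hle : (nu1 + nu2) * R * (σ ^ 4 * ρ) ≤ 1 * (σ ^ 4 * ρ) := by
      rw [heq2]; linarith only [h8]
    exact le_of_mul_le_mul_right hle hpos
  -- the key per-step estimate
  have keyA : ∀ K : ℕ, x K ∈ S → x (K+1) ∈ S → x (K+2) ∈ S →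
      ρ * ‖c (x (K+2))‖ ^ 2 ≤ β / 8 * ‖x (K+2) - x (K+1)‖ ^ 2 + β / 8 * ‖x (K+1) - x K‖ ^ 2
        + nu1 * ‖r (K+2)‖ ^ 2 + nu2 * ‖r (K+1)‖ ^ 2 := by
    intro K h0 h1 h2
    have eA : gradc c (x (K+2)) (lam (K+2)) =
        r (K+2) - gradient f (x (K+2)) - β • (x (K+2) - x (K+1)) := e1 (K+1)
    have eB : gradc c (x (K+1)) (lam (K+1)) =
        r (K+1) - gradient f (x (K+1)) - β • (x (K+1) - x K) := e1 K
    have hl1 : σ * ‖lam (K+1)‖ ≤ Mf + ‖r (K+1)‖ + β * ‖x (K+1) - x K‖ := lamb K h1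
    have hGdiff : gradc c (x (K+2)) (lam (K+1)) - gradc c (x (K+1)) (lam (K+1)) =
        (ContinuousLinearMap.adjoint (fderiv ℝ c (x (K+2)) - fderiv ℝ c (x (K+1)))) (lam (K+1)) := by
      simp only [gradc]
      rw [map_sub, ContinuousLinearMap.sub_apply]
    have hJd : ‖gradc c (x (K+2)) (lam (K+1)) - gradc c (x (K+1)) (lam (K+1))‖ ≤
        ‖fderiv ℝ c (x (K+2)) - fderiv ℝ c (x (K+1))‖ * ‖lam (K+1)‖ := by
      rw [hGdiff]
      calc ‖(ContinuousLinearMap.adjoint (fderiv ℝ c (x (K+2)) - fderiv ℝ c (x (K+1)))) (lam (K+1))‖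
          ≤ ‖ContinuousLinearMap.adjoint (fderiv ℝ c (x (K+2)) - fderiv ℝ c (x (K+1)))‖ * ‖lam (K+1)‖ :=
            ContinuousLinearMap.le_opNorm _ _
        _ = ‖fderiv ℝ c (x (K+2)) - fderiv ℝ c (x (K+1))‖ * ‖lam (K+1)‖ := by
            rw [LinearIsometryEquiv.norm_map]
    have hPLc : ‖fderiv ℝ c (x (K+2)) - fderiv ℝ c (x (K+1))‖ ≤ Lc * ‖x (K+2) - x (K+1)‖ :=
      hLc _ h2 _ h1
    have hP2Mc : ‖fderiv ℝ c (x (K+2)) - fderiv ℝ c (x (K+1))‖ ≤ 2 * Mc := by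
      have t0 := norm_sub_le (fderiv ℝ c (x (K+2))) (fderiv ℝ c (x (K+1)))
      have ta := hMc _ h2
      have tb := hMc _ h1
      linarith only [t0, ta, tb]
    have hT2 : ‖gradc c (x (K+2)) (lam (K+1)) - gradc c (x (K+1)) (lam (K+1))‖ ≤
        (Lc * ‖x (K+2) - x (K+1)‖ * Mf + 2 * Mc * ‖r (K+1)‖ + 2 * Mc * (β * ‖x (K+1) - x K‖)) / σ := by
      have hP0 : 0 ≤ ‖fderiv ℝ c (x (K+2)) - fderiv ℝ c (x (K+1))‖ := norm_nonneg _
      have hPL : σ * (‖fderiv ℝ c (x (K+2)) - fderiv ℝ c (x (K+1))‖ * ‖lam (K+1)‖) ≤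
          Lc * ‖x (K+2) - x (K+1)‖ * Mf + 2 * Mc * ‖r (K+1)‖ + 2 * Mc * (β * ‖x (K+1) - x K‖) := by
        have ha : ‖fderiv ℝ c (x (K+2)) - fderiv ℝ c (x (K+1))‖ * (σ * ‖lam (K+1)‖) ≤
            ‖fderiv ℝ c (x (K+2)) - fderiv ℝ c (x (K+1))‖ * (Mf + ‖r (K+1)‖ + β * ‖x (K+1) - x K‖) :=
          mul_le_mul_of_nonneg_left hl1 hP0
        have hb : ‖fderiv ℝ c (x (K+2)) - fderiv ℝ c (x (K+1))‖ * Mf ≤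
            Lc * ‖x (K+2) - x (K+1)‖ * Mf :=
          mul_le_mul_of_nonneg_right hPLc hMf0
        have hcx : ‖fderiv ℝ c (x (K+2)) - fderiv ℝ c (x (K+1))‖ * (‖r (K+1)‖ + β * ‖x (K+1) - x K‖) ≤
            2 * Mc * (‖r (K+1)‖ + β * ‖x (K+1) - x K‖) :=
          mul_le_mul_of_nonneg_right hP2Mc
            (add_nonneg (norm_nonneg _) (mul_nonneg hβ0 (norm_nonneg _)))
        nlinarith only [ha, hb, hcx]
      rw [le_div_iff₀ hσ]
      have hJdσ := mul_le_mul_of_nonneg_right hJd hσ.le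
      nlinarith only [hJdσ, hPL]
    have hsm : ρ • c (x (K+2)) = lam (K+2) - lam (K+1) := by
      have hm2 : lam (K+2) = lam (K+1) + ρ • c (x (K+2)) := hmul (K+1)
      rw [hm2]; abel
    have hsl := hσlb (x (K+2)) h2 (ρ • c (x (K+2)))
    rw [norm_smul, Real.norm_eq_abs, abs_of_pos hρ] at hsl
    rw [hsm, map_sub] at hsl
    have hveq : gradc c (x (K+2)) (lam (K+2)) - gradc c (x (K+2)) (lam (K+1)) =
        (r (K+2) - r (K+1)) - (gradient f (x (K+2)) - gradient f (x (K+1)))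
        - (β • (x (K+2) - x (K+1)) - β • (x (K+1) - x K))
        - (gradc c (x (K+2)) (lam (K+1)) - gradc c (x (K+1)) (lam (K+1))) := by
      rw [eA, eB]
      abel
    have htr : ‖gradc c (x (K+2)) (lam (K+2)) - gradc c (x (K+2)) (lam (K+1))‖ ≤
        (‖r (K+2)‖ + ‖r (K+1)‖) + Lf * ‖x (K+2) - x (K+1)‖
          + (β * ‖x (K+2) - x (K+1)‖ + β * ‖x (K+1) - x K‖)
          + (Lc * ‖x (K+2) - x (K+1)‖ * Mf + 2 * Mc * ‖r (K+1)‖ + 2 * Mc * (β * ‖x (K+1) - x K‖)) / σ := by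
      rw [hveq]
      have t1 : ‖r (K+2) - r (K+1)‖ ≤ ‖r (K+2)‖ + ‖r (K+1)‖ := norm_sub_le _ _
      have t2 : ‖gradient f (x (K+2)) - gradient f (x (K+1))‖ ≤ Lf * ‖x (K+2) - x (K+1)‖ :=
        hLf _ h2 _ h1
      have t3 : ‖β • (x (K+2) - x (K+1)) - β • (x (K+1) - x K)‖ ≤
          β * ‖x (K+2) - x (K+1)‖ + β * ‖x (K+1) - x K‖ := by
        have t3a := norm_sub_le (β • (x (K+2) - x (K+1))) (β • (x (K+1) - x K))
        simp only [norm_smul, Real.norm_eq_abs, abs_of_pos hβ] at t3a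
        exact t3a
      have s1 : ‖(r (K+2) - r (K+1)) - (gradient f (x (K+2)) - gradient f (x (K+1)))
            - (β • (x (K+2) - x (K+1)) - β • (x (K+1) - x K))
            - (gradc c (x (K+2)) (lam (K+1)) - gradc c (x (K+1)) (lam (K+1)))‖ ≤
          ‖(r (K+2) - r (K+1)) - (gradient f (x (K+2)) - gradient f (x (K+1)))
            - (β • (x (K+2) - x (K+1)) - β • (x (K+1) - x K))‖
            + ‖gradc c (x (K+2)) (lam (K+1)) - gradc c (x (K+1)) (lam (K+1))‖ := norm_sub_le _ _
      have s2 : ‖(r (K+2) - r (K+1)) - (gradient f (x (K+2)) - gradient f (x (K+1)))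
            - (β • (x (K+2) - x (K+1)) - β • (x (K+1) - x K))‖ ≤
          ‖(r (K+2) - r (K+1)) - (gradient f (x (K+2)) - gradient f (x (K+1)))‖
            + ‖β • (x (K+2) - x (K+1)) - β • (x (K+1) - x K)‖ := norm_sub_le _ _
      have s3 : ‖(r (K+2) - r (K+1)) - (gradient f (x (K+2)) - gradient f (x (K+1)))‖ ≤
          ‖r (K+2) - r (K+1)‖ + ‖gradient f (x (K+2)) - gradient f (x (K+1))‖ := norm_sub_le _ _
      linarith only [s1, s2, s3, t1, t2, t3, hT2]
    have hdivσ : (Lc * ‖x (K+2) - x (K+1)‖ * Mf + 2 * Mc * ‖r (K+1)‖ + 2 * Mc * (β * ‖x (K+1) - x K‖)) / σ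
        = (Lc * Mf / σ) * ‖x (K+2) - x (K+1)‖ + (2 * Mc * β / σ) * ‖x (K+1) - x K‖
          + (2 * Mc / σ) * ‖r (K+1)‖ := by
      field_simp
      ring
    rw [hdivσ] at htr
    have hcnorm : σ * (ρ * ‖c (x (K+2))‖) ≤
        (Lf + Lc * Mf / σ + β) * ‖x (K+2) - x (K+1)‖ + (β + 2 * Mc * β / σ) * ‖x (K+1) - x K‖
          + (‖r (K+2)‖ + muv * ‖r (K+1)‖) := by
      have hchain := le_trans hsl htr
      rw [hmuv]
      linarith only [hchain]
    have hXnn : 0 ≤ σ * (ρ * ‖c (x (K+2))‖) :=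
      mul_nonneg hσ.le (mul_nonneg hρ.le (norm_nonneg _))
    have hsq : (σ * (ρ * ‖c (x (K+2))‖)) ^ 2 ≤
        ((Lf + Lc * Mf / σ + β) * ‖x (K+2) - x (K+1)‖ + (β + 2 * Mc * β / σ) * ‖x (K+1) - x K‖
          + (‖r (K+2)‖ + muv * ‖r (K+1)‖)) ^ 2 :=
      pow_le_pow_left₀ hXnn hcnorm 2
    have hXsq := split3 ((Lf + Lc * Mf / σ + β) * ‖x (K+2) - x (K+1)‖)
      ((β + 2 * Mc * β / σ) * ‖x (K+1) - x K‖) (‖r (K+2)‖ + muv * ‖r (K+1)‖)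
    have hW := split2 ‖r (K+2)‖ ‖r (K+1)‖ muv hμ0
    have hW2 : 2 * (‖r (K+2)‖ + muv * ‖r (K+1)‖) ^ 2 ≤
        2 * ((1 + muv) * (‖r (K+2)‖ ^ 2 + muv * ‖r (K+1)‖ ^ 2)) := by linarith only [hW]
    have hZ1 : 4 * (Lf + Lc * Mf / σ + β) ^ 2 ≤ σ ^ 2 * (ρ * β / 8) := by
      have he : σ ^ 2 * C1 = 4 * (Lf + Lc * Mf / σ + β) ^ 2 := by
        rw [hC1]; field_simp
      have hh := mul_le_mul_of_nonneg_left hC1ρ (sq_nonneg σ)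
      rw [he] at hh
      exact hh
    have hZ2 : 4 * (β + 2 * Mc * β / σ) ^ 2 ≤ σ ^ 2 * (ρ * β / 8) := by
      have he : σ ^ 2 * C2 = 4 * (β + 2 * Mc * β / σ) ^ 2 := by
        rw [hC2]; field_simp
      have hh := mul_le_mul_of_nonneg_left hC2ρ (sq_nonneg σ)
      rw [he] at hh
      exact hh
    have hA1 : 4 * (Lf + Lc * Mf / σ + β) ^ 2 * ‖x (K+2) - x (K+1)‖ ^ 2 ≤
        σ ^ 2 * (ρ * β / 8) * ‖x (K+2) - x (K+1)‖ ^ 2 :=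
      mul_le_mul_of_nonneg_right hZ1 (sq_nonneg _)
    have hA2 : 4 * (β + 2 * Mc * β / σ) ^ 2 * ‖x (K+1) - x K‖ ^ 2 ≤
        σ ^ 2 * (ρ * β / 8) * ‖x (K+1) - x K‖ ^ 2 :=
      mul_le_mul_of_nonneg_right hZ2 (sq_nonneg _)
    have hA3 : 2 * ((1 + muv) * (‖r (K+2)‖ ^ 2 + muv * ‖r (K+1)‖ ^ 2)) =
        (σ ^ 2 * ρ) * (nu1 * ‖r (K+2)‖ ^ 2 + nu2 * ‖r (K+1)‖ ^ 2) := by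
      rw [hnu2, hnu1]
      field_simp
    have hσ2ρ : (0:ℝ) < σ ^ 2 * ρ := mul_pos (pow_pos hσ 2) hρ
    have hlhs : (σ ^ 2 * ρ) * (ρ * ‖c (x (K+2))‖ ^ 2) = (σ * (ρ * ‖c (x (K+2))‖)) ^ 2 := by
      ring
    have hrhs : σ ^ 2 * (ρ * β / 8) * ‖x (K+2) - x (K+1)‖ ^ 2
        + σ ^ 2 * (ρ * β / 8) * ‖x (K+1) - x K‖ ^ 2
        + (σ ^ 2 * ρ) * (nu1 * ‖r (K+2)‖ ^ 2 + nu2 * ‖r (K+1)‖ ^ 2) =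
        (σ ^ 2 * ρ) * (β / 8 * ‖x (K+2) - x (K+1)‖ ^ 2 + β / 8 * ‖x (K+1) - x K‖ ^ 2
          + nu1 * ‖r (K+2)‖ ^ 2 + nu2 * ‖r (K+1)‖ ^ 2) := by
      ring
    have hfin : (σ ^ 2 * ρ) * (ρ * ‖c (x (K+2))‖ ^ 2) ≤
        (σ ^ 2 * ρ) * (β / 8 * ‖x (K+2) - x (K+1)‖ ^ 2 + β / 8 * ‖x (K+1) - x K‖ ^ 2
          + nu1 * ‖r (K+2)‖ ^ 2 + nu2 * ‖r (K+1)‖ ^ 2) := by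
      linarith only [hsq, hXsq, hW2, hA1, hA2, hA3, hlhs, hrhs]
    exact le_of_mul_le_mul_left hfin hσ2ρ
  -- bound on ρ‖c(x 1)‖²
  have hc1bound : ρ * ‖c (x 1)‖ ^ 2 ≤
      6 * (AL f c ρ (x 0) (lam 0) - Lbar + ‖lam 0‖ ^ 2 / (ρ - ρ₀)) := by
    have hd0 : AL f c ρ (x 1) (lam 0) + β / 2 * ‖x 1 - x 0‖ ^ 2 ≤ AL f c ρ (x 0) (lam 0) :=
      hdecr 0
    have hALx1 : AL f c ρ (x 1) (lam 0) =
        f (x 1) + (inner ℝ (lam 0) (c (x 1)) : ℝ) + ρ / 2 * ‖c (x 1)‖ ^ 2 := rfl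
    rw [hALx1] at hd0
    have hflow := hLb (x 1)
    have hin := (abs_le.mp (abs_real_inner_le_norm (lam 0) (c (x 1)))).1
    have hq := amgm ‖lam 0‖ ‖c (x 1)‖ ((ρ - ρ₀)/2) (by linarith only [hD])
    have hden : 2 * ((ρ - ρ₀)/2) = ρ - ρ₀ := by ring
    rw [hden] at hq
    have hβs : (0:ℝ) ≤ β / 2 * ‖x 1 - x 0‖ ^ 2 :=
      mul_nonneg (by linarith only [hβ0]) (sq_nonneg _)
    have hquad : (ρ - ρ₀) / 4 * ‖c (x 1)‖ ^ 2 ≤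
        AL f c ρ (x 0) (lam 0) - Lbar + ‖lam 0‖ ^ 2 / (ρ - ρ₀) := by
      linarith only [hd0, hflow, hin, hq, hβs]
    nlinarith only [hquad, sq_nonneg ‖c (x 1)‖, hρ3]
  obtain ⟨E0c, hE0c⟩ : ∃ E0c : ℝ, E0c = AL f c ρ (x 0) (lam 0)
      + 6 * (AL f c ρ (x 0) (lam 0) - Lbar + ‖lam 0‖ ^ 2 / (ρ - ρ₀)) := ⟨_, rfl⟩
  -- final arithmetic: E0c + 2 ≤ αhat
  have hfinalE : E0c + 2 ≤ αhat := by
    have hq1 : ‖lam 0‖ * ‖c (x 0)‖ ≤ ‖lam 0‖ ^ 2 / (2 * ρ) + ρ / 2 * ‖c (x 0)‖ ^ 2 :=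
      amgm _ _ ρ hρ
    have hq2 : ‖lam 0‖ ^ 2 / (2 * ρ) ≤ ‖lam 0‖ ^ 2 / 2 :=
      div_mono_den _ _ _ (sq_nonneg _) (by norm_num) (by linarith only [hρ1])
    have hq3 : ‖lam 0‖ ^ 2 / (ρ - ρ₀) ≤ ‖lam 0‖ ^ 2 / (2/3) :=
      div_mono_den _ _ _ (sq_nonneg _) (by norm_num)
        (by linarith only [hρ1, hρ3, hρ₀])
    have hq4 : ‖lam 0‖ ^ 2 / (2/3 : ℝ) = 3/2 * ‖lam 0‖ ^ 2 := by ring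
    rw [hq4] at hq3
    rw [hE0c, hαhat]
    linarith only [hAL0bound, hq1, hq2, hq3, hρc0, hC₀, hULbar, sq_nonneg ‖lam 0‖]
  -- how to get star from the invariant
  have hstarfromJ : ∀ K : ℕ, x K ∈ S → x (K+1) ∈ S →
      AL f c ρ (x (K+1)) (lam (K+1)) + 3 * β / 8 * ‖x (K+1) - x K‖ ^ 2 ≤
        E0c + nu1 * (∑ j ∈ Finset.range (K+1), ‖r (j+1)‖ ^ 2)
          + nu2 * (∑ j ∈ Finset.range K, ‖r (j+1)‖ ^ 2) →
      AL f c ρ (x (K+1)) (lam (K+1)) + ‖lam (K+1)‖ ^ 2 / (2 * (ρ - ρ₀)) ≤ αhat := by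
    intro K h0 h1 hJ
    have hterm := hlamterm K h0 h1
    have hs1 : nu1 * (∑ j ∈ Finset.range (K+1), ‖r (j+1)‖ ^ 2) ≤ nu1 * R :=
      mul_le_mul_of_nonneg_left (hRsum _) hnu10
    have hs2 : nu2 * (∑ j ∈ Finset.range K, ‖r (j+1)‖ ^ 2) ≤ nu2 * R :=
      mul_le_mul_of_nonneg_left (hRsum _) hnu20
    have hsum : nu1 * R + nu2 * R = (nu1 + nu2) * R := by ring
    have h38 : (0:ℝ) ≤ 3 * β / 8 * ‖x (K+1) - x K‖ ^ 2 :=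
      mul_nonneg (by linarith only [hβ0]) (sq_nonneg _)
    linarith only [hJ, hterm, hs1, hs2, hsum, h38, hfinalE, hνR]
  -- the main induction
  have hInv : ∀ K : ℕ, (∀ j, j ≤ K+1 → x j ∈ S) ∧
      (AL f c ρ (x (K+1)) (lam (K+1)) + 3 * β / 8 * ‖x (K+1) - x K‖ ^ 2 ≤
        E0c + nu1 * (∑ j ∈ Finset.range (K+1), ‖r (j+1)‖ ^ 2)
          + nu2 * (∑ j ∈ Finset.range K, ‖r (j+1)‖ ^ 2)) := by
    intro K
    induction K with
    | zero =>
      have hx1S : x 1 ∈ S := by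
        apply hstarset 0 hstar0
        simp only [Set.mem_setOf_eq]
        exact hdecr 0
      constructor
      · intro j hj
        match j, hj with
        | 0, _ => exact hx0S
        | 1, _ => exact hx1S
      · show AL f c ρ (x 1) (lam 1) + 3 * β / 8 * ‖x 1 - x 0‖ ^ 2 ≤
          E0c + nu1 * (∑ j ∈ Finset.range 1, ‖r (j+1)‖ ^ 2)
            + nu2 * (∑ j ∈ Finset.range 0, ‖r (j+1)‖ ^ 2)
        have hAL1 : AL f c ρ (x 1) (lam 1) = AL f c ρ (x 1) (lam 0) + ρ * ‖c (x 1)‖ ^ 2 :=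
          ALstep 0
        have hd0 : AL f c ρ (x 1) (lam 0) + β / 2 * ‖x 1 - x 0‖ ^ 2 ≤ AL f c ρ (x 0) (lam 0) :=
          hdecr 0
        have hsum1 : (∑ j ∈ Finset.range 1, ‖r (j+1)‖ ^ 2) = ‖r 1‖ ^ 2 :=
          Finset.sum_range_one (f := fun j => ‖r (j+1)‖ ^ 2)
        have hsum0 : (∑ j ∈ Finset.range 0, ‖r (j+1)‖ ^ 2) = (0:ℝ) :=
          Finset.sum_range_zero _
        rw [hsum1, hsum0, hE0c]
        have hr1 : 0 ≤ nu1 * ‖r 1‖ ^ 2 := mul_nonneg hnu10 (sq_nonneg _)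
        have hb8 : (0:ℝ) ≤ β / 8 * ‖x 1 - x 0‖ ^ 2 :=
          mul_nonneg (by linarith only [hβ0]) (sq_nonneg _)
        linarith only [hAL1, hd0, hc1bound, hr1, hb8]
    | succ K ih =>
      obtain ⟨hmem, hJ⟩ := ih
      have hxK : x K ∈ S := hmem K (by omega)
      have hxK1 : x (K+1) ∈ S := hmem (K+1) (by omega)
      have hstarK1 : AL f c ρ (x (K+1)) (lam (K+1)) + ‖lam (K+1)‖ ^ 2 / (2 * (ρ - ρ₀)) ≤ αhat :=
        hstarfromJ K hxK hxK1 hJ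
      have hxK2 : x (K+2) ∈ S := by
        apply hstarset (K+1) hstarK1
        simp only [Set.mem_setOf_eq]
        exact hdecr (K+1)
      constructor
      · intro j hj
        rcases Nat.lt_or_ge j (K+2) with hlt | hge
        · exact hmem j (by omega)
        · have hje : j = K+2 := by omega
          rw [hje]; exact hxK2
      · show AL f c ρ (x (K+2)) (lam (K+2)) + 3 * β / 8 * ‖x (K+2) - x (K+1)‖ ^ 2 ≤
          E0c + nu1 * (∑ j ∈ Finset.range (K+2), ‖r (j+1)‖ ^ 2)
            + nu2 * (∑ j ∈ Finset.range (K+1), ‖r (j+1)‖ ^ 2)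
        have hkey := keyA K hxK hxK1 hxK2
        have hALs : AL f c ρ (x (K+2)) (lam (K+2)) =
            AL f c ρ (x (K+2)) (lam (K+1)) + ρ * ‖c (x (K+2))‖ ^ 2 := ALstep (K+1)
        have hd : AL f c ρ (x (K+2)) (lam (K+1)) + β / 2 * ‖x (K+2) - x (K+1)‖ ^ 2 ≤
            AL f c ρ (x (K+1)) (lam (K+1)) := hdecr (K+1)
        have hsum1 : (∑ j ∈ Finset.range (K+2), ‖r (j+1)‖ ^ 2) =
            (∑ j ∈ Finset.range (K+1), ‖r (j+1)‖ ^ 2) + ‖r (K+2)‖ ^ 2 :=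
          Finset.sum_range_succ _ (K+1)
        have hsum2 : (∑ j ∈ Finset.range (K+1), ‖r (j+1)‖ ^ 2) =
            (∑ j ∈ Finset.range K, ‖r (j+1)‖ ^ 2) + ‖r (K+1)‖ ^ 2 :=
          Finset.sum_range_succ _ K
        have hb : (0:ℝ) ≤ β * ‖x (K+1) - x K‖ ^ 2 := mul_nonneg hβ0 (sq_nonneg _)
        have hsum1' : nu1 * (∑ j ∈ Finset.range (K+2), ‖r (j+1)‖ ^ 2) =
            nu1 * (∑ j ∈ Finset.range (K+1), ‖r (j+1)‖ ^ 2) + nu1 * ‖r (K+2)‖ ^ 2 := by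
          rw [hsum1]; ring
        have hsum2' : nu2 * (∑ j ∈ Finset.range (K+1), ‖r (j+1)‖ ^ 2) =
            nu2 * (∑ j ∈ Finset.range K, ‖r (j+1)‖ ^ 2) + nu2 * ‖r (K+1)‖ ^ 2 := by
          rw [hsum2]; ring
        linarith only [hJ, hkey, hALs, hd, hsum1', hsum2', hb]
  -- the star inequality for all k
  have hstarA : ∀ k : ℕ, AL f c ρ (x k) (lam k) + ‖lam k‖ ^ 2 / (2 * (ρ - ρ₀)) ≤ αhat := by
    intro k
    cases k with
    | zero => exact hstar0
    | succ K =>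
      obtain ⟨hmem, hJ⟩ := hInv K
      exact hstarfromJ K (hmem K (by omega)) (hmem (K+1) (by omega)) hJ
  -- conclude
  intro k
  constructor
  · exact hstarset k (hstarA k)
  · have hInfLB : Lbar - ‖lam k‖ ^ 2 / (2 * (ρ - ρ₀)) ≤
        ⨅ y : EuclideanSpace ℝ (Fin n), (AL f c ρ y (lam k) + β / 2 * ‖y - x k‖ ^ 2) := by
      apply le_ciInf
      intro y
      linarith only [hψlow (lam k) y (x k), hLb y]
    linarith only [hstarA k, hInfLB]
end

section
/- Let x* ∈ ℝⁿ with c(x*) = 0 and δ > 0 be such that x* is the unique global minimizer of x ↦ f(x) + (1/4)‖x − x*‖⁴ over the set {x : c(x) = 0, ‖x − x*‖ ≤ δ}. Let (ρ_k) be a positive sequence with ρ_k → ∞, and for each k let x_k be a global minimizer of x ↦ f(x) + (ρ_k/2)‖c(x)‖² + (1/4)‖x − x*‖⁴ over the closed ball {x : ‖x − x*‖ ≤ δ}. Then (ρ_k/2)‖c(x_k)‖² ≤ f(x*) − f(x_k) for every k, and x_k → x* (every accumulation point of (x_k) equals x*). -/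
open Filter Topology

theorem stmt11 {n m : ℕ}
    (f : EuclideanSpace ℝ (Fin n) → ℝ) (c : EuclideanSpace ℝ (Fin n) → EuclideanSpace ℝ (Fin m))
    (hf : Continuous f) (hc : Continuous c)
    (xstar : EuclideanSpace ℝ (Fin n)) (hfeas : c xstar = 0) (δ : ℝ) (hδ : 0 < δ)
    (hmin : ∀ y : EuclideanSpace ℝ (Fin n), c y = 0 → ‖y - xstar‖ ≤ δ →
      f xstar ≤ f y + 1 / 4 * ‖y - xstar‖ ^ 4)
    (huniq : ∀ y : EuclideanSpace ℝ (Fin n), c y = 0 → ‖y - xstar‖ ≤ δ →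
      f y + 1 / 4 * ‖y - xstar‖ ^ 4 ≤ f xstar → y = xstar)
    (ρ : ℕ → ℝ) (hρpos : ∀ k, 0 < ρ k) (hρtop : Tendsto ρ atTop atTop)
    (x : ℕ → EuclideanSpace ℝ (Fin n))
    (hxball : ∀ k, ‖x k - xstar‖ ≤ δ)
    (hxmin : ∀ k, ∀ y : EuclideanSpace ℝ (Fin n), ‖y - xstar‖ ≤ δ →
      f (x k) + ρ k / 2 * ‖c (x k)‖ ^ 2 + 1 / 4 * ‖x k - xstar‖ ^ 4
        ≤ f y + ρ k / 2 * ‖c y‖ ^ 2 + 1 / 4 * ‖y - xstar‖ ^ 4) :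
    (∀ k, ρ k / 2 * ‖c (x k)‖ ^ 2 ≤ f xstar - f (x k)) ∧
    Tendsto x atTop (𝓝 xstar) := by
  -- key inequality from plugging y = xstar
  have key : ∀ k, f (x k) + ρ k / 2 * ‖c (x k)‖ ^ 2 + 1 / 4 * ‖x k - xstar‖ ^ 4
      ≤ f xstar := by
    intro k
    have h := hxmin k xstar (by simp [hδ.le])
    simpa [hfeas] using h
  have part1 : ∀ k, ρ k / 2 * ‖c (x k)‖ ^ 2 ≤ f xstar - f (x k) := by
    intro k
    have h4 : 0 ≤ 1 / 4 * ‖x k - xstar‖ ^ 4 := by positivity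
    nlinarith [key k]
  refine ⟨part1, ?_⟩
  -- the sequence lies in the compact closed ball
  set S := Metric.closedBall xstar δ with hS
  have hScompact : IsCompact S := isCompact_closedBall xstar δ
  have hxS : ∀ k, x k ∈ S := by
    intro k
    simpa [hS, Metric.mem_closedBall, dist_eq_norm] using hxball k
  -- f bounded below on S
  obtain ⟨z, hzS, hzmin⟩ := hScompact.exists_isMinOn ⟨xstar, by
    simp [hS, Metric.mem_closedBall, hδ.le]⟩ hf.continuousOn
  -- c (x k) → 0
  have hbound : ∀ k, ‖c (x k)‖ ^ 2 ≤ 2 * (f xstar - f z) / ρ k := by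
    intro k
    have h1 := part1 k
    have h2 : f z ≤ f (x k) := isMinOn_iff.mp hzmin _ (hxS k)
    have h3 : 0 < ρ k := hρpos k
    rw [le_div_iff₀ h3]
    nlinarith
  have hsq : Tendsto (fun k => ‖c (x k)‖ ^ 2) atTop (𝓝 0) := by
    have hub : Tendsto (fun k => 2 * (f xstar - f z) / ρ k) atTop (𝓝 0) :=
      Tendsto.div_atTop tendsto_const_nhds hρtop
    refine squeeze_zero (fun k => by positivity) hbound hub
  have hnorm : Tendsto (fun k => ‖c (x k)‖) atTop (𝓝 0) := by
    have := (Real.continuous_sqrt.tendsto 0).comp hsq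
    simpa [Function.comp_def, Real.sqrt_sq (norm_nonneg _)] using this
  have hc0 : Tendsto (fun k => c (x k)) atTop (𝓝 0) :=
    tendsto_zero_iff_norm_tendsto_zero.mpr hnorm
  -- key2 : drop the penalty term
  have key2 : ∀ k, f (x k) + 1 / 4 * ‖x k - xstar‖ ^ 4 ≤ f xstar := by
    intro k
    have h4 : 0 ≤ ρ k / 2 * ‖c (x k)‖ ^ 2 :=
      mul_nonneg (by linarith [hρpos k]) (by positivity)
    nlinarith [key k]
  -- subsequence argument
  apply Filter.tendsto_of_subseq_tendsto
  intro ns hns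
  obtain ⟨a, haS, φ, hφ, hlim⟩ := hScompact.tendsto_subseq (fun j => hxS (ns j))
  refine ⟨φ, ?_⟩
  have hnsφ : Tendsto (fun j => ns (φ j)) atTop atTop := hns.comp hφ.tendsto_atTop
  -- c a = 0
  have hca : c a = 0 := by
    have h1 : Tendsto (fun j => c (x (ns (φ j)))) atTop (𝓝 (c a)) :=
      (hc.tendsto a).comp hlim
    have h2 : Tendsto (fun j => c (x (ns (φ j)))) atTop (𝓝 0) := hc0.comp hnsφ
    exact tendsto_nhds_unique h1 h2
  have haball : ‖a - xstar‖ ≤ δ := by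
    simpa [hS, Metric.mem_closedBall, dist_eq_norm] using haS
  -- limit of f + quartic
  have hFcont : Continuous fun y : EuclideanSpace ℝ (Fin n) =>
      f y + 1 / 4 * ‖y - xstar‖ ^ 4 :=
    hf.add (continuous_const.mul (((continuous_id.sub continuous_const).norm).pow 4))
  have hFa : f a + 1 / 4 * ‖a - xstar‖ ^ 4 ≤ f xstar := by
    have h1 : Tendsto (fun j => f (x (ns (φ j))) + 1 / 4 * ‖x (ns (φ j)) - xstar‖ ^ 4)
        atTop (𝓝 (f a + 1 / 4 * ‖a - xstar‖ ^ 4)) := (hFcont.tendsto a).comp hlim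
    exact le_of_tendsto h1 (Eventually.of_forall fun j => key2 (ns (φ j)))
  have : a = xstar := huniq a hca haball hFa
  rw [this] at hlim
  exact hlim
end

section
/- Let x*, x ∈ ℝⁿ, ρ > 0, B ≥ 0, and suppose: (a) ∇f(x) + ρ∇c(x)c(x) + ‖x − x*‖²(x − x*) = 0; (b) for every d ∈ ℝⁿ, dᵀ∇²f(x)d + ρΣ_{i=1}^m c_i(x)·dᵀ∇²c_i(x)d + ρ‖∇c(x)ᵀd‖² + 2(dᵀ(x − x*))² + ‖x − x*‖²‖d‖² ≥ 0; and (c) (ρ/2)‖c(x)‖² ≤ B. Define λ = ρ c(x) and ε = max{‖x − x*‖³, 3‖x − x*‖², √(2B/ρ)}. Then ‖∇f(x) + ∇c(x)λ‖ ≤ ε, ‖c(x)‖ ≤ ε, and dᵀ(∇²f(x) + Σ_{i=1}^m λ_i∇²c_i(x))d ≥ −ε‖d‖² for every d ∈ ℝⁿ with ∇c(x)ᵀd = 0; that is, x is an ε-approximate second-order KKT point of min f subject to c = 0. -/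
open Filter Topology

theorem stmt12 {n m : ℕ}
    (f : EuclideanSpace ℝ (Fin n) → ℝ) (c : EuclideanSpace ℝ (Fin n) → EuclideanSpace ℝ (Fin m))
    (hf : ContDiff ℝ 2 f) (hc : ContDiff ℝ 2 c)
    (xstar x : EuclideanSpace ℝ (Fin n)) (ρ B : ℝ) (hρ : 0 < ρ) (hB : 0 ≤ B)
    (ha : gradient f x + ρ • gradc c x (c x) + ‖x - xstar‖ ^ 2 • (x - xstar) = 0)
    (hb : ∀ d : EuclideanSpace ℝ (Fin n),
      0 ≤ hess f x d + ρ * ∑ i, c x i * hess (fun y => c y i) x d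
        + ρ * ‖fderiv ℝ c x d‖ ^ 2 + 2 * (inner ℝ d (x - xstar) : ℝ) ^ 2
        + ‖x - xstar‖ ^ 2 * ‖d‖ ^ 2)
    (hcbd : ρ / 2 * ‖c x‖ ^ 2 ≤ B) :
    ‖gradient f x + gradc c x (ρ • c x)‖
        ≤ max (max (‖x - xstar‖ ^ 3) (3 * ‖x - xstar‖ ^ 2)) (Real.sqrt (2 * B / ρ)) ∧
    ‖c x‖ ≤ max (max (‖x - xstar‖ ^ 3) (3 * ‖x - xstar‖ ^ 2)) (Real.sqrt (2 * B / ρ)) ∧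
    ∀ d : EuclideanSpace ℝ (Fin n), fderiv ℝ c x d = 0 →
      -(max (max (‖x - xstar‖ ^ 3) (3 * ‖x - xstar‖ ^ 2)) (Real.sqrt (2 * B / ρ))) * ‖d‖ ^ 2
        ≤ hess f x d + ∑ i, (ρ * c x i) * hess (fun y => c y i) x d := by
  set ε := max (max (‖x - xstar‖ ^ 3) (3 * ‖x - xstar‖ ^ 2)) (Real.sqrt (2 * B / ρ)) with hε
  refine ⟨?_, ?_, ?_⟩
  · have h1 : gradient f x + gradc c x (ρ • c x) = -(‖x - xstar‖ ^ 2 • (x - xstar)) := by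
      rw [map_smul]
      linear_combination (norm := module) ha
    rw [h1, norm_neg, norm_smul]
    have : ‖(‖x - xstar‖ ^ 2 : ℝ)‖ * ‖x - xstar‖ = ‖x - xstar‖ ^ 3 := by
      rw [Real.norm_of_nonneg (by positivity)]; ring
    rw [this]
    exact le_trans (le_max_left _ _) (le_max_left _ _)
  · have h2 : ‖c x‖ ≤ Real.sqrt (2 * B / ρ) := by
      rw [show (2 : ℝ) * B / ρ = 2 / ρ * B by ring]
      have : ‖c x‖ ^ 2 ≤ 2 / ρ * B := by
        rw [div_mul_eq_mul_div, le_div_iff₀ hρ]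
        nlinarith
      calc ‖c x‖ = Real.sqrt (‖c x‖ ^ 2) := by
            rw [Real.sqrt_sq (norm_nonneg _)]
        _ ≤ Real.sqrt (2 / ρ * B) := Real.sqrt_le_sqrt this
    exact le_trans h2 (le_max_right _ _)
  · intro d hd
    have hb' := hb d
    rw [hd] at hb'
    simp only [norm_zero] at hb'
    have hcs : (inner ℝ d (x - xstar) : ℝ) ^ 2 ≤ ‖x - xstar‖ ^ 2 * ‖d‖ ^ 2 := by
      have := abs_real_inner_le_norm d (x - xstar)
      nlinarith [abs_nonneg (inner ℝ d (x - xstar) : ℝ), sq_abs (inner ℝ d (x - xstar) : ℝ)]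
    have h3 : 3 * ‖x - xstar‖ ^ 2 ≤ ε := le_trans (le_max_right _ _) (le_max_left _ _)
    have hsum : ∑ i, (ρ * c x i) * hess (fun y => c y i) x d
        = ρ * ∑ i, c x i * hess (fun y => c y i) x d := by
      rw [Finset.mul_sum]; congr 1; ext i; ring
    rw [hsum]
    nlinarith [sq_nonneg ‖d‖, mul_le_mul_of_nonneg_right h3 (sq_nonneg ‖d‖)]
end

section
/- Under the hypotheses of the boundedness lemma for Proximal AL with in addition c₁ = β/4 − C₁/ρ > 0 and c₂ = β/4 − C₂/ρ > 0, the Lyapunov values are uniformly bounded: P_{k+1} ≤ P₁ + 1 for every k ≥ 1, where P_k = L_ρ(x_k, λ_k) + (β/4)‖x_k − x_{k−1}‖²; and consequently the subproblem objective values satisfy ψ_k(x_k) = L_ρ(x_k, λ_k) ≤ α̂ − 1 for every k ≥ 0, where ψ_k(x) = L_ρ(x, λ_k) + (β/2)‖x − x_k‖². -/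
open Filter Topology

private lemma key_sq {l s q1 q2 : ℝ} (hl : 0 ≤ l) (h : l ≤ s + q1 + q2) :
    l^2 ≤ 2*s^2 + 4*q1^2 + 4*q2^2 := by
  nlinarith [mul_le_mul h h hl (by linarith : (0:ℝ) ≤ s + q1 + q2),
    sq_nonneg (s - q1 - q2), sq_nonneg (q1 - q2)]


private lemma young_ineq {a b s : ℝ} (hs : 0 < s) : a*b - s/2*b^2 ≤ a^2/(2*s) := by
  rw [le_div_iff₀ (by linarith : (0:ℝ) < 2*s)]
  nlinarith [sq_nonneg (a - s*b)]

private lemma pt_sq {u v γ : ℝ} (hγ : 0 ≤ γ) :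
    (u + γ*v)^2 ≤ (1+γ)*u^2 + (γ+γ^2)*v^2 := by
  nlinarith [mul_nonneg hγ (sq_nonneg (u - v))]

private lemma base_pen {ρ ρ₀ Cn L0 B Lb : ℝ} (h1 : 1 ≤ ρ) (h30 : 3*ρ₀ ≤ ρ)
    (H : Lb - ρ₀/2*Cn^2 - L0*Cn + ρ/2*Cn^2 ≤ B) :
    ρ*Cn^2 ≤ 6*(B - Lb) + 9*L0^2 := by
  nlinarith [sq_nonneg (Cn - 3*L0),
    mul_nonneg (by linarith : (0:ℝ) ≤ 2*ρ-3*ρ₀-1) (sq_nonneg Cn)]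

private lemma sum_num {Mc σ ρ R Z : ℝ} (hσ : 0 < σ) (hR : 0 ≤ R)
    (h16 : 16*(Mc^2+σ^2)*R ≤ ρ*σ^4)
    (hZ : Z ≤ (1+(1+2*Mc/σ))*R + ((1+2*Mc/σ)+(1+2*Mc/σ)^2)*R) :
    2*Z ≤ ρ*σ^2 := by
  have hσ2 : (0:ℝ) < σ^2 := by positivity
  have m0 : Z ≤ (2+2*Mc/σ)^2*R := by linarith [hZ]
  have m1 : 2*Z*σ^2 ≤ 2*((2+2*Mc/σ)^2*R)*σ^2 := by
    linarith [mul_le_mul_of_nonneg_left m0 (by positivity : (0:ℝ) ≤ 2*σ^2)]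
  have e1 : (2+2*Mc/σ)^2*σ^2 = (2*σ+2*Mc)^2 := by field_simp
  have m2 : 2*((2+2*Mc/σ)^2*R)*σ^2 = 2*(2*σ+2*Mc)^2*R := by
    rw [show 2*((2+2*Mc/σ)^2*R)*σ^2 = 2*((2+2*Mc/σ)^2*σ^2)*R from by ring, e1]
  have e2 : 2*(2*σ+2*Mc)^2*R ≤ 16*(Mc^2+σ^2)*R := by
    nlinarith [mul_nonneg hR (sq_nonneg (Mc-σ))]
  have m3 : 2*Z*σ^2 ≤ (ρ*σ^2)*σ^2 := by rw [m2] at m1; linarith [m1, e2, h16]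
  exact le_of_mul_le_mul_right m3 hσ2

set_option maxHeartbeats 4000000 in
theorem stmt14
    {n m : ℕ}
    (f : EuclideanSpace ℝ (Fin n) → ℝ) (c : EuclideanSpace ℝ (Fin n) → EuclideanSpace ℝ (Fin m))
    (hf : ContDiff ℝ 2 f) (hc : ContDiff ℝ 2 c)
    (ρ β : ℝ) (hρ : 0 < ρ) (hβ : 0 < β)
    (x : ℕ → EuclideanSpace ℝ (Fin n)) (lam : ℕ → EuclideanSpace ℝ (Fin m)) (r : ℕ → EuclideanSpace ℝ (Fin n))
    (hstat : ∀ k : ℕ,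
      gradient f (x (k+1)) + gradc c (x (k+1)) (lam k)
        + ρ • gradc c (x (k+1)) (c (x (k+1))) + β • (x (k+1) - x k) = r (k+1))
    (hdecr : ∀ k : ℕ,
      AL f c ρ (x (k+1)) (lam k) + β / 2 * ‖x (k+1) - x k‖ ^ 2 ≤ AL f c ρ (x k) (lam k))
    (hmul : ∀ k : ℕ, lam (k+1) = lam k + ρ • c (x (k+1)))
    (R : ℝ)
    (hRsum : ∀ K : ℕ, ∑ k ∈ Finset.range K, ‖r (k+1)‖ ^ 2 ≤ R)
    (hrb : ∀ k : ℕ, 1 ≤ k → ‖r k‖ ≤ 1)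
    (ρ₀ Lbar U C₀ αhat : ℝ) (hρ₀ : 0 ≤ ρ₀)
    (hcompact : ∀ α : ℝ,
      {y : EuclideanSpace ℝ (Fin n) | f y + ρ₀ / 2 * ‖c y‖ ^ 2 ≤ α} = ∅ ∨
        IsCompact {y : EuclideanSpace ℝ (Fin n) | f y + ρ₀ / 2 * ‖c y‖ ^ 2 ≤ α})
    (hLbar : Lbar = ⨅ y : EuclideanSpace ℝ (Fin n), (f y + ρ₀ / 2 * ‖c y‖ ^ 2))
    (hU : ∀ y : EuclideanSpace ℝ (Fin n), ‖c y‖ ≤ 1 → f y ≤ U)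
    (hC₀ : 0 < C₀)
    (hαhat : αhat = 7 * U + 7 * C₀ - 6 * Lbar + 13 * ‖lam 0‖ ^ 2 + 2)
    (S : Set (EuclideanSpace ℝ (Fin n)))
    (hS : S = {y : EuclideanSpace ℝ (Fin n) | f y + ρ₀ / 2 * ‖c y‖ ^ 2 ≤ αhat})
    (Mf Lf Mc σ Lc DS : ℝ) (hσ : 0 < σ)
    (hMf : ∀ y ∈ S, ‖gradient f y‖ ≤ Mf)
    (hLf : ∀ y ∈ S, ∀ z ∈ S, ‖gradient f y - gradient f z‖ ≤ Lf * ‖y - z‖)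
    (hMc : ∀ y ∈ S, ‖fderiv ℝ c y‖ ≤ Mc)
    (hσlb : ∀ y ∈ S, ∀ v : EuclideanSpace ℝ (Fin m), σ * ‖v‖ ≤ ‖gradc c y v‖)
    (hLc : ∀ y ∈ S, ∀ z ∈ S, ‖fderiv ℝ c y - fderiv ℝ c z‖ ≤ Lc * ‖y - z‖)
    (hDS : DS = Metric.diam S)
    (hρbig : max (max ((Mf + β * DS + 1) ^ 2 / (2 * σ ^ 2) + ρ₀)
        (16 * (Mc ^ 2 + σ ^ 2) * R / σ ^ 4)) (max (3 * ρ₀) 1) ≤ ρ)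
    (C1 C2 : ℝ)
    (hC1 : C1 = 4 / σ ^ 2 * (Lf + Lc * Mf / σ + β) ^ 2)
    (hC2 : C2 = 4 / σ ^ 2 * (β + 2 * Mc * β / σ) ^ 2)
    (hc₁pos : 0 < β / 4 - C1 / ρ) (hc₂pos : 0 < β / 4 - C2 / ρ)
    (hx0 : ‖c (x 0)‖ ^ 2 ≤ min (C₀ / ρ) 1)
 :
    (∀ k : ℕ, 1 ≤ k →
      AL f c ρ (x (k+1)) (lam (k+1)) + β / 4 * ‖x (k+1) - x k‖ ^ 2
        ≤ (AL f c ρ (x 1) (lam 1) + β / 4 * ‖x 1 - x 0‖ ^ 2) + 1) ∧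
    (∀ k : ℕ, AL f c ρ (x k) (lam k) ≤ αhat - 1) := by
  classical
  have hσ2 : (0:ℝ) < σ^2 := by positivity
  have hρ1 : (1:ℝ) ≤ ρ := le_trans (le_trans (le_max_right _ _) (le_max_right _ _)) hρbig
  have hρρ₀ : 3*ρ₀ ≤ ρ := le_trans (le_trans (le_max_left _ _) (le_max_right _ _)) hρbig
  have hρA : (Mf + β*DS + 1)^2/(2*σ^2) + ρ₀ ≤ ρ :=
    le_trans (le_trans (le_max_left _ _) (le_max_left _ _)) hρbig
  have hρR : 16*(Mc^2+σ^2)*R/σ^4 ≤ ρ :=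
    le_trans (le_trans (le_max_right _ _) (le_max_left _ _)) hρbig
  have hR0 : 0 ≤ R := by simpa using hRsum 0
  have hs : (0:ℝ) < ρ - ρ₀ := by linarith
  have hs23 : (2:ℝ)/3 ≤ ρ - ρ₀ := by linarith
  -- lower bound on the proximal function
  have hg_lb : ∀ y, Lbar ≤ f y + ρ₀ / 2 * ‖c y‖ ^ 2 := by
    have hgc : Continuous fun y => f y + ρ₀ / 2 * ‖c y‖ ^ 2 :=
      (hf.continuous).add (continuous_const.mul ((hc.continuous.norm).pow 2))
    have hne : x 0 ∈ {y : EuclideanSpace ℝ (Fin n) |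
        f y + ρ₀ / 2 * ‖c y‖ ^ 2 ≤ f (x 0) + ρ₀ / 2 * ‖c (x 0)‖ ^ 2} := by simp only [Set.mem_setOf_eq]; exact le_refl _
    have hcomp := (hcompact (f (x 0) + ρ₀ / 2 * ‖c (x 0)‖ ^ 2)).resolve_left
      (by intro h; rw [h] at hne; exact hne)
    obtain ⟨z, hzmem, hzmin⟩ := hcomp.exists_isMinOn ⟨x 0, hne⟩ hgc.continuousOn
    have hlow : ∀ y, f z + ρ₀ / 2 * ‖c z‖ ^ 2 ≤ f y + ρ₀ / 2 * ‖c y‖ ^ 2 := by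
      intro y
      by_cases hy : f y + ρ₀ / 2 * ‖c y‖ ^ 2 ≤ f (x 0) + ρ₀ / 2 * ‖c (x 0)‖ ^ 2
      · exact hzmin hy
      · exact le_trans (hzmin hne) (le_of_not_ge hy)
    intro y
    rw [hLbar]
    exact ciInf_le ⟨_, by rintro w ⟨y', rfl⟩; exact hlow y'⟩ y
  -- basic facts about x 0
  have hcx0C : ‖c (x 0)‖^2 ≤ C₀/ρ := hx0.trans (min_le_left _ _)
  have hcx01 : ‖c (x 0)‖ ≤ 1 := by
    have h1 : ‖c (x 0)‖^2 ≤ 1 := hx0.trans (min_le_right _ _)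
    nlinarith [norm_nonneg (c (x 0))]
  have hfx0 : f (x 0) ≤ U := hU _ hcx01
  have hgx0 : f (x 0) + ρ₀ / 2 * ‖c (x 0)‖ ^ 2 ≤ U + C₀/6 := by
    have h2 : ρ₀*‖c (x 0)‖^2 ≤ ρ₀*(C₀/ρ) := mul_le_mul_of_nonneg_left hcx0C hρ₀
    have h3 : ρ₀*(C₀/ρ) ≤ C₀/3 := by
      rw [show ρ₀*(C₀/ρ) = ρ₀*C₀/ρ by ring, div_le_div_iff₀ hρ (by norm_num : (0:ℝ)<3)]
      linarith [mul_le_mul_of_nonneg_right hρρ₀ hC₀.le]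
    linarith
  have hLbar6 : Lbar ≤ U + C₀/6 := (hg_lb (x 0)).trans hgx0
  have hx0S : x 0 ∈ S := by
    rw [hS]
    simp only [Set.mem_setOf_eq]
    rw [hαhat] at *
    have := sq_nonneg ‖lam 0‖
    linarith
  have hMf0 : 0 ≤ Mf := le_trans (norm_nonneg _) (hMf _ hx0S)
  have hMc0 : 0 ≤ Mc := le_trans (norm_nonneg _) (hMc _ hx0S)
  have hDS0 : 0 ≤ DS := hDS ▸ Metric.diam_nonneg
  have hScomp : IsCompact S := by
    rcases hcompact αhat with h | h
    · exfalso; rw [hS] at hx0S; rw [h] at hx0S; exact hx0S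
    · rw [hS]; exact h
  have hdiam : ∀ y ∈ S, ∀ z ∈ S, ‖y - z‖ ≤ DS := by
    intro y hy z hz
    rw [hDS, ← dist_eq_norm]
    exact Metric.dist_le_diam_of_mem hScomp.isBounded hy hz
  -- AL algebra
  have hALdef : ∀ y l, AL f c ρ y l = f y + (inner ℝ l (c y) : ℝ) + ρ / 2 * ‖c y‖ ^ 2 :=
    fun y l => rfl
  have hALshift : ∀ k, AL f c ρ (x (k+1)) (lam (k+1))
      = AL f c ρ (x (k+1)) (lam k) + ρ*‖c (x (k+1))‖^2 := by
    intro k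
    rw [hALdef, hALdef, hmul k, inner_add_left, real_inner_smul_left,
      real_inner_self_eq_norm_sq]
    ring
  have hdlam : ∀ k, ‖lam (k+1) - lam k‖ = ρ*‖c (x (k+1))‖ := by
    intro k
    rw [hmul k, add_sub_cancel_left, norm_smul, Real.norm_eq_abs, abs_of_pos hρ]
  have hlam_eq : ∀ k, gradc c (x (k+1)) (lam (k+1))
      = r (k+1) - gradient f (x (k+1)) - β • (x (k+1) - x k) := by
    intro k
    rw [hmul k, map_add, map_smul, ← hstat k]
    abel
  -- lower bound on AL
  have hALlow : ∀ y l, f y + ρ₀ / 2 * ‖c y‖ ^ 2 ≤ AL f c ρ y l + ‖l‖^2/(2*(ρ-ρ₀)) := by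
    intro y l
    have hi : -(‖l‖*‖c y‖) ≤ (inner ℝ l (c y) : ℝ) := by
      have h1 := abs_real_inner_le_norm l (c y)
      have h2 := neg_abs_le (inner ℝ l (c y) : ℝ)
      linarith
    have key : ‖l‖*‖c y‖ - (ρ-ρ₀)/2*‖c y‖^2 ≤ ‖l‖^2/(2*(ρ-ρ₀)) :=
      young_ineq hs
    rw [hALdef]
    linarith [hi, key]
  -- bound on multipliers
  have hlamS : ∀ k, x k ∈ S → x (k+1) ∈ S → ‖lam (k+1)‖^2 ≤ 2*(ρ-ρ₀) := by
    intro k hk hk1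
    have h1 : σ*‖lam (k+1)‖ ≤ ‖gradc c (x (k+1)) (lam (k+1))‖ := hσlb _ hk1 _
    rw [hlam_eq k] at h1
    have h2 : ‖r (k+1) - gradient f (x (k+1)) - β • (x (k+1) - x k)‖ ≤ 1 + Mf + β*DS := by
      have t1 : ‖r (k+1) - gradient f (x (k+1)) - β • (x (k+1) - x k)‖
          ≤ ‖r (k+1) - gradient f (x (k+1))‖ + ‖β • (x (k+1) - x k)‖ := norm_sub_le _ _
      have t2 : ‖r (k+1) - gradient f (x (k+1))‖ ≤ ‖r (k+1)‖ + ‖gradient f (x (k+1))‖ :=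
        norm_sub_le _ _
      have t3 : ‖β • (x (k+1) - x k)‖ = β*‖x (k+1) - x k‖ := by
        rw [norm_smul, Real.norm_eq_abs, abs_of_pos hβ]
      have t4 : β*‖x (k+1) - x k‖ ≤ β*DS :=
        mul_le_mul_of_nonneg_left (hdiam _ hk1 _ hk) hβ.le
      have t5 := hrb (k+1) (by omega)
      have t6 := hMf _ hk1
      linarith
    have h3 : σ*‖lam (k+1)‖ ≤ Mf + β*DS + 1 := by linarith
    have h4 : (σ*‖lam (k+1)‖)^2 ≤ (Mf + β*DS + 1)^2 :=
      pow_le_pow_left₀ (by positivity) h3 2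
    have h6 : (Mf+β*DS+1)^2/(2*σ^2) ≤ ρ - ρ₀ := by linarith
    rw [div_le_iff₀ (by positivity)] at h6
    have h7 : σ^2*‖lam (k+1)‖^2 ≤ σ^2*(2*(ρ-ρ₀)) := by linarith [h4, h6]
    exact le_of_mul_le_mul_left h7 hσ2
  -- membership criterion
  have hmem : ∀ (y : EuclideanSpace ℝ (Fin n)) (l : EuclideanSpace ℝ (Fin m)),
      ‖l‖^2 ≤ 2*(ρ-ρ₀) → AL f c ρ y l ≤ αhat - 1 → y ∈ S := by
    intro y l hl hAL
    rw [hS]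
    simp only [Set.mem_setOf_eq]
    have h1 := hALlow y l
    have h2 : ‖l‖^2/(2*(ρ-ρ₀)) ≤ 1 := by
      rw [div_le_one (by linarith)]; linarith
    linarith
  -- core one-step estimate
  have hstep : ∀ k, x k ∈ S → x (k+1) ∈ S → x (k+1+1) ∈ S →
      AL f c ρ (x (k+1+1)) (lam (k+1+1)) + β/4*‖x (k+1+1) - x (k+1)‖^2
        ≤ AL f c ρ (x (k+1)) (lam (k+1)) + β/4*‖x (k+1) - x k‖^2
          + 2*(‖r (k+1+1)‖ + (1+2*Mc/σ)*‖r (k+1)‖)^2/(ρ*σ^2) := by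
    intro k h0 h1 h2
    have hXd : ‖x (k+1+1) - x (k+1)‖ ≤ DS := hdiam _ h2 _ h1
    have hX0 : (0:ℝ) ≤ ‖x (k+1+1) - x (k+1)‖ := norm_nonneg _
    have hY0 : (0:ℝ) ≤ ‖x (k+1) - x k‖ := norm_nonneg _
    -- Jacobian difference
    have hD0 : (0:ℝ) ≤ ‖fderiv ℝ c (x (k+1+1)) - fderiv ℝ c (x (k+1))‖ := norm_nonneg _
    have hDLc : ‖fderiv ℝ c (x (k+1+1)) - fderiv ℝ c (x (k+1))‖
        ≤ Lc*‖x (k+1+1) - x (k+1)‖ := hLc _ h2 _ h1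
    have hDMc : ‖fderiv ℝ c (x (k+1+1)) - fderiv ℝ c (x (k+1))‖ ≤ 2*Mc := by
      have := norm_sub_le (fderiv ℝ c (x (k+1+1))) (fderiv ℝ c (x (k+1)))
      have h3 := hMc _ h2; have h4 := hMc _ h1; linarith
    -- E term
    have hEnorm : ‖gradc c (x (k+1+1)) (lam (k+1)) - gradc c (x (k+1)) (lam (k+1))‖
        ≤ ‖fderiv ℝ c (x (k+1+1)) - fderiv ℝ c (x (k+1))‖ * ‖lam (k+1)‖ := by
      have he : gradc c (x (k+1+1)) (lam (k+1)) - gradc c (x (k+1)) (lam (k+1))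
          = (ContinuousLinearMap.adjoint (fderiv ℝ c (x (k+1+1)) - fderiv ℝ c (x (k+1))))
              (lam (k+1)) := by
        rw [map_sub]; rfl
      rw [he]
      calc ‖(ContinuousLinearMap.adjoint (fderiv ℝ c (x (k+1+1)) - fderiv ℝ c (x (k+1))))
              (lam (k+1))‖
          ≤ ‖ContinuousLinearMap.adjoint (fderiv ℝ c (x (k+1+1)) - fderiv ℝ c (x (k+1)))‖
              * ‖lam (k+1)‖ := ContinuousLinearMap.le_opNorm _ _
        _ = ‖fderiv ℝ c (x (k+1+1)) - fderiv ℝ c (x (k+1))‖ * ‖lam (k+1)‖ := by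
            rw [ContinuousLinearMap.adjoint.norm_map]
    -- bound on lam (k+1)
    have hlamk : σ*‖lam (k+1)‖ ≤ ‖r (k+1)‖ + Mf + β*‖x (k+1) - x k‖ := by
      have g1 := hσlb _ h1 (lam (k+1))
      rw [hlam_eq k] at g1
      have t1 : ‖r (k+1) - gradient f (x (k+1)) - β • (x (k+1) - x k)‖
          ≤ ‖r (k+1)‖ + ‖gradient f (x (k+1))‖ + ‖β • (x (k+1) - x k)‖ := by
        have := norm_sub_le (r (k+1) - gradient f (x (k+1))) (β • (x (k+1) - x k))
        have := norm_sub_le (r (k+1)) (gradient f (x (k+1)))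
        linarith
      have t3 : ‖β • (x (k+1) - x k)‖ = β*‖x (k+1) - x k‖ := by
        rw [norm_smul, Real.norm_eq_abs, abs_of_pos hβ]
      have t6 := hMf _ h1
      linarith
    -- scaled bound on E
    have hEg : σ*‖gradc c (x (k+1+1)) (lam (k+1)) - gradc c (x (k+1)) (lam (k+1))‖
        ≤ 2*Mc*‖r (k+1)‖ + Lc*Mf*‖x (k+1+1) - x (k+1)‖ + 2*Mc*β*‖x (k+1) - x k‖ := by
      have e1 : σ*‖gradc c (x (k+1+1)) (lam (k+1)) - gradc c (x (k+1)) (lam (k+1))‖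
          ≤ ‖fderiv ℝ c (x (k+1+1)) - fderiv ℝ c (x (k+1))‖ * (σ*‖lam (k+1)‖) := by
        have := mul_le_mul_of_nonneg_left hEnorm hσ.le
        linarith [this]
      have e2 : ‖fderiv ℝ c (x (k+1+1)) - fderiv ℝ c (x (k+1))‖ * (σ*‖lam (k+1)‖)
          ≤ ‖fderiv ℝ c (x (k+1+1)) - fderiv ℝ c (x (k+1))‖
              * (‖r (k+1)‖ + Mf + β*‖x (k+1) - x k‖) :=
        mul_le_mul_of_nonneg_left hlamk hD0
      have e3 : ‖fderiv ℝ c (x (k+1+1)) - fderiv ℝ c (x (k+1))‖ * ‖r (k+1)‖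
          ≤ 2*Mc*‖r (k+1)‖ := mul_le_mul_of_nonneg_right hDMc (norm_nonneg _)
      have e4 : ‖fderiv ℝ c (x (k+1+1)) - fderiv ℝ c (x (k+1))‖ * Mf
          ≤ Lc*‖x (k+1+1) - x (k+1)‖*Mf := mul_le_mul_of_nonneg_right hDLc hMf0
      have e5 : ‖fderiv ℝ c (x (k+1+1)) - fderiv ℝ c (x (k+1))‖ * (β*‖x (k+1) - x k‖)
          ≤ 2*Mc*(β*‖x (k+1) - x k‖) :=
        mul_le_mul_of_nonneg_right hDMc (by positivity)
      linarith [e1, e2, e3, e4, e5]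
    -- vector identity for the dual difference
    have hvec : gradc c (x (k+1+1)) (lam (k+1+1) - lam (k+1))
        = (r (k+1+1) - r (k+1)) - (gradient f (x (k+1+1)) - gradient f (x (k+1)))
          - (β • (x (k+1+1) - x (k+1)) - β • (x (k+1) - x k))
          - (gradc c (x (k+1+1)) (lam (k+1)) - gradc c (x (k+1)) (lam (k+1))) := by
      rw [map_sub, hlam_eq (k+1), hlam_eq k]
      abel
    have hdl1 : σ*‖lam (k+1+1) - lam (k+1)‖
        ≤ ‖gradc c (x (k+1+1)) (lam (k+1+1) - lam (k+1))‖ := hσlb _ h2 _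
    have hdl2 : ‖gradc c (x (k+1+1)) (lam (k+1+1) - lam (k+1))‖
        ≤ ‖r (k+1+1)‖ + ‖r (k+1)‖ + Lf*‖x (k+1+1) - x (k+1)‖ + β*‖x (k+1+1) - x (k+1)‖
          + β*‖x (k+1) - x k‖
          + ‖gradc c (x (k+1+1)) (lam (k+1)) - gradc c (x (k+1)) (lam (k+1))‖ := by
      rw [hvec]
      have t0 := norm_sub_le ((r (k+1+1) - r (k+1))
          - (gradient f (x (k+1+1)) - gradient f (x (k+1)))
          - (β • (x (k+1+1) - x (k+1)) - β • (x (k+1) - x k)))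
        (gradc c (x (k+1+1)) (lam (k+1)) - gradc c (x (k+1)) (lam (k+1)))
      have t1 := norm_sub_le ((r (k+1+1) - r (k+1))
          - (gradient f (x (k+1+1)) - gradient f (x (k+1))))
        (β • (x (k+1+1) - x (k+1)) - β • (x (k+1) - x k))
      have t2 := norm_sub_le (r (k+1+1) - r (k+1))
        (gradient f (x (k+1+1)) - gradient f (x (k+1)))
      have t3 := norm_sub_le (r (k+1+1)) (r (k+1))
      have t4 := hLf _ h2 _ h1
      have t5 := norm_sub_le (β • (x (k+1+1) - x (k+1))) (β • (x (k+1) - x k))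
      have t6 : ‖β • (x (k+1+1) - x (k+1))‖ = β*‖x (k+1+1) - x (k+1)‖ := by
        rw [norm_smul, Real.norm_eq_abs, abs_of_pos hβ]
      have t7 : ‖β • (x (k+1) - x k)‖ = β*‖x (k+1) - x k‖ := by
        rw [norm_smul, Real.norm_eq_abs, abs_of_pos hβ]
      linarith
    -- the σ-scaled dual difference bound
    have hdlfin : σ*‖lam (k+1+1) - lam (k+1)‖
        ≤ (‖r (k+1+1)‖ + (1+2*Mc/σ)*‖r (k+1)‖)
          + (Lf + Lc*Mf/σ + β)*‖x (k+1+1) - x (k+1)‖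
          + (β + 2*Mc*β/σ)*‖x (k+1) - x k‖ := by
      have m1 : σ*(σ*‖lam (k+1+1) - lam (k+1)‖)
          ≤ σ*(‖r (k+1+1)‖ + ‖r (k+1)‖ + Lf*‖x (k+1+1) - x (k+1)‖
              + β*‖x (k+1+1) - x (k+1)‖ + β*‖x (k+1) - x k‖)
            + σ*‖gradc c (x (k+1+1)) (lam (k+1)) - gradc c (x (k+1)) (lam (k+1))‖ := by
        have := mul_le_mul_of_nonneg_left (hdl1.trans hdl2) hσ.le
        linarith [this]
      have m2 : σ*((‖r (k+1+1)‖ + (1+2*Mc/σ)*‖r (k+1)‖)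
            + (Lf + Lc*Mf/σ + β)*‖x (k+1+1) - x (k+1)‖
            + (β + 2*Mc*β/σ)*‖x (k+1) - x k‖)
          = σ*(‖r (k+1+1)‖ + ‖r (k+1)‖ + Lf*‖x (k+1+1) - x (k+1)‖
              + β*‖x (k+1+1) - x (k+1)‖ + β*‖x (k+1) - x k‖)
            + (2*Mc*‖r (k+1)‖ + Lc*Mf*‖x (k+1+1) - x (k+1)‖ + 2*Mc*β*‖x (k+1) - x k‖) := by
        field_simp
        ring
      refine le_of_mul_le_mul_left ?_ hσ
      rw [m2]
      linarith [hEg, m1]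
    -- squared bound
    have hsq : (σ*‖lam (k+1+1) - lam (k+1)‖)^2
        ≤ 2*(‖r (k+1+1)‖ + (1+2*Mc/σ)*‖r (k+1)‖)^2
          + 4*((Lf + Lc*Mf/σ + β)*‖x (k+1+1) - x (k+1)‖)^2
          + 4*((β + 2*Mc*β/σ)*‖x (k+1) - x k‖)^2 :=
      key_sq (by positivity) hdlfin
    have hns : ‖lam (k+1+1) - lam (k+1)‖^2
        ≤ (2*(‖r (k+1+1)‖ + (1+2*Mc/σ)*‖r (k+1)‖)^2
            + 4*(Lf + Lc*Mf/σ + β)^2*‖x (k+1+1) - x (k+1)‖^2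
            + 4*(β + 2*Mc*β/σ)^2*‖x (k+1) - x k‖^2)/σ^2 := by
      rw [le_div_iff₀ hσ2]
      linarith [hsq]
    have hdiv : ‖lam (k+1+1) - lam (k+1)‖^2/ρ
        ≤ 2*(‖r (k+1+1)‖ + (1+2*Mc/σ)*‖r (k+1)‖)^2/(ρ*σ^2)
          + C1/ρ*‖x (k+1+1) - x (k+1)‖^2 + C2/ρ*‖x (k+1) - x k‖^2 := by
      have hd1 : ‖lam (k+1+1) - lam (k+1)‖^2/ρ
          ≤ (2*(‖r (k+1+1)‖ + (1+2*Mc/σ)*‖r (k+1)‖)^2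
              + 4*(Lf + Lc*Mf/σ + β)^2*‖x (k+1+1) - x (k+1)‖^2
              + 4*(β + 2*Mc*β/σ)^2*‖x (k+1) - x k‖^2)/σ^2/ρ :=
        div_le_div_of_nonneg_right hns hρ.le
      refine hd1.trans (le_of_eq ?_)
      rw [hC1, hC2]
      field_simp
    have hA1 : AL f c ρ (x (k+1+1)) (lam (k+1+1))
        = AL f c ρ (x (k+1+1)) (lam (k+1)) + ‖lam (k+1+1) - lam (k+1)‖^2/ρ := by
      rw [hALshift (k+1), hdlam (k+1), mul_pow]
      field_simp
    have hA2 := hdecr (k+1)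
    have hcc1 : 0 ≤ (β/4 - C1/ρ)*‖x (k+1+1) - x (k+1)‖^2 :=
      mul_nonneg hc₁pos.le (sq_nonneg _)
    have hcc2 : 0 ≤ (β/4 - C2/ρ)*‖x (k+1) - x k‖^2 :=
      mul_nonneg hc₂pos.le (sq_nonneg _)
    linarith [hA1, hA2, hdiv, hcc1, hcc2]
  -- base facts
  have hB0 : AL f c ρ (x 0) (lam 0) ≤ U + C₀ + ‖lam 0‖^2/2 := by
    have hi : (inner ℝ (lam 0) (c (x 0)) : ℝ) ≤ ‖lam 0‖*‖c (x 0)‖ := real_inner_le_norm _ _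
    have hy : ‖lam 0‖*‖c (x 0)‖ ≤ ‖lam 0‖^2/2 + ‖c (x 0)‖^2/2 := by
      nlinarith [sq_nonneg (‖lam 0‖ - ‖c (x 0)‖)]
    have hcc : ρ*‖c (x 0)‖^2 ≤ C₀ := by
      have := (le_div_iff₀ hρ).mp hcx0C
      linarith
    have hC0' : ‖c (x 0)‖^2 ≤ C₀ := by
      have : C₀/ρ ≤ C₀ := by
        rw [div_le_iff₀ hρ]; linarith [mul_le_mul_of_nonneg_left hρ1 hC₀.le]
      linarith
    rw [hALdef]
    linarith [hcc, hC0', hi, hy, hfx0]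
  have hAL10 : AL f c ρ (x 1) (lam 0) ≤ AL f c ρ (x 0) (lam 0) := by
    have h := hdecr 0
    linarith [h, mul_nonneg hβ.le (sq_nonneg ‖x 1 - x 0‖)]
  have hx1S : x 1 ∈ S := by
    rw [hS]
    simp only [Set.mem_setOf_eq]
    have h1 := hALlow (x 1) (lam 0)
    have h2 : ‖lam 0‖^2/(2*(ρ-ρ₀)) ≤ 3/4*‖lam 0‖^2 := by
      rw [div_le_iff₀ (by linarith : (0:ℝ) < 2*(ρ-ρ₀))]
      linarith [mul_nonneg (sq_nonneg ‖lam 0‖) (by linarith : (0:ℝ) ≤ 2*(ρ-ρ₀)-4/3)]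
    rw [hαhat]
    linarith [hB0, hAL10, sq_nonneg ‖lam 0‖]
  have hrc1 : ρ*‖c (x 1)‖^2 ≤ 6*(U + C₀ + ‖lam 0‖^2/2 - Lbar) + 9*‖lam 0‖^2 := by
    have hf1 : Lbar ≤ f (x 1) + ρ₀ / 2 * ‖c (x 1)‖ ^ 2 := hg_lb (x 1)
    have hi : -(‖lam 0‖*‖c (x 1)‖) ≤ (inner ℝ (lam 0) (c (x 1)) : ℝ) := by
      have h1 := abs_real_inner_le_norm (lam 0) (c (x 1))
      have h2 := neg_abs_le (inner ℝ (lam 0) (c (x 1)) : ℝ)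
      linarith
    have hALx1 : f (x 1) + (inner ℝ (lam 0) (c (x 1)) : ℝ) + ρ/2*‖c (x 1)‖^2
        ≤ U + C₀ + ‖lam 0‖^2/2 := by
      have := hAL10.trans hB0
      rw [hALdef] at this
      linarith
    have hH : Lbar - ρ₀/2*‖c (x 1)‖^2 - ‖lam 0‖*‖c (x 1)‖ + ρ/2*‖c (x 1)‖^2
        ≤ U + C₀ + ‖lam 0‖^2/2 := by linarith [hf1, hi, hALx1]
    have := base_pen hρ1 hρρ₀ hH
    linarith [this]
  have hP0 : AL f c ρ (x 1) (lam 1) + β/4*‖x 1 - x 0‖^2 ≤ αhat - 2 := by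
    have h1 : AL f c ρ (x 1) (lam 1) = AL f c ρ (x 1) (lam 0) + ρ*‖c (x 1)‖^2 := hALshift 0
    have h2 := hdecr 0
    rw [hαhat]
    linarith [hrc1, hB0, hLbar6, sq_nonneg ‖lam 0‖, mul_nonneg hβ.le (sq_nonneg ‖x 1 - x 0‖),
      h1, h2, hC₀]
  -- sum of error terms is at most 1
  have hρσ2 : (0:ℝ) < ρ*σ^2 := by positivity
  have hsumE : ∀ K : ℕ,
      ∑ j ∈ Finset.range K, 2*(‖r (j+1+1)‖ + (1+2*Mc/σ)*‖r (j+1)‖)^2/(ρ*σ^2) ≤ 1 := by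
    intro K
    have hγ0 : (0:ℝ) ≤ 1+2*Mc/σ := by positivity
    have hpt : ∀ j ∈ Finset.range K,
        (‖r (j+1+1)‖ + (1+2*Mc/σ)*‖r (j+1)‖)^2
          ≤ (1+(1+2*Mc/σ))*‖r (j+1+1)‖^2 + ((1+2*Mc/σ)+(1+2*Mc/σ)^2)*‖r (j+1)‖^2 := by
      intro j _
      exact pt_sq hγ0
    have hsum1 : ∑ j ∈ Finset.range K, ‖r (j+1+1)‖^2 ≤ R := by
      have hsplit := Finset.sum_range_succ' (fun i => ‖r (i+1)‖^2) K
      have h2 := hRsum (K+1)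
      have h0 : (0:ℝ) ≤ ‖r (0+1)‖^2 := sq_nonneg _
      linarith [hsplit ▸ h2]
    have hsum2 : ∑ j ∈ Finset.range K, ‖r (j+1)‖^2 ≤ R := hRsum K
    have hsumtot : ∑ j ∈ Finset.range K, (‖r (j+1+1)‖ + (1+2*Mc/σ)*‖r (j+1)‖)^2
        ≤ (1+(1+2*Mc/σ))*R + ((1+2*Mc/σ)+(1+2*Mc/σ)^2)*R := by
      have h4 := Finset.sum_le_sum hpt
      rw [Finset.sum_add_distrib, ← Finset.mul_sum, ← Finset.mul_sum] at h4
      have m1 : (1+(1+2*Mc/σ))*(∑ j ∈ Finset.range K, ‖r (j+1+1)‖^2)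
          ≤ (1+(1+2*Mc/σ))*R := mul_le_mul_of_nonneg_left hsum1 (by positivity)
      have m2 : ((1+2*Mc/σ)+(1+2*Mc/σ)^2)*(∑ j ∈ Finset.range K, ‖r (j+1)‖^2)
          ≤ ((1+2*Mc/σ)+(1+2*Mc/σ)^2)*R := mul_le_mul_of_nonneg_left hsum2 (by positivity)
      linarith
    rw [← Finset.sum_div, ← Finset.mul_sum, div_le_one hρσ2]
    have h16 : 16*(Mc^2+σ^2)*R ≤ ρ*σ^4 := by
      rw [div_le_iff₀ (by positivity : (0:ℝ) < σ^4)] at hρR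
      linarith
    exact sum_num hσ hR0 h16 hsumtot
  -- main induction
  have key : ∀ K : ℕ, (∀ j, j ≤ K+1 → x j ∈ S) ∧
      AL f c ρ (x (K+1)) (lam (K+1)) + β/4*‖x (K+1) - x K‖^2
        ≤ AL f c ρ (x 1) (lam 1) + β/4*‖x 1 - x 0‖^2
          + ∑ j ∈ Finset.range K, 2*(‖r (j+1+1)‖ + (1+2*Mc/σ)*‖r (j+1)‖)^2/(ρ*σ^2) := by
    intro K
    induction K with
    | zero =>
      refine ⟨?_, by simp⟩
      intro j hj
      interval_cases j
      · exact hx0S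
      · exact hx1S
    | succ K ih =>
      obtain ⟨ihS, ihP⟩ := ih
      have hxK : x K ∈ S := ihS K (by omega)
      have hxK1 : x (K+1) ∈ S := ihS (K+1) (by omega)
      have hPle : AL f c ρ (x (K+1)) (lam (K+1)) ≤ αhat - 1 := by
        have h1 := hsumE K
        have h2 : (0:ℝ) ≤ β/4*‖x (K+1) - x K‖^2 := by positivity
        linarith [ihP, hP0]
      have hlamb := hlamS K hxK hxK1
      have hALdec : AL f c ρ (x (K+1+1)) (lam (K+1)) ≤ αhat - 1 := by
        have h3 := hdecr (K+1)
        have h2 : (0:ℝ) ≤ β/2*‖x (K+1+1) - x (K+1)‖^2 := by positivity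
        linarith [hPle]
      have hxK2 : x (K+1+1) ∈ S := hmem _ _ hlamb hALdec
      refine ⟨?_, ?_⟩
      · intro j hj
        rcases Nat.lt_or_ge j (K+2) with h | h
        · exact ihS j (by omega)
        · have hj2 : j = K+1+1 := by omega
          rw [hj2]; exact hxK2
      · have hst := hstep K hxK hxK1 hxK2
        rw [Finset.sum_range_succ]
        linarith [ihP, hst]
  constructor
  · intro k _
    have h := (key k).2
    linarith [hsumE k]
  · intro k
    match k with
    | 0 =>
      rw [hαhat]
      have := sq_nonneg ‖lam 0‖
      linarith [hB0, hLbar6]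
    | (k+1) =>
      have h := (key k).2
      have h2 : (0:ℝ) ≤ β/4*‖x (k+1) - x k‖^2 := by positivity
      linarith [hsumE k, hP0]
end

section
/- Under the hypotheses of the boundedness lemma for Proximal AL (in particular ρ ≥ max{3ρ₀, 1}, f(x₀) ≤ Ū, and ‖c(x₀)‖² ≤ min{C₀/ρ, 1}), the first Lyapunov value satisfies P₁ = L_ρ(x₁, λ₁) + (β/4)‖x₁ − x₀‖² ≤ 7Ū + 7C₀ − 6L̄ + 13‖λ₀‖², and the initial augmented Lagrangian satisfies L_ρ(x₀, λ₀) ≤ Ū + ‖λ₀‖²/(2ρ) + C₀. -/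
open Filter Topology

set_option maxHeartbeats 1000000 in
theorem stmt15
    {n m : ℕ}
    (f : EuclideanSpace ℝ (Fin n) → ℝ) (c : EuclideanSpace ℝ (Fin n) → EuclideanSpace ℝ (Fin m))
    (hf : ContDiff ℝ 2 f) (hc : ContDiff ℝ 2 c)
    (ρ β : ℝ) (hρ : 0 < ρ) (hβ : 0 < β)
    (x : ℕ → EuclideanSpace ℝ (Fin n)) (lam : ℕ → EuclideanSpace ℝ (Fin m)) (r : ℕ → EuclideanSpace ℝ (Fin n))
    (hstat : ∀ k : ℕ,
      gradient f (x (k+1)) + gradc c (x (k+1)) (lam k)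
        + ρ • gradc c (x (k+1)) (c (x (k+1))) + β • (x (k+1) - x k) = r (k+1))
    (hdecr : ∀ k : ℕ,
      AL f c ρ (x (k+1)) (lam k) + β / 2 * ‖x (k+1) - x k‖ ^ 2 ≤ AL f c ρ (x k) (lam k))
    (hmul : ∀ k : ℕ, lam (k+1) = lam k + ρ • c (x (k+1)))
    (ρ₀ Lbar U C₀ : ℝ) (hρ₀ : 0 ≤ ρ₀)
    (hcompact : ∀ α : ℝ,
      {y : EuclideanSpace ℝ (Fin n) | f y + ρ₀ / 2 * ‖c y‖ ^ 2 ≤ α} = ∅ ∨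
        IsCompact {y : EuclideanSpace ℝ (Fin n) | f y + ρ₀ / 2 * ‖c y‖ ^ 2 ≤ α})
    (hLbar : Lbar = ⨅ y : EuclideanSpace ℝ (Fin n), (f y + ρ₀ / 2 * ‖c y‖ ^ 2))
    (hU : ∀ y : EuclideanSpace ℝ (Fin n), ‖c y‖ ≤ 1 → f y ≤ U)
    (hC₀ : 0 < C₀)
    (hρbig : max (3 * ρ₀) 1 ≤ ρ)
    (hx0 : ‖c (x 0)‖ ^ 2 ≤ min (C₀ / ρ) 1) :
    AL f c ρ (x 1) (lam 1) + β / 4 * ‖x 1 - x 0‖ ^ 2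
      ≤ 7 * U + 7 * C₀ - 6 * Lbar + 13 * ‖lam 0‖ ^ 2 ∧
    AL f c ρ (x 0) (lam 0) ≤ U + ‖lam 0‖ ^ 2 / (2 * ρ) + C₀ := by
  have hρ1 : (1:ℝ) ≤ ρ := le_trans (le_max_right _ _) hρbig
  have hρ3 : 3 * ρ₀ ≤ ρ := le_trans (le_max_left _ _) hρbig
  set g : EuclideanSpace ℝ (Fin n) → ℝ := fun y => f y + ρ₀ / 2 * ‖c y‖ ^ 2 with hg
  have hgc : Continuous g :=
    hf.continuous.add (continuous_const.mul ((hc.continuous.norm).pow 2))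
  -- Lbar is a lower bound
  have hbdd : BddBelow (Set.range g) := by
    have h0 : g (0 : EuclideanSpace ℝ (Fin n)) ≤ g 0 := le_refl _
    have h0' : (0 : EuclideanSpace ℝ (Fin n)) ∈
        {y : EuclideanSpace ℝ (Fin n) | f y + ρ₀ / 2 * ‖c y‖ ^ 2 ≤ g 0} := h0
    rcases hcompact (g 0) with h | h
    · exfalso
      rw [h] at h0'
      exact h0'
    · have hne : ({y : EuclideanSpace ℝ (Fin n) | f y + ρ₀ / 2 * ‖c y‖ ^ 2 ≤ g 0}).Nonempty :=
        ⟨0, h0'⟩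
      obtain ⟨z, hz, hmin⟩ := h.exists_isMinOn hne hgc.continuousOn
      refine ⟨g z, ?_⟩
      rintro _ ⟨y, rfl⟩
      by_cases hy : g y ≤ g 0
      · exact hmin hy
      · exact le_trans (hmin h0') (le_of_lt (lt_of_not_ge hy))
  have hLb : ∀ y, Lbar ≤ g y := by
    intro y
    rw [hLbar]
    exact ciInf_le hbdd y
  -- basic bounds at x 0
  have hcx0sq1 : ‖c (x 0)‖ ^ 2 ≤ 1 := le_trans hx0 (min_le_right _ _)
  have hcx0 : ‖c (x 0)‖ ≤ 1 := by nlinarith [norm_nonneg (c (x 0))]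
  have hfx0 : f (x 0) ≤ U := hU _ hcx0
  have hcx0C : ρ * ‖c (x 0)‖ ^ 2 ≤ C₀ := by
    have h1 : ‖c (x 0)‖ ^ 2 ≤ C₀ / ρ := le_trans hx0 (min_le_left _ _)
    calc ρ * ‖c (x 0)‖ ^ 2 ≤ ρ * (C₀ / ρ) := by nlinarith
    _ = C₀ := by field_simp
  set a := ‖lam 0‖ with ha
  set D := a ^ 2 / (2 * ρ) with hD
  have hDa : D ≤ a ^ 2 / 2 := by
    rw [hD]
    apply div_le_div_of_nonneg_left (sq_nonneg a) (by norm_num) (by linarith)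
  have hDnn : 0 ≤ D := by positivity
  -- inner product bounds
  have hinner0 : (inner ℝ (lam 0) (c (x 0)) : ℝ) ≤ D + ρ / 2 * ‖c (x 0)‖ ^ 2 := by
    have h1 : (inner ℝ (lam 0) (c (x 0)) : ℝ) ≤ a * ‖c (x 0)‖ := real_inner_le_norm _ _
    have h2 : a * ‖c (x 0)‖ ≤ (a ^ 2 + ρ ^ 2 * ‖c (x 0)‖ ^ 2) / (2 * ρ) := by
      rw [le_div_iff₀ (by linarith : (0:ℝ) < 2 * ρ)]
      nlinarith [sq_nonneg (a - ρ * ‖c (x 0)‖)]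
    have h3 : (a ^ 2 + ρ ^ 2 * ‖c (x 0)‖ ^ 2) / (2 * ρ) = D + ρ / 2 * ‖c (x 0)‖ ^ 2 := by
      rw [hD]; field_simp
    linarith
  -- second conclusion
  have h2nd : AL f c ρ (x 0) (lam 0) ≤ U + a ^ 2 / (2 * ρ) + C₀ := by
    unfold AL
    have : ρ / 2 * ‖c (x 0)‖ ^ 2 + ρ / 2 * ‖c (x 0)‖ ^ 2 ≤ C₀ := by linarith [hcx0C]
    linarith [hinner0]
  refine ⟨?_, h2nd⟩
  -- first conclusion
  have hd := hdecr 0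
  have hAL1 : AL f c ρ (x 1) (lam 0) + β / 2 * ‖x 1 - x 0‖ ^ 2 ≤ U + D + C₀ :=
    le_trans hd h2nd
  have hnd : 0 ≤ β / 2 * ‖x 1 - x 0‖ ^ 2 := by positivity
  set t := ‖c (x 1)‖ with ht
  have htnn : 0 ≤ t := norm_nonneg _
  have hflow : Lbar - ρ₀ / 2 * t ^ 2 ≤ f (x 1) := by
    have := hLb (x 1); simp only [hg] at this; linarith
  have hinner1 : -(3 * D + ρ / 6 * t ^ 2) ≤ (inner ℝ (lam 0) (c (x 1)) : ℝ) := by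
    have h1 : -(inner ℝ (lam 0) (c (x 1)) : ℝ) ≤ a * t := by
      have := abs_real_inner_le_norm (lam 0) (c (x 1))
      have := neg_abs_le (inner ℝ (lam 0) (c (x 1)) : ℝ)
      linarith [le_abs_self (inner ℝ (lam 0) (c (x 1)) : ℝ)]
    have h2 : a * t ≤ (9 * a ^ 2 + ρ ^ 2 * t ^ 2) / (6 * ρ) := by
      rw [le_div_iff₀ (by linarith : (0:ℝ) < 6 * ρ)]
      nlinarith [sq_nonneg (3 * a - ρ * t)]
    have h3 : (9 * a ^ 2 + ρ ^ 2 * t ^ 2) / (6 * ρ) = 3 * D + ρ / 6 * t ^ 2 := by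
      rw [hD]; field_simp; ring
    linarith
  -- bound on ρ t²
  have hALx1 : f (x 1) + (inner ℝ (lam 0) (c (x 1)) : ℝ) + ρ / 2 * t ^ 2 ≤ U + D + C₀ := by
    have h := hAL1
    simp only [AL] at h
    rw [← ht] at h
    linarith [hnd]
  have hρ₀t : ρ₀ / 2 * t ^ 2 ≤ ρ / 6 * t ^ 2 := by nlinarith [sq_nonneg t]
  have e1 : ρ / 2 * t ^ 2 = 3 * (ρ / 6 * t ^ 2) := by ring
  have hkey6 : ρ / 6 * t ^ 2 ≤ U + 4 * D + C₀ - Lbar := by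
    linarith [hALx1, hflow, hinner1, hρ₀t, e1]
  have hkey : ρ * t ^ 2 ≤ 6 * U + 6 * C₀ - 6 * Lbar + 24 * D := by
    have e2 : ρ * t ^ 2 = 6 * (ρ / 6 * t ^ 2) := by ring
    linarith [hkey6, e2]
  -- expand AL at lam 1
  have hexp : AL f c ρ (x 1) (lam 1) = AL f c ρ (x 1) (lam 0) + ρ * t ^ 2 := by
    simp only [AL, hmul 0, inner_add_left, real_inner_smul_left,
      real_inner_self_eq_norm_sq, ht]
    ring
  have hfin : β / 4 * ‖x 1 - x 0‖ ^ 2 ≤ β / 2 * ‖x 1 - x 0‖ ^ 2 := by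
    nlinarith [sq_nonneg ‖x 1 - x 0‖, hβ.le]
  rw [hexp]
  linarith [hAL1, hkey, hDa, sq_nonneg a]
end
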